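/- arXiv:2205.14452 — 6 statements merged into one kernel-verified Lean document; each statement's English description precedes it below -/
import Mathlib

section
/- One-step progress of the compressed dual update (Lemma `recursion_y`, scalar blocks d_y = 1). Let W be an m×m real symmetric matrix with W𝟙 = 𝟙 whose eigenvalues lie in (−1,1], so I−W is symmetric PSD; write λ_max(I−W) and λ_{m−1}(I−W) for its largest and second-smallest eigenvalues. Let P be an m×m symmetric PSD matrix with (I−W)P(I−W) = I−W (a symmetric generalized inverse, playing the role of (I−W)†), and write ‖v‖²_P := vᵀPv. Let r : ℝ → ℝ be convex continuous, Y ⊆ ℝ nonempty closed convex, s > 0, and prox(u) := the unique minimizer over Y of w ↦ s·r(w) + (1/2)(w−u)², applied componentwise to vectors. Let f_i : ℝ×ℝ → ℝ (i=1,…,m) be differentiable, f := Σᵢ f_i, F(x,y) := Σᵢ f_i(xⁱ,yⁱ), and let (x⋆,y⋆) satisfy the fixed point y⋆ = prox(y⋆ + (s/m)∇_y f(x⋆,y⋆)); set D⋆_y := (I−J)∇_y F(𝟙x⋆,𝟙y⋆) with J = (1/m)𝟙𝟙ᵀ and H⋆_y := 𝟙(y⋆ + (s/m)∇_y f(x⋆,y⋆)).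 Let δ ∈ [0,1], α_y ∈ (0, 1/(1+δ)), γ_y ∈ (0, min{(2−2√δ·α_y)/λ_max(I−W), (α_y − (1+δ)α_y²)/(√δ·λ_max(I−W))}) (the second bound read as no constraint when δ = 0), and M_y := 1 − √δ·α_y/(1 − (γ_y/2)λ_max(I−W)). Given deterministic vectors y_t, G^y, D^y_t, H^y_t ∈ ℝ^m with D^y_t − D⋆_y ∈ Range(I−W), define ν := y_t + sG^y − sD^y_t, let ν̂ be a random vector on a probability space with E[ν̂] = ν and E‖ν̂ − ν‖² ≤ δ‖ν − H^y_t‖², and set D^y_{t+1} := D^y_t + (γ_y/(2s))(I−W)ν̂, ŷ := ν − (γ_y/2)(I−W)ν̂, y_{t+1} := prox(ŷ) componentwise, H^y_{t+1} := (1−α_y)H^y_t + α_y ν̂. Then: M_y·E‖y_{t+1} − 𝟙y⋆‖² + (2s²/γ_y)·E‖D^y_{t+1} − D⋆_y‖²_P + √δ·E‖H^y_{t+1} − H⋆_y‖² ≤ ‖y_t − 𝟙y⋆ + sG^y − s∇_y F(𝟙x⋆,𝟙y⋆)‖² + (2s²/γ_y)(1 − (γ_y/2)λ_{m−1}(I−W))·‖D^y_t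 − D⋆_y‖²_P + √δ(1−α_y)·‖H^y_t − H⋆_y‖². -/
open MeasureTheory Matrix
open scoped ENNReal

lemma aux_int_mul {Ω : Type*} [MeasurableSpace Ω] (μ : Measure Ω)
    (f g : Ω → ℝ) (hf : MemLp f 2 μ) (hg : MemLp g 2 μ) :
    Integrable (fun ω => f ω * g ω) μ := by
  have h : (1 : ℝ≥0∞) / 1 = 1 / 2 + 1 / 2 := by
    rw [ENNReal.div_add_div_same]
    norm_num
    rw [ENNReal.div_self] <;> norm_num
  haveI : ENNReal.HolderTriple 2 2 1 := ⟨by rw [inv_one]; exact ENNReal.inv_two_add_inv_two⟩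
  have := hf.smul hg (r := 1)
  rw [memLp_one_iff_integrable] at this
  exact (by simpa [smul_eq_mul, mul_comm] using this : Integrable (f * g) μ)

lemma aux_memL2_dot {m : ℕ} {Ω : Type*} [MeasurableSpace Ω] {μ : Measure Ω}
    {z : Ω → Fin m → ℝ} (hz : ∀ i, MemLp (fun ω => z ω i) 2 μ) (c : Fin m → ℝ) :
    MemLp (fun ω => c ⬝ᵥ z ω) 2 μ := by
  simp only [dotProduct]
  have := memLp_finset_sum' (μ := μ) (p := 2) Finset.univ
    (f := fun i ω => c i * z ω i) (fun i _ => (hz i).const_mul (c i))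
  convert this using 1
  funext ω
  simp

lemma aux_int_dot_zero {m : ℕ} {Ω : Type*} [MeasurableSpace Ω] {μ : Measure Ω}
    [IsProbabilityMeasure μ]
    {z : Ω → Fin m → ℝ} (hz : ∀ i, MemLp (fun ω => z ω i) 2 μ)
    (hz0 : ∀ i, ∫ ω, z ω i ∂μ = 0) (c : Fin m → ℝ) :
    ∫ ω, c ⬝ᵥ z ω ∂μ = 0 := by
  simp only [dotProduct]
  rw [integral_finset_sum _ (fun i _ => (((hz i).integrable one_le_two).const_mul (c i)))]
  simp [integral_const_mul, hz0]

lemma aux_integrable_quad {m : ℕ} {Ω : Type*} [MeasurableSpace Ω] {μ : Measure Ω}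
    {v : Ω → Fin m → ℝ} (hv : ∀ i, MemLp (fun ω => v ω i) 2 μ)
    (Q : Matrix (Fin m) (Fin m) ℝ) :
    Integrable (fun ω => v ω ⬝ᵥ Q.mulVec (v ω)) μ := by
  have : (fun ω => v ω ⬝ᵥ Q.mulVec (v ω))
      = fun ω => ∑ i, (v ω i * ((fun j => Q i j) ⬝ᵥ v ω)) := by
    funext ω; simp [dotProduct, Matrix.mulVec]
  rw [this]
  exact integrable_finset_sum _ (fun i _ => aux_int_mul μ _ _ (hv i) (aux_memL2_dot hv _))

lemma aux_int_quad_split {m : ℕ} {Ω : Type*} [MeasurableSpace Ω] {μ : Measure Ω}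
    [IsProbabilityMeasure μ]
    {v : Ω → Fin m → ℝ} (hv : ∀ i, MemLp (fun ω => v ω i) 2 μ)
    (hv0 : ∀ i, ∫ ω, v ω i ∂μ = 0) (b : Fin m → ℝ) (Q : Matrix (Fin m) (Fin m) ℝ) :
    ∫ ω, (b + v ω) ⬝ᵥ Q.mulVec (b + v ω) ∂μ
      = b ⬝ᵥ Q.mulVec b + ∫ ω, v ω ⬝ᵥ Q.mulVec (v ω) ∂μ := by
  have hpt : ∀ ω, (b + v ω) ⬝ᵥ Q.mulVec (b + v ω)
      = b ⬝ᵥ Q.mulVec b + ((b ᵥ* Q) ⬝ᵥ v ω + (Q.mulVec b) ⬝ᵥ v ω)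
        + v ω ⬝ᵥ Q.mulVec (v ω) := by
    intro ω
    rw [Matrix.mulVec_add, dotProduct_add, add_dotProduct, add_dotProduct,
      Matrix.dotProduct_mulVec b Q (v ω), dotProduct_comm (v ω) (Q.mulVec b)]
    ring
  have hint1 : Integrable (fun ω => (b ᵥ* Q) ⬝ᵥ v ω + (Q.mulVec b) ⬝ᵥ v ω) μ :=
    ((aux_memL2_dot hv _).integrable one_le_two).add
      ((aux_memL2_dot hv _).integrable one_le_two)
  have hint2 : Integrable (fun ω => v ω ⬝ᵥ Q.mulVec (v ω)) μ := aux_integrable_quad hv Q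
  calc ∫ ω, (b + v ω) ⬝ᵥ Q.mulVec (b + v ω) ∂μ
      = ∫ ω, (b ⬝ᵥ Q.mulVec b + (((b ᵥ* Q) ⬝ᵥ v ω + (Q.mulVec b) ⬝ᵥ v ω)
          + v ω ⬝ᵥ Q.mulVec (v ω))) ∂μ := by
        congr 1; funext ω; rw [hpt ω]; ring
    _ = b ⬝ᵥ Q.mulVec b + ∫ ω, (((b ᵥ* Q) ⬝ᵥ v ω + (Q.mulVec b) ⬝ᵥ v ω)
          + v ω ⬝ᵥ Q.mulVec (v ω)) ∂μ := by
        rw [integral_add (integrable_const (b ⬝ᵥ Q.mulVec b))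
          (by exact hint1.add hint2 : Integrable (fun ω => ((b ᵥ* Q) ⬝ᵥ v ω + (Q.mulVec b) ⬝ᵥ v ω) + v ω ⬝ᵥ Q.mulVec (v ω)) μ)]
        simp
    _ = b ⬝ᵥ Q.mulVec b + ∫ ω, v ω ⬝ᵥ Q.mulVec (v ω) ∂μ := by
        rw [integral_add hint1 hint2, integral_add
          ((aux_memL2_dot hv _).integrable one_le_two)
          ((aux_memL2_dot hv _).integrable one_le_two),
          aux_int_dot_zero hv hv0, aux_int_dot_zero hv hv0]
        ring

lemma aux_int_quad_split1 {m : ℕ} {Ω : Type*} [MeasurableSpace Ω] {μ : Measure Ω}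
    [IsProbabilityMeasure μ]
    {v : Ω → Fin m → ℝ} (hv : ∀ i, MemLp (fun ω => v ω i) 2 μ)
    (hv0 : ∀ i, ∫ ω, v ω i ∂μ = 0) (b : Fin m → ℝ) :
    ∫ ω, (b + v ω) ⬝ᵥ (b + v ω) ∂μ = b ⬝ᵥ b + ∫ ω, v ω ⬝ᵥ v ω ∂μ := by
  have := aux_int_quad_split hv hv0 b 1
  simpa [Matrix.one_mulVec] using this

lemma aux_integrable_quad1 {m : ℕ} {Ω : Type*} [MeasurableSpace Ω] {μ : Measure Ω}
    {v : Ω → Fin m → ℝ} (hv : ∀ i, MemLp (fun ω => v ω i) 2 μ) :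
    Integrable (fun ω => v ω ⬝ᵥ v ω) μ := by
  have := aux_integrable_quad hv (1 : Matrix (Fin m) (Fin m) ℝ)
  simpa [Matrix.one_mulVec] using this

lemma aux_prox_sq (r : ℝ → ℝ) (hr : ConvexOn ℝ Set.univ r)
    (Y : Set ℝ) (hYcv : Convex ℝ Y) (s : ℝ) (hs : 0 < s)
    (prox : ℝ → ℝ)
    (hprox : ∀ u : ℝ, prox u ∈ Y ∧ ∀ w ∈ Y,
        s * r (prox u) + (1 / 2) * (prox u - u) ^ 2 ≤ s * r w + (1 / 2) * (w - u) ^ 2)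
    (u v : ℝ) : (prox u - prox v) ^ 2 ≤ (u - v) ^ 2 := by
  set p := prox u with hp
  set q := prox v with hq
  have hpY : p ∈ Y := (hprox u).1
  have hqY : q ∈ Y := (hprox v).1
  -- for every t ∈ (0,1], (1-t)*(p-q)^2 ≤ (p-q)*(u-v)
  have key : ∀ t : ℝ, 0 < t → t ≤ 1 → (1 - t) * (p - q) ^ 2 ≤ (p - q) * (u - v) := by
    intro t ht0 ht1
    have hw : (1 - t) • p + t • q ∈ Y := hYcv hpY hqY (by linarith) (le_of_lt ht0) (by ring)
    have hw' : (1 - t) • q + t • p ∈ Y := hYcv hqY hpY (by linarith) (le_of_lt ht0) (by ring)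
    have hrw : r ((1 - t) • p + t • q) ≤ (1 - t) * r p + t * r q := by
      have := hr.2 (Set.mem_univ p) (Set.mem_univ q) (by linarith : (0:ℝ) ≤ 1 - t)
        (le_of_lt ht0) (by ring)
      simpa [smul_eq_mul] using this
    have hrw' : r ((1 - t) • q + t • p) ≤ (1 - t) * r q + t * r p := by
      have := hr.2 (Set.mem_univ q) (Set.mem_univ p) (by linarith : (0:ℝ) ≤ 1 - t)
        (le_of_lt ht0) (by ring)
      simpa [smul_eq_mul] using this
    have h1 := (hprox u).2 _ hw
    have h2 := (hprox v).2 _ hw'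
    have h1' : s * r p + (1/2) * (p - u)^2
        ≤ s * ((1 - t) * r p + t * r q) + (1/2) * ((1 - t) • p + t • q - u)^2 := by
      refine le_trans h1 ?_
      have := mul_le_mul_of_nonneg_left hrw (le_of_lt hs)
      linarith
    have h2' : s * r q + (1/2) * (q - v)^2
        ≤ s * ((1 - t) * r q + t * r p) + (1/2) * ((1 - t) • q + t • p - v)^2 := by
      refine le_trans h2 ?_
      have := mul_le_mul_of_nonneg_left hrw' (le_of_lt hs)
      linarith
    have hsum : (1/2) * (p - u)^2 + (1/2) * (q - v)^2
        ≤ (1/2) * ((1 - t) * p + t * q - u)^2 + (1/2) * ((1 - t) * q + t * p - v)^2 := by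
      have := add_le_add h1' h2'
      simp only [smul_eq_mul] at this
      nlinarith [this]
    nlinarith [hsum, sq_nonneg (p - q), mul_pos ht0 ht0]
  -- conclude (p-q)^2 ≤ (p-q)*(u-v)
  have hB0 : 0 ≤ (p - q) * (u - v) := by
    have := key 1 one_pos le_rfl; linarith
  have hmain : (p - q) ^ 2 ≤ (p - q) * (u - v) := by
    by_contra hcon
    push_neg at hcon
    set A := (p - q) ^ 2
    set B := (p - q) * (u - v)
    have hA0 : 0 < A := lt_of_le_of_lt hB0 hcon
    have ht : 0 < (A - B) / (2 * A) := div_pos (by linarith) (by linarith)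
    have ht1 : (A - B) / (2 * A) ≤ 1 := by
      rw [div_le_one (by positivity)]
      nlinarith
    have := key _ ht ht1
    have hexp : (1 - (A - B) / (2 * A)) * A = A - (A - B) / 2 := by
      field_simp
    rw [hexp] at this
    linarith
  nlinarith [sq_nonneg ((p - q) - (u - v))]
set_option maxHeartbeats 1000000 in

lemma aux_key_scalar (σ γ lmax α δ M X T T2 Yh Zhe V W2 W3 : ℝ)
    (hσ0 : 0 ≤ σ) (hδ : δ = σ ^ 2)
    (hlmax0 : 0 ≤ lmax) (hγ : 0 < γ) (hα0 : 0 < α)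
    (h1 : γ * lmax < 2 - 2 * σ * α) (h2 : σ * γ * lmax < α - (1 + δ) * α ^ 2)
    (hM : M = 1 - σ * α / (1 - γ / 2 * lmax))
    (hX : 0 ≤ X) (hT0 : 0 ≤ T) (hTb : T ≤ lmax * X) (hT2b : T2 ≤ lmax * T)
    (hW20 : 0 ≤ W2) (hW3b : W3 ≤ lmax * W2) (hW2b : W2 ≤ lmax * V) (hV0 : 0 ≤ V)
    (hVb : V ≤ δ * (X - 2 * Zhe + Yh)) (hEH : 0 ≤ X - 2 * Zhe + Yh) :
    M * (X - γ * T + (γ / 2) ^ 2 * T2 + (γ / 2) ^ 2 * W3) + (γ / 2) * T + (γ / 2) * W2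
      + σ * ((1 - α) ^ 2 * Yh + 2 * α * (1 - α) * Zhe + α ^ 2 * X + α ^ 2 * V)
      ≤ X + σ * (1 - α) * Yh := by
  obtain ⟨τ, hτ⟩ : ∃ τ : ℝ, τ = γ * lmax / 2 := ⟨_, rfl⟩
  have hτ0 : 0 ≤ τ := by rw [hτ]; positivity
  have hσα : 0 ≤ σ * α := mul_nonneg hσ0 (le_of_lt hα0)
  have hτ1 : τ < 1 - σ * α := by rw [hτ]; linarith
  have h1τ : 0 < 1 - τ := by linarith
  have hγτ : γ / 2 * lmax = τ := by rw [hτ]; ring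
  have hMeq : M * (1 - τ) = 1 - τ - σ * α := by
    rw [hM, hγτ]; field_simp
  have hM0 : 0 ≤ M := by nlinarith [hMeq]
  have hM1 : M ≤ 1 := by nlinarith [hMeq]
  have hδ0 : 0 ≤ δ := by rw [hδ]; positivity
  have hτ2 : τ ≤ 1 := by linarith
  have hMτ1 : M * τ ≤ 1 := by nlinarith [mul_le_mul hM1 hτ2 hτ0 zero_le_one]
  have hα1 : α < 1 := by
    nlinarith [mul_nonneg (mul_nonneg hσ0 (le_of_lt hγ)) hlmax0, mul_nonneg hδ0 (sq_nonneg α)]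
  have b1 : M * (γ / 2) ^ 2 * T2 ≤ M * ((γ / 2) * τ) * T := by
    have h := mul_le_mul_of_nonneg_left hT2b (show (0:ℝ) ≤ M * (γ / 2) ^ 2 by positivity)
    have e : M * (γ / 2) ^ 2 * (lmax * T) = M * ((γ / 2) * τ) * T := by rw [hτ]; ring
    calc M * (γ / 2) ^ 2 * T2 ≤ M * (γ / 2) ^ 2 * (lmax * T) := by linarith [h]
      _ = M * ((γ / 2) * τ) * T := e
  have b2 : M * (γ / 2) ^ 2 * W3 ≤ M * ((γ / 2) * τ) * W2 := by
    have h := mul_le_mul_of_nonneg_left hW3b (show (0:ℝ) ≤ M * (γ / 2) ^ 2 by positivity)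
    have e : M * (γ / 2) ^ 2 * (lmax * W2) = M * ((γ / 2) * τ) * W2 := by rw [hτ]; ring
    calc M * (γ / 2) ^ 2 * W3 ≤ M * (γ / 2) ^ 2 * (lmax * W2) := by linarith [h]
      _ = M * ((γ / 2) * τ) * W2 := e
  have hM1τ : 0 ≤ M * (1 - τ) := mul_nonneg hM0 (le_of_lt h1τ)
  have b3 : γ * (1 / 2 - M + M * τ / 2) * T ≤ τ * (1 - M) * X := by
    rcases le_or_gt (1 / 2 - M + M * τ / 2) 0 with hc | hc
    · have hl : γ * (1 / 2 - M + M * τ / 2) * T ≤ 0 :=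
        mul_nonpos_of_nonpos_of_nonneg
          (mul_nonpos_of_nonneg_of_nonpos (le_of_lt hγ) hc) hT0
      have hr : 0 ≤ τ * (1 - M) * X := mul_nonneg (mul_nonneg hτ0 (by linarith)) hX
      linarith
    · have h := mul_le_mul_of_nonneg_left hTb
        (show (0:ℝ) ≤ γ * (1 / 2 - M + M * τ / 2) from
          le_of_lt (mul_pos hγ hc))
      have e : γ * (1 / 2 - M + M * τ / 2) * (lmax * X) = (2 * τ) * (1 / 2 - M + M * τ / 2) * X := by
        rw [hτ]; ring
      have h2' : (2 * τ) * (1 / 2 - M + M * τ / 2) * X ≤ τ * (1 - M) * X := by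
        linarith [mul_nonneg (mul_nonneg hτ0 hX) hM1τ]
      calc γ * (1 / 2 - M + M * τ / 2) * T ≤ γ * (1 / 2 - M + M * τ / 2) * (lmax * X) := by linarith [h]
        _ = (2 * τ) * (1 / 2 - M + M * τ / 2) * X := e
        _ ≤ τ * (1 - M) * X := h2'
  have b4 : (γ / 2) * (1 + M * τ) * W2 ≤ τ * (1 + M * τ) * V := by
    have hco : (0:ℝ) ≤ (γ / 2) * (1 + M * τ) := by
      have : (0:ℝ) ≤ 1 + M * τ := by nlinarith [mul_nonneg hM0 hτ0]
      positivity
    have h := mul_le_mul_of_nonneg_left hW2b hco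
    have e : (γ / 2) * (1 + M * τ) * (lmax * V) = τ * (1 + M * τ) * V := by rw [hτ]; ring
    calc (γ / 2) * (1 + M * τ) * W2 ≤ (γ / 2) * (1 + M * τ) * (lmax * V) := by linarith [h]
      _ = τ * (1 + M * τ) * V := e
  have hc5 : (0:ℝ) ≤ τ * (1 + M * τ) + σ * α ^ 2 := by
    nlinarith [mul_nonneg hM0 hτ0, mul_nonneg hσ0 (sq_nonneg α), mul_nonneg hτ0 (mul_nonneg hM0 hτ0)]
  have b5 : (τ * (1 + M * τ) + σ * α ^ 2) * V
      ≤ (τ * (1 + M * τ) + σ * α ^ 2) * (δ * (X - 2 * Zhe + Yh)) :=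
    mul_le_mul_of_nonneg_left hVb hc5
  have hβ : 0 ≤ σ * α * (1 - α) - δ * (τ * (1 + M * τ) + σ * α ^ 2) := by
    have h2' := mul_le_mul_of_nonneg_left (le_of_lt h2) hσ0
    have hδτ : 0 ≤ δ * τ := mul_nonneg hδ0 hτ0
    have hδτ2 : δ * τ = σ ^ 2 * (γ * lmax) / 2 := by rw [hδ, hτ]; ring
    nlinarith [h2', mul_nonneg hδτ (by linarith : (0:ℝ) ≤ 1 - M * τ),
      mul_nonneg (mul_nonneg hδ0 hσ0) (sq_nonneg α)]
  have hfin : M * X + τ * (1 - M) * X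
      + (τ * (1 + M * τ) + σ * α ^ 2) * (δ * (X - 2 * Zhe + Yh))
      + σ * ((1 - α) ^ 2 * Yh + 2 * α * (1 - α) * Zhe + α ^ 2 * X)
      ≤ X + σ * (1 - α) * Yh := by
    have hMX : M * (1 - τ) * X = (1 - τ - σ * α) * X := by rw [hMeq]
    nlinarith [mul_nonneg hβ hEH, hMX]
  linarith [b1, b2, b3, b4, b5, hfin]

open scoped MatrixOrder in
lemma aux_psd_sqrt {m : ℕ} (L : Matrix (Fin m) (Fin m) ℝ) (hL : L.PosSemidef) :
    ∃ S : Matrix (Fin m) (Fin m) ℝ, S * S = L ∧ S.PosSemidef :=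
  ⟨CFC.sqrt L, CFC.sqrt_mul_sqrt_self L hL.nonneg, (CFC.sqrt_nonneg L).posSemidef⟩

lemma aux_dot_self_nonneg {m : ℕ} (v : Fin m → ℝ) : 0 ≤ v ⬝ᵥ v :=
  Finset.sum_nonneg fun i _ => mul_self_nonneg (v i)

lemma aux_dot_sym {m : ℕ} (L : Matrix (Fin m) (Fin m) ℝ) (hL : Lᵀ = L)
    (u w : Fin m → ℝ) : u ⬝ᵥ L.mulVec w = (L.mulVec u) ⬝ᵥ w := by
  rw [Matrix.dotProduct_mulVec]
  congr 1
  rw [← Matrix.mulVec_transpose, hL]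

lemma aux_rayleigh_max {m : ℕ} (L : Matrix (Fin m) (Fin m) ℝ) (lmax : ℝ)
    (hlmax : IsGreatest {t : ℝ | ∃ v : Fin m → ℝ, v ⬝ᵥ v = 1 ∧ t = v ⬝ᵥ L.mulVec v} lmax)
    (v : Fin m → ℝ) : v ⬝ᵥ L.mulVec v ≤ lmax * (v ⬝ᵥ v) := by
  rcases eq_or_lt_of_le (aux_dot_self_nonneg v) with hv | hv
  · have hv0 : v = 0 := dotProduct_self_eq_zero.mp hv.symm
    simp [hv0]
  · set n := v ⬝ᵥ v with hn
    set c := (Real.sqrt n)⁻¹ with hc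
    have hcc : c * c = n⁻¹ := by
      rw [hc, ← mul_inv]
      congr 1
      exact Real.mul_self_sqrt (le_of_lt hv)
    have hw1 : (c • v) ⬝ᵥ (c • v) = 1 := by
      rw [smul_dotProduct, dotProduct_smul, smul_eq_mul, smul_eq_mul, ← mul_assoc, hcc]
      exact inv_mul_cancel₀ (ne_of_gt hv)
    have hmem : (c • v) ⬝ᵥ L.mulVec (c • v) ∈
        {t : ℝ | ∃ v : Fin m → ℝ, v ⬝ᵥ v = 1 ∧ t = v ⬝ᵥ L.mulVec v} := ⟨c • v, hw1, rfl⟩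
    have hle := hlmax.2 hmem
    have hexp : (c • v) ⬝ᵥ L.mulVec (c • v) = n⁻¹ * (v ⬝ᵥ L.mulVec v) := by
      rw [Matrix.mulVec_smul, smul_dotProduct, dotProduct_smul, smul_eq_mul, smul_eq_mul,
        ← mul_assoc, hcc]
    rw [hexp] at hle
    calc v ⬝ᵥ L.mulVec v = n * (n⁻¹ * (v ⬝ᵥ L.mulVec v)) := by
          field_simp
      _ ≤ n * lmax := by
          exact mul_le_mul_of_nonneg_left hle (le_of_lt hv)
      _ = lmax * (v ⬝ᵥ v) := by rw [hn]; ring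

lemma aux_rayleigh_min {m : ℕ} (L : Matrix (Fin m) (Fin m) ℝ) (l2 : ℝ)
    (hl2 : IsLeast {t : ℝ | ∃ v : Fin m → ℝ,
        v ⬝ᵥ v = 1 ∧ (∑ i, v i) = 0 ∧ t = v ⬝ᵥ L.mulVec v} l2)
    (v : Fin m → ℝ) (hsum : (∑ i, v i) = 0) : l2 * (v ⬝ᵥ v) ≤ v ⬝ᵥ L.mulVec v := by
  rcases eq_or_lt_of_le (aux_dot_self_nonneg v) with hv | hv
  · have hv0 : v = 0 := dotProduct_self_eq_zero.mp hv.symm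
    simp [hv0]
  · set n := v ⬝ᵥ v with hn
    set c := (Real.sqrt n)⁻¹ with hc
    have hcc : c * c = n⁻¹ := by
      rw [hc, ← mul_inv]
      congr 1
      exact Real.mul_self_sqrt (le_of_lt hv)
    have hw1 : (c • v) ⬝ᵥ (c • v) = 1 := by
      rw [smul_dotProduct, dotProduct_smul, smul_eq_mul, smul_eq_mul, ← mul_assoc, hcc]
      exact inv_mul_cancel₀ (ne_of_gt hv)
    have hwsum : (∑ i, (c • v) i) = 0 := by
      simp only [Pi.smul_apply, smul_eq_mul, ← Finset.mul_sum, hsum, mul_zero]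
    have hmem : (c • v) ⬝ᵥ L.mulVec (c • v) ∈
        {t : ℝ | ∃ v : Fin m → ℝ, v ⬝ᵥ v = 1 ∧ (∑ i, v i) = 0 ∧ t = v ⬝ᵥ L.mulVec v} :=
      ⟨c • v, hw1, hwsum, rfl⟩
    have hle := hl2.2 hmem
    have hexp : (c • v) ⬝ᵥ L.mulVec (c • v) = n⁻¹ * (v ⬝ᵥ L.mulVec v) := by
      rw [Matrix.mulVec_smul, smul_dotProduct, dotProduct_smul, smul_eq_mul, smul_eq_mul,
        ← mul_assoc, hcc]
    rw [hexp] at hle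
    calc l2 * (v ⬝ᵥ v) = n * l2 := by rw [hn]; ring
      _ ≤ n * (n⁻¹ * (v ⬝ᵥ L.mulVec v)) := mul_le_mul_of_nonneg_left hle (le_of_lt hv)
      _ = v ⬝ᵥ L.mulVec v := by field_simp
open MeasureTheory Matrix

set_option maxHeartbeats 4000000

/-- One-step progress of the compressed dual update (Lemma `recursion_y`, scalar blocks
`d_y = 1`).  `P` plays the role of the pseudoinverse `(I-W)†` and `‖v‖²_P = vᵀ P v`;
`lmax` and `l2` are the largest and second-smallest eigenvalues of `I - W`, characterized
by their Rayleigh-quotient extremal properties. -/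
theorem one_step_progress_compressed_dual_update {m : ℕ} (hm : 0 < m)
    (W : Matrix (Fin m) (Fin m) ℝ) (hWsymm : W.IsSymm)
    (hW1 : W.mulVec (fun _ => (1 : ℝ)) = fun _ => (1 : ℝ))
    (hIWpsd : (1 - W).PosSemidef) (hIWpd : (1 + W).PosDef)
    (lmax l2 : ℝ)
    (hlmax : IsGreatest {t : ℝ | ∃ v : Fin m → ℝ, v ⬝ᵥ v = 1 ∧ t = v ⬝ᵥ (1 - W).mulVec v} lmax)
    (hl2 : IsLeast {t : ℝ | ∃ v : Fin m → ℝ,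
        v ⬝ᵥ v = 1 ∧ (∑ i, v i) = 0 ∧ t = v ⬝ᵥ (1 - W).mulVec v} l2)
    -- a symmetric PSD generalized inverse of `I - W`
    (P : Matrix (Fin m) (Fin m) ℝ) (hPpsd : P.PosSemidef)
    (hPgi : (1 - W) * P * (1 - W) = 1 - W)
    -- the proximal map of `s·r` over `Y`
    (r : ℝ → ℝ) (hr : ConvexOn ℝ Set.univ r) (hrc : Continuous r)
    (Y : Set ℝ) (hYne : Y.Nonempty) (hYcl : IsClosed Y) (hYcv : Convex ℝ Y)
    (s : ℝ) (hs : 0 < s)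
    (prox : ℝ → ℝ)
    (hprox : ∀ u : ℝ, prox u ∈ Y ∧ ∀ w ∈ Y,
        s * r (prox u) + (1 / 2) * (prox u - u) ^ 2 ≤ s * r w + (1 / 2) * (w - u) ^ 2)
    -- the local functions and the fixed point
    (f : Fin m → ℝ → ℝ → ℝ) (hfdiff : ∀ i x, Differentiable ℝ (f i x))
    (xstar ystar : ℝ)
    (hfix : ystar = prox (ystar + (s / (m : ℝ)) * ∑ i, deriv (f i xstar) ystar))
    (Dstar Hstar : Fin m → ℝ)
    (hDstar : Dstar = fun i => deriv (f i xstar) ystar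
        - (1 / (m : ℝ)) * ∑ j, deriv (f j xstar) ystar)
    (hHstar : Hstar = fun _ => ystar + (s / (m : ℝ)) * ∑ i, deriv (f i xstar) ystar)
    -- the compression and step-size parameters
    (δ αy γy : ℝ) (hδ : δ ∈ Set.Icc (0 : ℝ) 1)
    (hαy : αy ∈ Set.Ioo (0 : ℝ) (1 / (1 + δ)))
    (hγy0 : 0 < γy) (hγy1 : γy * lmax < 2 - 2 * Real.sqrt δ * αy)
    (hγy2 : Real.sqrt δ * γy * lmax < αy - (1 + δ) * αy ^ 2)
    (My : ℝ) (hMy : My = 1 - Real.sqrt δ * αy / (1 - (γy / 2) * lmax))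
    -- deterministic data of the current step
    (yt Gy Dyt Hyt : Fin m → ℝ)
    (hDrange : Dyt - Dstar ∈ Set.range (1 - W).mulVec)
    (ν : Fin m → ℝ) (hν : ν = yt + s • Gy - s • Dyt)
    -- the stochastic compressed vector
    {Ω : Type*} [MeasurableSpace Ω] (μP : Measure Ω) [IsProbabilityMeasure μP]
    (νhat : Ω → Fin m → ℝ)
    (hνhatL2 : ∀ i, MemLp (fun ω => νhat ω i) 2 μP)
    (hunbias : ∀ i, ∫ ω, νhat ω i ∂μP = ν i)
    (hvar : ∫ ω, (νhat ω - ν) ⬝ᵥ (νhat ω - ν) ∂μP ≤ δ * ((ν - Hyt) ⬝ᵥ (ν - Hyt)))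
    -- the updates
    (Dnext yhat ynext Hnext : Ω → Fin m → ℝ)
    (hD : ∀ ω, Dnext ω = Dyt + (γy / (2 * s)) • (1 - W).mulVec (νhat ω))
    (hyhat : ∀ ω, yhat ω = ν - (γy / 2) • (1 - W).mulVec (νhat ω))
    (hynext : ∀ ω i, ynext ω i = prox (yhat ω i))
    (hH : ∀ ω, Hnext ω = (1 - αy) • Hyt + αy • νhat ω) :
    My * ∫ ω, (ynext ω - fun _ => ystar) ⬝ᵥ (ynext ω - fun _ => ystar) ∂μP
      + (2 * s ^ 2 / γy) * ∫ ω, (Dnext ω - Dstar) ⬝ᵥ P.mulVec (Dnext ω - Dstar) ∂μP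
      + Real.sqrt δ * ∫ ω, (Hnext ω - Hstar) ⬝ᵥ (Hnext ω - Hstar) ∂μP ≤
    ((yt - fun _ => ystar) + s • Gy - s • fun i => deriv (f i xstar) ystar) ⬝ᵥ
        ((yt - fun _ => ystar) + s • Gy - s • fun i => deriv (f i xstar) ystar)
      + (2 * s ^ 2 / γy) * (1 - (γy / 2) * l2) * ((Dyt - Dstar) ⬝ᵥ P.mulVec (Dyt - Dstar))
      + Real.sqrt δ * (1 - αy) * ((Hyt - Hstar) ⬝ᵥ (Hyt - Hstar)) := by

  obtain ⟨hδ0, hδ1⟩ := hδ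
  obtain ⟨hα0, hα1'⟩ := hαy
  set L : Matrix (Fin m) (Fin m) ℝ := 1 - W with hLdef
  -- basic symmetry facts
  have hLsym : Lᵀ = L := by
    rw [hLdef, Matrix.transpose_sub, Matrix.transpose_one, hWsymm]
  have hdsym := aux_dot_sym L hLsym
  have hL1 : L.mulVec (fun _ => (1:ℝ)) = 0 := by
    rw [hLdef, Matrix.sub_mulVec, hW1, Matrix.one_mulVec]
    simp
  have hLconst : ∀ c : ℝ, L.mulVec (fun _ => c) = 0 := by
    intro c
    have : (fun _ : Fin m => c) = c • (fun _ : Fin m => (1:ℝ)) := by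
      funext i; simp
    rw [this, Matrix.mulVec_smul, hL1, smul_zero]
  have hLpsd : ∀ v : Fin m → ℝ, 0 ≤ v ⬝ᵥ L.mulVec v := by
    intro v
    have := hIWpsd.dotProduct_mulVec_nonneg v
    simpa [hLdef] using this
  have hPpt : ∀ v : Fin m → ℝ, 0 ≤ v ⬝ᵥ P.mulVec v := by
    intro v
    have := hPpsd.dotProduct_mulVec_nonneg v
    simpa using this
  have hlmax0 : 0 ≤ lmax := by
    obtain ⟨v, hv1, hveq⟩ := hlmax.1
    rw [hveq]
    exact hLpsd v
  -- square root of L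
  obtain ⟨S, hSS, hSpsd⟩ := aux_psd_sqrt L hIWpsd
  have hSsym : Sᵀ = S := by
    have := hSpsd.1
    simpa [Matrix.IsHermitian] using this
  have hdsymS := aux_dot_sym S hSsym
  have hSmul : ∀ u : Fin m → ℝ, S.mulVec (S.mulVec u) = L.mulVec u := by
    intro u
    rw [Matrix.mulVec_mulVec, hSS]
  have hS1 : S.mulVec (fun _ => (1:ℝ)) = 0 := by
    have h0 : (S.mulVec (fun _ => (1:ℝ))) ⬝ᵥ (S.mulVec (fun _ => (1:ℝ))) = 0 := by
      rw [← hdsymS, hSmul, hL1]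
      simp
    exact dotProduct_self_eq_zero.mp h0
  have hSsum : ∀ u : Fin m → ℝ, (∑ i, (S.mulVec u) i) = 0 := by
    intro u
    have h1 : (∑ i, (S.mulVec u) i) = (fun _ : Fin m => (1:ℝ)) ⬝ᵥ (S.mulVec u) := by
      simp [dotProduct]
    rw [h1, hdsymS, hS1]
    simp
  -- Rayleigh-type quadratic bounds
  have ray_max : ∀ v : Fin m → ℝ, v ⬝ᵥ L.mulVec v ≤ lmax * (v ⬝ᵥ v) :=
    aux_rayleigh_max L lmax (by rw [hLdef] at *; exact hlmax)
  have eS1 : ∀ u : Fin m → ℝ, (S.mulVec u) ⬝ᵥ (S.mulVec u) = u ⬝ᵥ L.mulVec u := by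
    intro u
    rw [← hdsymS u (S.mulVec u), hSmul u]
  have eS2 : ∀ u : Fin m → ℝ,
      (S.mulVec u) ⬝ᵥ L.mulVec (S.mulVec u) = (L.mulVec u) ⬝ᵥ (L.mulVec u) := by
    intro u
    rw [← hSmul (S.mulVec u), hdsymS (S.mulVec u) (S.mulVec (S.mulVec u)), hSmul u]
  have quad_max : ∀ u : Fin m → ℝ,
      (L.mulVec u) ⬝ᵥ (L.mulVec u) ≤ lmax * (u ⬝ᵥ L.mulVec u) := by
    intro u
    have h := ray_max (S.mulVec u)
    rw [eS1 u, eS2 u] at h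
    exact h
  have quad_min : ∀ u : Fin m → ℝ,
      l2 * (u ⬝ᵥ L.mulVec u) ≤ (L.mulVec u) ⬝ᵥ (L.mulVec u) := by
    intro u
    have h := aux_rayleigh_min L l2 (by rw [hLdef] at *; exact hl2) (S.mulVec u) (hSsum u)
    rw [eS1 u, eS2 u] at h
    exact h
  -- generalized-inverse identities
  have hPsym : Pᵀ = P := by
    have := hPpsd.1
    simpa [Matrix.IsHermitian] using this
  have lPl : ∀ x w : Fin m → ℝ,
      (L.mulVec x) ⬝ᵥ P.mulVec (L.mulVec w) = x ⬝ᵥ L.mulVec w := by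
    intro x w
    rw [← hdsym x (P.mulVec (L.mulVec w)), Matrix.mulVec_mulVec, Matrix.mulVec_mulVec]
    rw [hLdef]
    rw [hPgi]

  -- the noise process
  set z : Ω → Fin m → ℝ := fun ω => νhat ω - ν with hzdef
  have hz2 : ∀ i, MemLp (fun ω => z ω i) 2 μP := by
    intro i
    have : (fun ω => z ω i) = fun ω => νhat ω i - ν i := rfl
    rw [this]
    exact (hνhatL2 i).sub (memLp_const _)
  have hz0 : ∀ i, ∫ ω, z ω i ∂μP = 0 := by
    intro i
    have : (fun ω => z ω i) = fun ω => νhat ω i - ν i := rfl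
    rw [this, integral_sub ((hνhatL2 i).integrable one_le_two) (integrable_const _),
      hunbias i]
    simp
  have hνhatz : ∀ ω, νhat ω = ν + z ω := by
    intro ω; funext i
    simp [hzdef]
  -- coordinates of linear images of z
  have hcoord : ∀ (t : ℝ) (B : Matrix (Fin m) (Fin m) ℝ) (i : Fin m),
      (fun ω => (t • B.mulVec (z ω)) i) = fun ω => (fun j => t * B i j) ⬝ᵥ z ω := by
    intro t B i
    funext ω
    simp [Matrix.mulVec, dotProduct, Finset.mul_sum, mul_assoc]
  have hv2gen : ∀ (t : ℝ) (B : Matrix (Fin m) (Fin m) ℝ) (i : Fin m),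
      MemLp (fun ω => (t • B.mulVec (z ω)) i) 2 μP := by
    intro t B i
    rw [hcoord t B i]
    exact aux_memL2_dot hz2 _
  have hv0gen : ∀ (t : ℝ) (B : Matrix (Fin m) (Fin m) ℝ) (i : Fin m),
      ∫ ω, (t • B.mulVec (z ω)) i ∂μP = 0 := by
    intro t B i
    have := hcoord t B i
    calc ∫ ω, (t • B.mulVec (z ω)) i ∂μP
        = ∫ ω, (fun j => t * B i j) ⬝ᵥ z ω ∂μP := by rw [this]
      _ = 0 := aux_int_dot_zero hz2 hz0 _
  -- centered deterministic vectors
  obtain ⟨u, hu⟩ := hDrange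
  set e : Fin m → ℝ := ν - Hstar with hedef
  set d : Fin m → ℝ := Dyt - Dstar with hddef
  set h : Fin m → ℝ := Hyt - Hstar with hhdef
  have hHconst : L.mulVec Hstar = 0 := by
    rw [hHstar]
    exact hLconst _
  have hLν : L.mulVec ν = L.mulVec e := by
    have : ν = e + Hstar := by funext i; simp [hedef]
    rw [this, Matrix.mulVec_add, hHconst, add_zero]
  set e' : Fin m → ℝ := e - (γy / 2) • L.mulVec e with he'def
  set d' : Fin m → ℝ := d + (γy / (2 * s)) • L.mulVec e with hd'def
  set h' : Fin m → ℝ := (1 - αy) • h + αy • e with hh'def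
  -- update identities
  have hy1 : ∀ ω, yhat ω - Hstar = e' + (-(γy / 2)) • L.mulVec (z ω) := by
    intro ω
    rw [hyhat ω, hνhatz ω, Matrix.mulVec_add, hLν]
    funext i
    simp only [he'def, Pi.sub_apply, Pi.add_apply, Pi.smul_apply, smul_eq_mul, hedef,
      Pi.neg_apply, neg_mul]
    ring
  have hd1 : ∀ ω, Dnext ω - Dstar = d' + (γy / (2 * s)) • L.mulVec (z ω) := by
    intro ω
    rw [hD ω, hνhatz ω, Matrix.mulVec_add, hLν]
    funext i
    simp only [hd'def, Pi.sub_apply, Pi.add_apply, Pi.smul_apply, smul_eq_mul, hddef]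
    ring
  have hh1 : ∀ ω, Hnext ω - Hstar = h' + αy • z ω := by
    intro ω
    rw [hH ω, hνhatz ω]
    funext i
    simp only [hh'def, Pi.sub_apply, Pi.add_apply, Pi.smul_apply, smul_eq_mul, hhdef, hedef]
    ring

  have hLz2 : ∀ i, MemLp (fun ω => (L.mulVec (z ω)) i) 2 μP := by
    intro i
    have := hv2gen 1 L i
    simpa using this
  -- expectation identities
  have I1b : ∫ ω, (yhat ω - Hstar) ⬝ᵥ (yhat ω - Hstar) ∂μP
      = e' ⬝ᵥ e' + (γy / 2) ^ 2 * ∫ ω, (L.mulVec (z ω)) ⬝ᵥ (L.mulVec (z ω)) ∂μP := by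
    calc ∫ ω, (yhat ω - Hstar) ⬝ᵥ (yhat ω - Hstar) ∂μP
        = ∫ ω, (e' + (-(γy / 2)) • L.mulVec (z ω)) ⬝ᵥ (e' + (-(γy / 2)) • L.mulVec (z ω)) ∂μP := by
          congr 1; funext ω; rw [hy1 ω]
      _ = e' ⬝ᵥ e' + ∫ ω, ((-(γy / 2)) • L.mulVec (z ω)) ⬝ᵥ ((-(γy / 2)) • L.mulVec (z ω)) ∂μP :=
          aux_int_quad_split1 (hv2gen _ L) (hv0gen _ L) e'
      _ = e' ⬝ᵥ e' + (γy / 2) ^ 2 * ∫ ω, (L.mulVec (z ω)) ⬝ᵥ (L.mulVec (z ω)) ∂μP := by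
          congr 1
          have hpt : (fun ω => ((-(γy / 2)) • L.mulVec (z ω)) ⬝ᵥ ((-(γy / 2)) • L.mulVec (z ω)))
              = fun ω => (γy / 2) ^ 2 * ((L.mulVec (z ω)) ⬝ᵥ (L.mulVec (z ω))) := by
            funext ω
            rw [smul_dotProduct, dotProduct_smul, smul_eq_mul, smul_eq_mul]
            ring
          rw [hpt, integral_const_mul]
  have I2b : ∫ ω, (Dnext ω - Dstar) ⬝ᵥ P.mulVec (Dnext ω - Dstar) ∂μP
      = d' ⬝ᵥ P.mulVec d' + (γy / (2 * s)) ^ 2 * ∫ ω, z ω ⬝ᵥ L.mulVec (z ω) ∂μP := by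
    calc ∫ ω, (Dnext ω - Dstar) ⬝ᵥ P.mulVec (Dnext ω - Dstar) ∂μP
        = ∫ ω, (d' + (γy / (2 * s)) • L.mulVec (z ω)) ⬝ᵥ
            P.mulVec (d' + (γy / (2 * s)) • L.mulVec (z ω)) ∂μP := by
          congr 1; funext ω; rw [hd1 ω]
      _ = d' ⬝ᵥ P.mulVec d' + ∫ ω, ((γy / (2 * s)) • L.mulVec (z ω)) ⬝ᵥ
            P.mulVec ((γy / (2 * s)) • L.mulVec (z ω)) ∂μP :=
          aux_int_quad_split (hv2gen _ L) (hv0gen _ L) d' P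
      _ = d' ⬝ᵥ P.mulVec d' + (γy / (2 * s)) ^ 2 * ∫ ω, z ω ⬝ᵥ L.mulVec (z ω) ∂μP := by
          congr 1
          have hpt : (fun ω => ((γy / (2 * s)) • L.mulVec (z ω)) ⬝ᵥ
              P.mulVec ((γy / (2 * s)) • L.mulVec (z ω)))
              = fun ω => (γy / (2 * s)) ^ 2 * (z ω ⬝ᵥ L.mulVec (z ω)) := by
            funext ω
            rw [Matrix.mulVec_smul, smul_dotProduct, dotProduct_smul, smul_eq_mul, smul_eq_mul,
              lPl (z ω) (z ω)]
            ring
          rw [hpt, integral_const_mul]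
  have hz3 : ∀ i : Fin m, MemLp (fun ω => (αy • z ω) i) 2 μP := by
    intro i
    have := hv2gen αy 1 i
    simpa [Matrix.one_mulVec] using this
  have hz30 : ∀ i : Fin m, ∫ ω, (αy • z ω) i ∂μP = 0 := by
    intro i
    have := hv0gen αy 1 i
    simpa [Matrix.one_mulVec] using this
  have I3b : ∫ ω, (Hnext ω - Hstar) ⬝ᵥ (Hnext ω - Hstar) ∂μP
      = h' ⬝ᵥ h' + αy ^ 2 * ∫ ω, z ω ⬝ᵥ z ω ∂μP := by
    calc ∫ ω, (Hnext ω - Hstar) ⬝ᵥ (Hnext ω - Hstar) ∂μP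
        = ∫ ω, (h' + αy • z ω) ⬝ᵥ (h' + αy • z ω) ∂μP := by
          congr 1; funext ω; rw [hh1 ω]
      _ = h' ⬝ᵥ h' + ∫ ω, (αy • z ω) ⬝ᵥ (αy • z ω) ∂μP :=
          aux_int_quad_split1 hz3 hz30 h'
      _ = h' ⬝ᵥ h' + αy ^ 2 * ∫ ω, z ω ⬝ᵥ z ω ∂μP := by
          congr 1
          have hpt : (fun ω => (αy • z ω) ⬝ᵥ (αy • z ω))
              = fun ω => αy ^ 2 * (z ω ⬝ᵥ z ω) := by
            funext ω
            rw [smul_dotProduct, dotProduct_smul, smul_eq_mul, smul_eq_mul]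
            ring
          rw [hpt, integral_const_mul]
  -- integrability and bounds on the noise moments
  have intW2 : Integrable (fun ω => z ω ⬝ᵥ L.mulVec (z ω)) μP := aux_integrable_quad hz2 L
  have intV : Integrable (fun ω => z ω ⬝ᵥ z ω) μP := aux_integrable_quad1 hz2
  have intW3 : Integrable (fun ω => (L.mulVec (z ω)) ⬝ᵥ (L.mulVec (z ω))) μP :=
    aux_integrable_quad1 hLz2
  have hW3b : ∫ ω, (L.mulVec (z ω)) ⬝ᵥ (L.mulVec (z ω)) ∂μP
      ≤ lmax * ∫ ω, z ω ⬝ᵥ L.mulVec (z ω) ∂μP := by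
    calc ∫ ω, (L.mulVec (z ω)) ⬝ᵥ (L.mulVec (z ω)) ∂μP
        ≤ ∫ ω, lmax * (z ω ⬝ᵥ L.mulVec (z ω)) ∂μP :=
          integral_mono intW3 (intW2.const_mul lmax) (fun ω => quad_max (z ω))
      _ = lmax * ∫ ω, z ω ⬝ᵥ L.mulVec (z ω) ∂μP := integral_const_mul _ _
  have hW2b : ∫ ω, z ω ⬝ᵥ L.mulVec (z ω) ∂μP ≤ lmax * ∫ ω, z ω ⬝ᵥ z ω ∂μP := by
    calc ∫ ω, z ω ⬝ᵥ L.mulVec (z ω) ∂μP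
        ≤ ∫ ω, lmax * (z ω ⬝ᵥ z ω) ∂μP :=
          integral_mono intW2 (intV.const_mul lmax) (fun ω => ray_max (z ω))
      _ = lmax * ∫ ω, z ω ⬝ᵥ z ω ∂μP := integral_const_mul _ _
  have hW20 : 0 ≤ ∫ ω, z ω ⬝ᵥ L.mulVec (z ω) ∂μP :=
    integral_nonneg (fun ω => hLpsd (z ω))
  have hV0 : 0 ≤ ∫ ω, z ω ⬝ᵥ z ω ∂μP :=
    integral_nonneg (fun ω => aux_dot_self_nonneg _)
  have hVb : ∫ ω, z ω ⬝ᵥ z ω ∂μP ≤ δ * ((e - h) ⬝ᵥ (e - h)) := by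
    have hνH : ν - Hyt = e - h := by
      funext i
      simp only [hedef, hhdef, Pi.sub_apply]
      ring
    have : ∫ ω, (νhat ω - ν) ⬝ᵥ (νhat ω - ν) ∂μP = ∫ ω, z ω ⬝ᵥ z ω ∂μP := rfl
    rw [this, hνH] at hvar
    exact hvar

  -- the prox step is nonexpansive
  have hprox_sq := aux_prox_sq r hr Y hYcv s hs prox hprox
  have hproxHstar : ∀ i : Fin m, prox (Hstar i) = ystar := by
    intro i
    simp only [hHstar]
    exact hfix.symm
  have hpt : ∀ ω, (ynext ω - fun _ => ystar) ⬝ᵥ (ynext ω - fun _ => ystar)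
      ≤ (yhat ω - Hstar) ⬝ᵥ (yhat ω - Hstar) := by
    intro ω
    apply Finset.sum_le_sum
    intro i _
    simp only [Pi.sub_apply]
    rw [hynext ω i, ← hproxHstar i]
    have hsq := hprox_sq (yhat ω i) (Hstar i)
    rw [pow_two, pow_two] at hsq
    exact hsq
  have intYhat : Integrable (fun ω => (yhat ω - Hstar) ⬝ᵥ (yhat ω - Hstar)) μP := by
    have hco : ∀ i, MemLp (fun ω => (yhat ω - Hstar) i) 2 μP := by
      intro i
      have h1 : (fun ω => (yhat ω - Hstar) i)
          = fun ω => e' i + ((-(γy / 2)) • L.mulVec (z ω)) i := by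
        funext ω
        rw [hy1 ω]
        simp
      rw [h1]
      exact MemLp.add (f := fun _ => e' i) (g := fun ω => ((-(γy / 2)) • L.mulVec (z ω)) i)
        (memLp_const _) (hv2gen _ L i)
    exact aux_integrable_quad1 hco
  have hIy : ∫ ω, (ynext ω - fun _ => ystar) ⬝ᵥ (ynext ω - fun _ => ystar) ∂μP
      ≤ ∫ ω, (yhat ω - Hstar) ⬝ᵥ (yhat ω - Hstar) ∂μP :=
    integral_mono_of_nonneg (ae_of_all _ (fun ω => aux_dot_self_nonneg _)) intYhat
      (ae_of_all _ hpt)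
  -- deterministic expansions
  have hds := fun (x y : Fin m → ℝ) => dotProduct_comm x y
  have S1 : e' ⬝ᵥ e' = e ⬝ᵥ e - γy * (e ⬝ᵥ L.mulVec e)
      + (γy / 2) ^ 2 * ((L.mulVec e) ⬝ᵥ (L.mulVec e)) := by
    rw [he'def]
    simp only [sub_dotProduct, dotProduct_sub, dotProduct_smul, smul_dotProduct, smul_eq_mul]
    rw [← hdsym e e]
    ring
  have S2 : d' ⬝ᵥ P.mulVec d' = d ⬝ᵥ P.mulVec d + (γy / s) * (d ⬝ᵥ e)
      + (γy / (2 * s)) ^ 2 * (e ⬝ᵥ L.mulVec e) := by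
    rw [hd'def, ← hu]
    simp only [Matrix.mulVec_add, Matrix.mulVec_smul, dotProduct_add, add_dotProduct,
      dotProduct_smul, smul_dotProduct, smul_eq_mul]
    rw [lPl u u, lPl u e, lPl e u, lPl e e]
    rw [show e ⬝ᵥ L.mulVec u = u ⬝ᵥ L.mulVec e from by
      rw [hdsym e u]; exact hds (L.mulVec e) u]
    rw [show (L.mulVec u) ⬝ᵥ e = u ⬝ᵥ L.mulVec e from (hdsym u e).symm]
    ring
  have S3 : h' ⬝ᵥ h' = (1 - αy) ^ 2 * (h ⬝ᵥ h) + 2 * αy * (1 - αy) * (h ⬝ᵥ e)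
      + αy ^ 2 * (e ⬝ᵥ e) := by
    rw [hh'def]
    simp only [dotProduct_add, add_dotProduct, dotProduct_smul, smul_dotProduct, smul_eq_mul]
    rw [hds e h]
    ring
  have S4 : ((yt - fun _ => ystar) + s • Gy - s • fun i => deriv (f i xstar) ystar)
      = e + s • d := by
    funext i
    simp only [hedef, hddef, hν, hHstar, hDstar, Pi.add_apply, Pi.sub_apply, Pi.smul_apply,
      smul_eq_mul]
    ring
  have S4b : (e + s • d) ⬝ᵥ (e + s • d)
      = e ⬝ᵥ e + 2 * s * (d ⬝ᵥ e) + s ^ 2 * (d ⬝ᵥ d) := by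
    simp only [dotProduct_add, add_dotProduct, dotProduct_smul, smul_dotProduct, smul_eq_mul]
    rw [hds e d]
    ring
  have S5 : (e - h) ⬝ᵥ (e - h) = e ⬝ᵥ e - 2 * (h ⬝ᵥ e) + h ⬝ᵥ h := by
    simp only [sub_dotProduct, dotProduct_sub]
    rw [hds e h]
    ring
  -- scalar parameters and positivity
  have hσ0 : 0 ≤ Real.sqrt δ := Real.sqrt_nonneg δ
  have hδeq : δ = Real.sqrt δ ^ 2 := (Real.sq_sqrt hδ0).symm
  have hX0 : 0 ≤ e ⬝ᵥ e := aux_dot_self_nonneg e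
  have hT0 : 0 ≤ e ⬝ᵥ L.mulVec e := hLpsd e
  have hYh0 : 0 ≤ h ⬝ᵥ h := aux_dot_self_nonneg h
  have hEH : 0 ≤ e ⬝ᵥ e - 2 * (h ⬝ᵥ e) + h ⬝ᵥ h := by
    rw [← S5]; exact aux_dot_self_nonneg _
  have hVb' : ∫ ω, z ω ⬝ᵥ z ω ∂μP
      ≤ δ * (e ⬝ᵥ e - 2 * (h ⬝ᵥ e) + h ⬝ᵥ h) := by
    rw [← S5]; exact hVb
  -- the key scalar inequality
  have hkey := aux_key_scalar (Real.sqrt δ) γy lmax αy δ My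
    (e ⬝ᵥ e) (e ⬝ᵥ L.mulVec e) ((L.mulVec e) ⬝ᵥ (L.mulVec e)) (h ⬝ᵥ h) (h ⬝ᵥ e)
    (∫ ω, z ω ⬝ᵥ z ω ∂μP) (∫ ω, z ω ⬝ᵥ L.mulVec (z ω) ∂μP)
    (∫ ω, (L.mulVec (z ω)) ⬝ᵥ (L.mulVec (z ω)) ∂μP)
    hσ0 hδeq hlmax0 hγy0 hα0 hγy1 hγy2 hMy
    hX0 hT0 (ray_max e) (quad_max e) hW20 hW3b hW2b hV0 hVb' hEH
  -- positivity of the weights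
  have hMy0 : 0 ≤ My := by
    rw [hMy, sub_nonneg]
    have hden : 0 < 1 - γy / 2 * lmax := by nlinarith [mul_nonneg hσ0 (le_of_lt hα0)]
    rw [div_le_one hden]
    nlinarith [mul_nonneg hσ0 (le_of_lt hα0)]
  -- generalized-inverse spectral bound
  have hDnl2 : l2 * (d ⬝ᵥ P.mulVec d) ≤ d ⬝ᵥ d := by
    have h1 : d ⬝ᵥ P.mulVec d = u ⬝ᵥ L.mulVec u := by rw [← hu, lPl u u]
    have h2 : d ⬝ᵥ d = (L.mulVec u) ⬝ᵥ (L.mulVec u) := by rw [← hu]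
    rw [h1, h2]
    exact quad_min u
  -- final assembly
  have hA : My * (∫ ω, (ynext ω - fun _ => ystar) ⬝ᵥ (ynext ω - fun _ => ystar) ∂μP)
      ≤ My * ((e ⬝ᵥ e - γy * (e ⬝ᵥ L.mulVec e)
          + (γy / 2) ^ 2 * ((L.mulVec e) ⬝ᵥ (L.mulVec e)))
        + (γy / 2) ^ 2 * ∫ ω, (L.mulVec (z ω)) ⬝ᵥ (L.mulVec (z ω)) ∂μP) := by
    apply mul_le_mul_of_nonneg_left _ hMy0
    rw [← S1]
    calc ∫ ω, (ynext ω - fun _ => ystar) ⬝ᵥ (ynext ω - fun _ => ystar) ∂μP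
        ≤ ∫ ω, (yhat ω - Hstar) ⬝ᵥ (yhat ω - Hstar) ∂μP := hIy
      _ = e' ⬝ᵥ e' + (γy / 2) ^ 2 * ∫ ω, (L.mulVec (z ω)) ⬝ᵥ (L.mulVec (z ω)) ∂μP := I1b
  have hB : (2 * s ^ 2 / γy) * (∫ ω, (Dnext ω - Dstar) ⬝ᵥ P.mulVec (Dnext ω - Dstar) ∂μP)
      = (2 * s ^ 2 / γy) * (d ⬝ᵥ P.mulVec d) + 2 * s * (d ⬝ᵥ e)
        + (γy / 2) * (e ⬝ᵥ L.mulVec e)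
        + (γy / 2) * ∫ ω, z ω ⬝ᵥ L.mulVec (z ω) ∂μP := by
    rw [I2b, S2]
    field_simp
  have hC : Real.sqrt δ * (∫ ω, (Hnext ω - Hstar) ⬝ᵥ (Hnext ω - Hstar) ∂μP)
      = Real.sqrt δ * ((1 - αy) ^ 2 * (h ⬝ᵥ h) + 2 * αy * (1 - αy) * (h ⬝ᵥ e)
        + αy ^ 2 * (e ⬝ᵥ e) + αy ^ 2 * ∫ ω, z ω ⬝ᵥ z ω ∂μP) := by
    rw [I3b, S3]
  have hRHS : ((yt - fun _ => ystar) + s • Gy - s • fun i => deriv (f i xstar) ystar) ⬝ᵥ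
        ((yt - fun _ => ystar) + s • Gy - s • fun i => deriv (f i xstar) ystar)
      = e ⬝ᵥ e + 2 * s * (d ⬝ᵥ e) + s ^ 2 * (d ⬝ᵥ d) := by
    rw [S4, S4b]
  have hRHS2 : (2 * s ^ 2 / γy) * (1 - γy / 2 * l2) * (d ⬝ᵥ P.mulVec d)
      = (2 * s ^ 2 / γy) * (d ⬝ᵥ P.mulVec d) - s ^ 2 * (l2 * (d ⬝ᵥ P.mulVec d)) := by
    field_simp
  have hDn : s ^ 2 * (l2 * (d ⬝ᵥ P.mulVec d)) ≤ s ^ 2 * (d ⬝ᵥ d) :=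
    mul_le_mul_of_nonneg_left hDnl2 (sq_nonneg s)
  rw [hRHS, hRHS2]
  linarith [hA, hB, hC, hkey, hDn]
end

section
/- One-step stochastic-gradient bounds (Lemma `exp_ykt_ystar_xkt_xstar`). For i = 1,…,m let f_i : ℝ^{d_x} × ℝ^{d_y} → ℝ be differentiable, μ_x-strongly convex in x for each fixed y and μ_y-strongly concave in y for each fixed x. Let ξ¹,…,ξ^m be random elements and suppose stochastic gradients ∇_x f_i(x,y;ξⁱ), ∇_y f_i(x,y;ξⁱ) satisfy, for all (x,y,x₁,x₂,y₁,y₂): unbiasedness E[∇_x f_i(x,y;ξⁱ)] = ∇_x f_i(x,y) and E[∇_y f_i(x,y;ξⁱ)] = ∇_y f_i(x,y); variance bounds at the point z⋆ = (x⋆,y⋆): E‖∇_x f_i(z⋆;ξⁱ) − ∇_x f_i(z⋆)‖² ≤ σ_x² and E‖∇_y f_i(z⋆;ξⁱ) − ∇_y f_i(z⋆)‖² ≤ σ_y²; expected smoothness E‖∇_x f_i(x₁,y;ξⁱ) − ∇_x f_i(x₂,y;ξⁱ)‖² ≤ 2L_xx·V_{f_i,y}(x₁,x₂) and E‖−∇_y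 f_i(x,y₁;ξⁱ) + ∇_y f_i(x,y₂;ξⁱ)‖² ≤ 2L_yy·V_{−f_i,x}(y₁,y₂); and cross-terms E‖∇_x f_i(x,y₁;ξⁱ) − ∇_x f_i(x,y₂;ξⁱ)‖² ≤ L_xy²‖y₁−y₂‖², E‖∇_y f_i(x₁,y;ξⁱ) − ∇_y f_i(x₂,y;ξⁱ)‖² ≤ L_yx²‖x₁−x₂‖². Let x_t ∈ ℝ^{md_x}, y_t ∈ ℝ^{md_y} be deterministic stacked vectors with blocks x^i_t, y^i_t, z^i_t = (x^i_t,y^i_t), and set G^x := (∇_x f_1(z¹_t;ξ¹),…,∇_x f_m(z^m_t;ξ^m)), G^y := (∇_y f_1(z¹_t;ξ¹),…,∇_y f_m(z^m_t;ξ^m)). Then for every s > 0: (i) E‖x_t − 𝟙x⋆ − sG^x + s∇_x F(𝟙x⋆,𝟙y⋆)‖² ≤ (1−μ_x s)‖x_t−𝟙x⋆‖² + 4s²L_xy²‖y_t−𝟙y⋆‖² − (2s − 8s²L_xx)·Σᵢ V_{f_i,y^i_t}(x⋆,x^i_t) + 2s·(F(x_t,𝟙y⋆) − F(𝟙x⋆,𝟙y⋆)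 + F(𝟙x⋆,y_t) − F(x_t,y_t)) + 2ms²σ_x²; and (ii) E‖y_t − 𝟙y⋆ + sG^y − s∇_y F(𝟙x⋆,𝟙y⋆)‖² ≤ (1−μ_y s)‖y_t−𝟙y⋆‖² + 4s²L_yx²‖x_t−𝟙x⋆‖² − (2s − 8s²L_yy)·Σᵢ V_{−f_i,x^i_t}(y⋆,y^i_t) + 2s·(−F(x_t,𝟙y⋆) + F(𝟙x⋆,𝟙y⋆) − F(𝟙x⋆,y_t) + F(x_t,y_t)) + 2ms²σ_y². -/
open MeasureTheory RealInnerProductSpace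

section Helpers
set_option linter.unusedSectionVars false

variable {Ω : Type*} [MeasurableSpace Ω] {μP : Measure Ω} [IsProbabilityMeasure μP]
variable {E : Type*} [NormedAddCommGroup E] [InnerProductSpace ℝ E] [CompleteSpace E]

lemma sq_norm_integrable {H : Ω → E} (hH : MemLp H 2 μP) :
    Integrable (fun ω => ‖H ω‖ ^ 2) μP :=
  (memLp_two_iff_integrable_sq_norm hH.aestronglyMeasurable).mp hH

lemma expand_sq (H : Ω → E) (hH : MemLp H 2 μP) (a c : E) (s : ℝ) :
    ∫ ω, ‖a - s • H ω + s • c‖ ^ 2 ∂μP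
      = ‖a‖ ^ 2 - 2 * s * ⟪a, (∫ ω, H ω ∂μP) - c⟫ + s ^ 2 * ∫ ω, ‖H ω - c‖ ^ 2 ∂μP := by
  have hHc : MemLp (fun ω => H ω - c) 2 μP := hH.sub (memLp_const c)
  have hint : Integrable (fun ω => H ω - c) μP := hHc.integrable one_le_two
  have hsq : Integrable (fun ω => ‖H ω - c‖ ^ 2) μP := sq_norm_integrable hHc
  have hinner : Integrable (fun ω => ⟪a, H ω - c⟫) μP := hint.const_inner a
  have hi1 : Integrable (fun ω => ‖a‖ ^ 2 - 2 * s * ⟪a, H ω - c⟫) μP :=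
    (integrable_const _).sub (hinner.const_mul _)
  have hi2 : Integrable (fun ω => s ^ 2 * ‖H ω - c‖ ^ 2) μP := hsq.const_mul _
  have hptw : ∀ ω, ‖a - s • H ω + s • c‖ ^ 2
      = ‖a‖ ^ 2 - 2 * s * ⟪a, H ω - c⟫ + s ^ 2 * ‖H ω - c‖ ^ 2 := by
    intro ω
    have h1 : a - s • H ω + s • c = a - s • (H ω - c) := by
      rw [smul_sub]; abel
    rw [h1, norm_sub_sq_real, real_inner_smul_right, norm_smul, mul_pow]
    simp [Real.norm_eq_abs, sq_abs]
    ring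
  calc ∫ ω, ‖a - s • H ω + s • c‖ ^ 2 ∂μP
      = ∫ ω, (‖a‖ ^ 2 - 2 * s * ⟪a, H ω - c⟫ + s ^ 2 * ‖H ω - c‖ ^ 2) ∂μP :=
        integral_congr_ae (Filter.Eventually.of_forall hptw)
    _ = (∫ ω, (‖a‖ ^ 2 - 2 * s * ⟪a, H ω - c⟫) ∂μP) + ∫ ω, s ^ 2 * ‖H ω - c‖ ^ 2 ∂μP :=
        integral_add hi1 hi2
    _ = ‖a‖ ^ 2 - 2 * s * ⟪a, (∫ ω, H ω ∂μP) - c⟫ + s ^ 2 * ∫ ω, ‖H ω - c‖ ^ 2 ∂μP := by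
        rw [integral_sub (integrable_const _) (hinner.const_mul _), integral_const,
          integral_const_mul, integral_const_mul, integral_inner hint a,
          integral_sub (hH.integrable one_le_two) (integrable_const c), integral_const]
        simp

lemma three_sq {u v w : Ω → E} (hu : MemLp u 2 μP) (hv : MemLp v 2 μP) (hw : MemLp w 2 μP) :
    ∫ ω, ‖u ω + v ω + w ω‖ ^ 2 ∂μP ≤
      4 * ∫ ω, ‖u ω‖ ^ 2 ∂μP + 4 * ∫ ω, ‖v ω‖ ^ 2 ∂μP + 2 * ∫ ω, ‖w ω‖ ^ 2 ∂μP := by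
  have hsum : MemLp (fun ω => u ω + v ω + w ω) 2 μP := (hu.add hv).add hw
  have hiu : Integrable (fun ω => ‖u ω‖ ^ 2) μP := sq_norm_integrable hu
  have hiv : Integrable (fun ω => ‖v ω‖ ^ 2) μP := sq_norm_integrable hv
  have hiw : Integrable (fun ω => ‖w ω‖ ^ 2) μP := sq_norm_integrable hw
  have hi1 : Integrable (fun ω => 4 * ‖u ω‖ ^ 2 + 4 * ‖v ω‖ ^ 2) μP :=
    (hiu.const_mul _).add (hiv.const_mul _)
  have hi2 : Integrable (fun ω => 4 * ‖u ω‖ ^ 2 + 4 * ‖v ω‖ ^ 2 + 2 * ‖w ω‖ ^ 2) μP :=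
    hi1.add (hiw.const_mul _)
  have h1 : ∫ ω, ‖u ω + v ω + w ω‖ ^ 2 ∂μP
      ≤ ∫ ω, (4 * ‖u ω‖ ^ 2 + 4 * ‖v ω‖ ^ 2 + 2 * ‖w ω‖ ^ 2) ∂μP := by
    refine integral_mono (sq_norm_integrable hsum) hi2 ?_
    intro ω
    have t1 : ‖u ω + v ω + w ω‖ ≤ ‖u ω + v ω‖ + ‖w ω‖ := norm_add_le _ _
    have t2 : ‖u ω + v ω‖ ≤ ‖u ω‖ + ‖v ω‖ := norm_add_le _ _
    have s1 : ‖u ω + v ω + w ω‖ ^ 2 ≤ (‖u ω + v ω‖ + ‖w ω‖) ^ 2 :=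
      pow_le_pow_left₀ (norm_nonneg _) t1 2
    have s2 : ‖u ω + v ω‖ ^ 2 ≤ (‖u ω‖ + ‖v ω‖) ^ 2 :=
      pow_le_pow_left₀ (norm_nonneg _) t2 2
    simp only
    nlinarith [sq_nonneg (‖u ω‖ - ‖v ω‖), sq_nonneg (‖u ω + v ω‖ - ‖w ω‖)]
  calc ∫ ω, ‖u ω + v ω + w ω‖ ^ 2 ∂μP
      ≤ ∫ ω, (4 * ‖u ω‖ ^ 2 + 4 * ‖v ω‖ ^ 2 + 2 * ‖w ω‖ ^ 2) ∂μP := h1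
    _ = (∫ ω, (4 * ‖u ω‖ ^ 2 + 4 * ‖v ω‖ ^ 2) ∂μP) + ∫ ω, 2 * ‖w ω‖ ^ 2 ∂μP :=
        integral_add hi1 (hiw.const_mul _)
    _ = 4 * ∫ ω, ‖u ω‖ ^ 2 ∂μP + 4 * ∫ ω, ‖v ω‖ ^ 2 ∂μP + 2 * ∫ ω, ‖w ω‖ ^ 2 ∂μP := by
        rw [integral_add (hiu.const_mul _) (hiv.const_mul _),
          integral_const_mul, integral_const_mul, integral_const_mul]


lemma per_index (Gt Gm Gs : Ω → E)
    (hGt : MemLp Gt 2 μP) (hGm : MemLp Gm 2 μP) (hGs : MemLp Gs 2 μP)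
    (nt cs p q : E) (A B C D ny σ L1 L2 μ0 s : ℝ)
    (hmean : ∫ ω, Gt ω ∂μP = nt)
    (hsm : ∫ ω, ‖Gm ω - Gt ω‖ ^ 2 ∂μP ≤ 2 * L1 * (B - A - ⟪nt, q - p⟫))
    (hcross : ∫ ω, ‖Gm ω - Gs ω‖ ^ 2 ∂μP ≤ L2 ^ 2 * ny)
    (hvar : ∫ ω, ‖Gs ω - cs‖ ^ 2 ∂μP ≤ σ ^ 2)
    (hsc : D + ⟪cs, p - q⟫ + μ0 / 2 * ‖p - q‖ ^ 2 ≤ C)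
    (hs : 0 < s) :
    ∫ ω, ‖p - q - s • Gt ω + s • cs‖ ^ 2 ∂μP ≤
      (1 - μ0 * s) * ‖p - q‖ ^ 2 + 4 * s ^ 2 * L2 ^ 2 * ny
        - (2 * s - 8 * s ^ 2 * L1) * (B - A - ⟪nt, q - p⟫)
        + 2 * s * (C - D + B - A) + 2 * s ^ 2 * σ ^ 2 := by
  set V : ℝ := B - A - ⟪nt, q - p⟫ with hV
  have hexp := expand_sq Gt hGt (p - q) cs s
  rw [hmean] at hexp
  -- second-moment bound
  have hQ : ∫ ω, ‖Gt ω - cs‖ ^ 2 ∂μP ≤ 8 * L1 * V + 4 * L2 ^ 2 * ny + 2 * σ ^ 2 := by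
    have hu : MemLp (fun ω => Gt ω - Gm ω) 2 μP := hGt.sub hGm
    have hv : MemLp (fun ω => Gm ω - Gs ω) 2 μP := hGm.sub hGs
    have hw : MemLp (fun ω => Gs ω - cs) 2 μP := hGs.sub (memLp_const cs)
    have h3 := three_sq (μP := μP) hu hv hw
    have heq : ∫ ω, ‖Gt ω - cs‖ ^ 2 ∂μP
        = ∫ ω, ‖(Gt ω - Gm ω) + (Gm ω - Gs ω) + (Gs ω - cs)‖ ^ 2 ∂μP := by
      apply integral_congr_ae; filter_upwards with ω
      congr 1
      rw [sub_add_sub_cancel, sub_add_sub_cancel]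
    have hflip : ∫ ω, ‖Gt ω - Gm ω‖ ^ 2 ∂μP = ∫ ω, ‖Gm ω - Gt ω‖ ^ 2 ∂μP := by
      apply integral_congr_ae; filter_upwards with ω
      rw [norm_sub_rev]
    rw [heq]
    rw [hflip] at h3
    linarith
  -- inner product identity
  have hip : ⟪p - q, nt - cs⟫ = (A - B + V) - ⟪cs, p - q⟫ := by
    rw [inner_sub_right]
    have h1 : ⟪p - q, nt⟫ = -⟪nt, q - p⟫ := by
      rw [real_inner_comm, show q - p = -(p - q) by abel, inner_neg_right, neg_neg]
    have h2 : ⟪p - q, cs⟫ = ⟪cs, p - q⟫ := real_inner_comm _ _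
    rw [h1, h2, hV]; ring
  have hcs : ⟪cs, p - q⟫ ≤ C - D - μ0 / 2 * ‖p - q‖ ^ 2 := by linarith
  rw [hexp, hip]
  have h4 : s ^ 2 * ∫ ω, ‖Gt ω - cs‖ ^ 2 ∂μP
      ≤ s ^ 2 * (8 * L1 * V + 4 * L2 ^ 2 * ny + 2 * σ ^ 2) :=
    mul_le_mul_of_nonneg_left hQ (sq_nonneg s)
  have h5 : 2 * s * ⟪cs, p - q⟫ ≤ 2 * s * (C - D - μ0 / 2 * ‖p - q‖ ^ 2) :=
    mul_le_mul_of_nonneg_left hcs (by positivity)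
  nlinarith [h4, h5]

end Helpers


/-- One-step stochastic-gradient bounds. -/
theorem one_step_stochastic_gradient_bounds {dx dy m : ℕ}
    {Ω : Type*} [MeasurableSpace Ω] (μP : Measure Ω) [IsProbabilityMeasure μP]
    (f : Fin m → EuclideanSpace ℝ (Fin dx) → EuclideanSpace ℝ (Fin dy) → ℝ)
    (hdx : ∀ i y, Differentiable ℝ (fun x => f i x y))
    (hdy : ∀ i x, Differentiable ℝ (fun y => f i x y))
    (μx μy : ℝ)
    -- strong convexity in x and strong concavity in y of each `f_i`
    (hsc : ∀ i y x₁ x₂, f i x₂ y + ⟪gradient (fun x => f i x y) x₂, x₁ - x₂⟫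
        + μx / 2 * ‖x₁ - x₂‖ ^ 2 ≤ f i x₁ y)
    (hscc : ∀ i x y₁ y₂, f i x y₁ ≤ f i x y₂ + ⟪gradient (fun y => f i x y) y₂, y₁ - y₂⟫
        - μy / 2 * ‖y₁ - y₂‖ ^ 2)
    -- stochastic gradient oracles
    (gx : Fin m → EuclideanSpace ℝ (Fin dx) → EuclideanSpace ℝ (Fin dy) → Ω →
        EuclideanSpace ℝ (Fin dx))
    (gy : Fin m → EuclideanSpace ℝ (Fin dx) → EuclideanSpace ℝ (Fin dy) → Ω →
        EuclideanSpace ℝ (Fin dy))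
    (hgxL2 : ∀ i x y, MemLp (gx i x y) 2 μP)
    (hgyL2 : ∀ i x y, MemLp (gy i x y) 2 μP)
    -- unbiasedness
    (hgxu : ∀ i x y, ∫ ω, gx i x y ω ∂μP = gradient (fun x' => f i x' y) x)
    (hgyu : ∀ i x y, ∫ ω, gy i x y ω ∂μP = gradient (fun y' => f i x y') y)
    -- variance bounds at the saddle point `z⋆ = (x⋆, y⋆)`
    (xs : EuclideanSpace ℝ (Fin dx)) (ys : EuclideanSpace ℝ (Fin dy)) (σx σy : ℝ)
    (hvarx : ∀ i, ∫ ω, ‖gx i xs ys ω - gradient (fun x' => f i x' ys) xs‖ ^ 2 ∂μP ≤ σx ^ 2)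
    (hvary : ∀ i, ∫ ω, ‖gy i xs ys ω - gradient (fun y' => f i xs y') ys‖ ^ 2 ∂μP ≤ σy ^ 2)
    -- expected smoothness and cross-Lipschitz bounds
    (Lxx Lyy Lxy Lyx : ℝ)
    (hsmx : ∀ i y x₁ x₂, ∫ ω, ‖gx i x₁ y ω - gx i x₂ y ω‖ ^ 2 ∂μP ≤
        2 * Lxx * (f i x₁ y - f i x₂ y - ⟪gradient (fun x => f i x y) x₂, x₁ - x₂⟫))
    (hsmy : ∀ i x y₁ y₂, ∫ ω, ‖gy i x y₁ ω - gy i x y₂ ω‖ ^ 2 ∂μP ≤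
        2 * Lyy * (-(f i x y₁) + f i x y₂ + ⟪gradient (fun y => f i x y) y₂, y₁ - y₂⟫))
    (hcrossx : ∀ i x y₁ y₂, ∫ ω, ‖gx i x y₁ ω - gx i x y₂ ω‖ ^ 2 ∂μP ≤
        Lxy ^ 2 * ‖y₁ - y₂‖ ^ 2)
    (hcrossy : ∀ i y x₁ x₂, ∫ ω, ‖gy i x₁ y ω - gy i x₂ y ω‖ ^ 2 ∂μP ≤
        Lyx ^ 2 * ‖x₁ - x₂‖ ^ 2)
    -- deterministic stacked iterates
    (xt : Fin m → EuclideanSpace ℝ (Fin dx)) (yt : Fin m → EuclideanSpace ℝ (Fin dy))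
    (s : ℝ) (hs : 0 < s) :
    (∫ ω, ∑ i, ‖xt i - xs - s • gx i (xt i) (yt i) ω
          + s • gradient (fun x' => f i x' ys) xs‖ ^ 2 ∂μP ≤
        (1 - μx * s) * ∑ i, ‖xt i - xs‖ ^ 2
          + 4 * s ^ 2 * Lxy ^ 2 * ∑ i, ‖yt i - ys‖ ^ 2
          - (2 * s - 8 * s ^ 2 * Lxx) *
              ∑ i, (f i xs (yt i) - f i (xt i) (yt i)
                - ⟪gradient (fun x => f i x (yt i)) (xt i), xs - xt i⟫)
          + 2 * s * ((∑ i, f i (xt i) ys) - (∑ i, f i xs ys)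
              + (∑ i, f i xs (yt i)) - ∑ i, f i (xt i) (yt i))
          + 2 * (m : ℝ) * s ^ 2 * σx ^ 2) ∧
      (∫ ω, ∑ i, ‖yt i - ys + s • gy i (xt i) (yt i) ω
          - s • gradient (fun y' => f i xs y') ys‖ ^ 2 ∂μP ≤
        (1 - μy * s) * ∑ i, ‖yt i - ys‖ ^ 2
          + 4 * s ^ 2 * Lyx ^ 2 * ∑ i, ‖xt i - xs‖ ^ 2
          - (2 * s - 8 * s ^ 2 * Lyy) *
              ∑ i, (-(f i (xt i) ys) + f i (xt i) (yt i)
                + ⟪gradient (fun y => f i (xt i) y) (yt i), ys - yt i⟫)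
          + 2 * s * (-(∑ i, f i (xt i) ys) + (∑ i, f i xs ys)
              - (∑ i, f i xs (yt i)) + ∑ i, f i (xt i) (yt i))
          + 2 * (m : ℝ) * s ^ 2 * σy ^ 2) := by
  constructor
  · -- primal bound
    have key : ∀ i : Fin m, ∫ ω, ‖xt i - xs - s • gx i (xt i) (yt i) ω
          + s • gradient (fun x' => f i x' ys) xs‖ ^ 2 ∂μP ≤
        (1 - μx * s) * ‖xt i - xs‖ ^ 2 + 4 * s ^ 2 * Lxy ^ 2 * ‖yt i - ys‖ ^ 2
          - (2 * s - 8 * s ^ 2 * Lxx) * (f i xs (yt i) - f i (xt i) (yt i)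
              - ⟪gradient (fun x => f i x (yt i)) (xt i), xs - xt i⟫)
          + 2 * s * (f i (xt i) ys - f i xs ys + f i xs (yt i) - f i (xt i) (yt i))
          + 2 * s ^ 2 * σx ^ 2 := by
      intro i
      exact per_index (gx i (xt i) (yt i)) (gx i xs (yt i)) (gx i xs ys)
        (hgxL2 i _ _) (hgxL2 i _ _) (hgxL2 i _ _)
        (gradient (fun x => f i x (yt i)) (xt i)) (gradient (fun x' => f i x' ys) xs)
        (xt i) xs
        (f i (xt i) (yt i)) (f i xs (yt i)) (f i (xt i) ys) (f i xs ys)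
        (‖yt i - ys‖ ^ 2) σx Lxx Lxy μx s
        (hgxu i (xt i) (yt i)) (hsmx i (yt i) xs (xt i)) (hcrossx i xs (yt i) ys)
        (hvarx i) (hsc i ys (xt i) xs) hs
    have hint : ∀ i : Fin m, Integrable (fun ω => ‖xt i - xs - s • gx i (xt i) (yt i) ω
        + s • gradient (fun x' => f i x' ys) xs‖ ^ 2) μP := by
      intro i
      refine sq_norm_integrable ?_
      exact ((memLp_const _).sub ((hgxL2 i _ _).const_smul s)).add (memLp_const _)
    calc ∫ ω, ∑ i, ‖xt i - xs - s • gx i (xt i) (yt i) ω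
            + s • gradient (fun x' => f i x' ys) xs‖ ^ 2 ∂μP
        = ∑ i, ∫ ω, ‖xt i - xs - s • gx i (xt i) (yt i) ω
            + s • gradient (fun x' => f i x' ys) xs‖ ^ 2 ∂μP :=
          integral_finset_sum _ (fun i _ => hint i)
      _ ≤ ∑ i : Fin m, ((1 - μx * s) * ‖xt i - xs‖ ^ 2 + 4 * s ^ 2 * Lxy ^ 2 * ‖yt i - ys‖ ^ 2
          - (2 * s - 8 * s ^ 2 * Lxx) * (f i xs (yt i) - f i (xt i) (yt i)
              - ⟪gradient (fun x => f i x (yt i)) (xt i), xs - xt i⟫)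
          + 2 * s * (f i (xt i) ys - f i xs ys + f i xs (yt i) - f i (xt i) (yt i))
          + 2 * s ^ 2 * σx ^ 2) := Finset.sum_le_sum (fun i _ => key i)
      _ = _ := by
          simp only [Finset.sum_add_distrib, Finset.sum_sub_distrib, Finset.sum_neg_distrib, ← Finset.mul_sum,
            Finset.sum_const, Finset.card_univ, Fintype.card_fin, nsmul_eq_mul]
          ring
  · -- dual bound
    have key : ∀ i : Fin m, ∫ ω, ‖yt i - ys + s • gy i (xt i) (yt i) ω
          - s • gradient (fun y' => f i xs y') ys‖ ^ 2 ∂μP ≤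
        (1 - μy * s) * ‖yt i - ys‖ ^ 2 + 4 * s ^ 2 * Lyx ^ 2 * ‖xt i - xs‖ ^ 2
          - (2 * s - 8 * s ^ 2 * Lyy) * (-(f i (xt i) ys) + f i (xt i) (yt i)
              + ⟪gradient (fun y => f i (xt i) y) (yt i), ys - yt i⟫)
          + 2 * s * (-(f i (xt i) ys) + f i xs ys - f i xs (yt i) + f i (xt i) (yt i))
          + 2 * s ^ 2 * σy ^ 2 := by
      intro i
      set cy := gradient (fun y' => f i xs y') ys with hcy
      set nyt := gradient (fun y => f i (xt i) y) (yt i) with hnyt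
      have hGt : MemLp (fun ω => -(gy i (xt i) (yt i) ω)) 2 μP := (hgyL2 i _ _).neg
      have hGm : MemLp (fun ω => -(gy i (xt i) ys ω)) 2 μP := (hgyL2 i _ _).neg
      have hGs : MemLp (fun ω => -(gy i xs ys ω)) 2 μP := (hgyL2 i _ _).neg
      have hmean' : ∫ ω, -(gy i (xt i) (yt i) ω) ∂μP = -nyt := by
        rw [integral_neg, hgyu i (xt i) (yt i)]
      have hsm' : ∫ ω, ‖-(gy i (xt i) ys ω) - -(gy i (xt i) (yt i) ω)‖ ^ 2 ∂μP ≤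
          2 * Lyy * ((-(f i (xt i) ys)) - (-(f i (xt i) (yt i))) - ⟪-nyt, ys - yt i⟫) := by
        calc ∫ ω, ‖-(gy i (xt i) ys ω) - -(gy i (xt i) (yt i) ω)‖ ^ 2 ∂μP
            = ∫ ω, ‖gy i (xt i) ys ω - gy i (xt i) (yt i) ω‖ ^ 2 ∂μP := by
              apply integral_congr_ae; filter_upwards with ω
              rw [neg_sub_neg, norm_sub_rev]
          _ ≤ 2 * Lyy * (-(f i (xt i) ys) + f i (xt i) (yt i) + ⟪nyt, ys - yt i⟫) :=
              hsmy i (xt i) ys (yt i)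
          _ = 2 * Lyy * ((-(f i (xt i) ys)) - (-(f i (xt i) (yt i))) - ⟪-nyt, ys - yt i⟫) := by
              rw [inner_neg_left]; ring
      have hcross' : ∫ ω, ‖-(gy i (xt i) ys ω) - -(gy i xs ys ω)‖ ^ 2 ∂μP ≤
          Lyx ^ 2 * ‖xt i - xs‖ ^ 2 := by
        calc ∫ ω, ‖-(gy i (xt i) ys ω) - -(gy i xs ys ω)‖ ^ 2 ∂μP
            = ∫ ω, ‖gy i (xt i) ys ω - gy i xs ys ω‖ ^ 2 ∂μP := by
              apply integral_congr_ae; filter_upwards with ω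
              rw [neg_sub_neg, norm_sub_rev]
          _ ≤ Lyx ^ 2 * ‖xt i - xs‖ ^ 2 := hcrossy i ys (xt i) xs
      have hvar' : ∫ ω, ‖-(gy i xs ys ω) - -cy‖ ^ 2 ∂μP ≤ σy ^ 2 := by
        calc ∫ ω, ‖-(gy i xs ys ω) - -cy‖ ^ 2 ∂μP
            = ∫ ω, ‖gy i xs ys ω - cy‖ ^ 2 ∂μP := by
              apply integral_congr_ae; filter_upwards with ω
              rw [neg_sub_neg, norm_sub_rev]
          _ ≤ σy ^ 2 := hvary i
      have hsc' : (-(f i xs ys)) + ⟪-cy, yt i - ys⟫ + μy / 2 * ‖yt i - ys‖ ^ 2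
          ≤ -(f i xs (yt i)) := by
        have := hscc i xs (yt i) ys
        rw [inner_neg_left]
        linarith
      have hper := per_index (fun ω => -(gy i (xt i) (yt i) ω)) (fun ω => -(gy i (xt i) ys ω))
        (fun ω => -(gy i xs ys ω)) hGt hGm hGs (-nyt) (-cy) (yt i) ys
        (-(f i (xt i) (yt i))) (-(f i (xt i) ys)) (-(f i xs (yt i))) (-(f i xs ys))
        (‖xt i - xs‖ ^ 2) σy Lyy Lyx μy s
        hmean' hsm' hcross' hvar' hsc' hs
      calc ∫ ω, ‖yt i - ys + s • gy i (xt i) (yt i) ω - s • cy‖ ^ 2 ∂μP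
          = ∫ ω, ‖yt i - ys - s • -(gy i (xt i) (yt i) ω) + s • -cy‖ ^ 2 ∂μP := by
            apply integral_congr_ae; filter_upwards with ω
            rw [smul_neg, smul_neg, sub_neg_eq_add, ← sub_eq_add_neg]
        _ ≤ (1 - μy * s) * ‖yt i - ys‖ ^ 2 + 4 * s ^ 2 * Lyx ^ 2 * ‖xt i - xs‖ ^ 2
            - (2 * s - 8 * s ^ 2 * Lyy) *
                ((-(f i (xt i) ys)) - (-(f i (xt i) (yt i))) - ⟪-nyt, ys - yt i⟫)
            + 2 * s * ((-(f i xs (yt i))) - (-(f i xs ys)) + (-(f i (xt i) ys))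
                - (-(f i (xt i) (yt i)))) + 2 * s ^ 2 * σy ^ 2 := hper
        _ = (1 - μy * s) * ‖yt i - ys‖ ^ 2 + 4 * s ^ 2 * Lyx ^ 2 * ‖xt i - xs‖ ^ 2
            - (2 * s - 8 * s ^ 2 * Lyy) * (-(f i (xt i) ys) + f i (xt i) (yt i)
                + ⟪nyt, ys - yt i⟫)
            + 2 * s * (-(f i (xt i) ys) + f i xs ys - f i xs (yt i) + f i (xt i) (yt i))
            + 2 * s ^ 2 * σy ^ 2 := by
            rw [inner_neg_left]; ring
    have hint : ∀ i : Fin m, Integrable (fun ω => ‖yt i - ys + s • gy i (xt i) (yt i) ω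
        - s • gradient (fun y' => f i xs y') ys‖ ^ 2) μP := by
      intro i
      refine sq_norm_integrable ?_
      exact (((memLp_const (yt i - ys)).add ((hgyL2 i (xt i) (yt i)).const_smul s)).sub
        (memLp_const (s • gradient (fun y' => f i xs y') ys)))
    calc ∫ ω, ∑ i, ‖yt i - ys + s • gy i (xt i) (yt i) ω
            - s • gradient (fun y' => f i xs y') ys‖ ^ 2 ∂μP
        = ∑ i, ∫ ω, ‖yt i - ys + s • gy i (xt i) (yt i) ω
            - s • gradient (fun y' => f i xs y') ys‖ ^ 2 ∂μP :=
          integral_finset_sum _ (fun i _ => hint i)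
      _ ≤ ∑ i : Fin m, ((1 - μy * s) * ‖yt i - ys‖ ^ 2 + 4 * s ^ 2 * Lyx ^ 2 * ‖xt i - xs‖ ^ 2
          - (2 * s - 8 * s ^ 2 * Lyy) * (-(f i (xt i) ys) + f i (xt i) (yt i)
              + ⟪gradient (fun y => f i (xt i) y) (yt i), ys - yt i⟫)
          + 2 * s * (-(f i (xt i) ys) + f i xs ys - f i xs (yt i) + f i (xt i) (yt i))
          + 2 * s ^ 2 * σy ^ 2) := Finset.sum_le_sum (fun i _ => key i)
      _ = _ := by
          simp only [Finset.sum_add_distrib, Finset.sum_sub_distrib, Finset.sum_neg_distrib, ← Finset.mul_sum,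
            Finset.sum_const, Finset.card_univ, Fintype.card_fin, nsmul_eq_mul]
          ring
end

section
/- Contraction-factor inequality for the compression parameters (C-RDPSG version). Let δ ∈ [0,1] and b ∈ (0,1), and set M := 1 − (√δ·b/(1+δ)) / (1 − b/(4(1+δ)²)). Then M ∈ (0,1], and (1−b)/M ≤ 1 − (1 − √δ/(1+δ))·b ≤ 1 − b/2 < 1. -/
/-- Contraction-factor inequality for the C-RDPSG compression parameters: for `δ ∈ [0,1]`,
`b ∈ (0,1)` and `M = 1 - (√δ b/(1+δ))/(1 - b/(4(1+δ)²))`, one has `M ∈ (0,1]` and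
`(1-b)/M ≤ 1 - (1 - √δ/(1+δ)) b ≤ 1 - b/2 < 1`. -/
theorem contraction_factor_crdpsg
    (δ b : ℝ) (hδ : δ ∈ Set.Icc (0 : ℝ) 1) (hb : b ∈ Set.Ioo (0 : ℝ) 1)
    (M : ℝ) (hM : M = 1 - (Real.sqrt δ * b / (1 + δ)) / (1 - b / (4 * (1 + δ) ^ 2))) :
    M ∈ Set.Ioc (0 : ℝ) 1 ∧
      (1 - b) / M ≤ 1 - (1 - Real.sqrt δ / (1 + δ)) * b ∧
      1 - (1 - Real.sqrt δ / (1 + δ)) * b ≤ 1 - b / 2 ∧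
      1 - b / 2 < 1 := by
  obtain ⟨hδ0, hδ1⟩ := hδ
  obtain ⟨hb0, hb1⟩ := hb
  set s := Real.sqrt δ with hs
  have hs0 : 0 ≤ s := Real.sqrt_nonneg δ
  have hs2 : s ^ 2 = δ := Real.sq_sqrt hδ0
  have h1δ : (0:ℝ) < 1 + δ := by linarith
  have h2s : 2 * s ≤ 1 + δ := by nlinarith [sq_nonneg (s - 1)]
  have hq : (0:ℝ) < 4 * (1 + δ) ^ 2 := by positivity
  have hfrac : b / (4 * (1 + δ) ^ 2) < 1/4 := by
    rw [div_lt_iff₀ hq]; nlinarith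
  have hfrac0 : 0 ≤ b / (4 * (1 + δ) ^ 2) := by positivity
  have hD : (0:ℝ) < 1 - b / (4 * (1 + δ) ^ 2) := by linarith
  have ht : s * b / (1 + δ) ≤ b / 2 := by
    rw [div_le_iff₀ h1δ]; nlinarith
  have ht0 : 0 ≤ s * b / (1 + δ) := by positivity
  have hND : s * b / (1 + δ) < 1 - b / (4 * (1 + δ) ^ 2) := by linarith
  have hM0 : 0 < M := by
    rw [hM]
    have : (s * b / (1 + δ)) / (1 - b / (4 * (1 + δ) ^ 2)) < 1 :=
      (div_lt_one hD).mpr hND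
    linarith
  have hM1 : M ≤ 1 := by
    rw [hM]
    have : 0 ≤ (s * b / (1 + δ)) / (1 - b / (4 * (1 + δ) ^ 2)) := div_nonneg ht0 hD.le
    linarith
  have hst : s / (1 + δ) ≤ 1/2 := by
    rw [div_le_iff₀ h1δ]; linarith
  have hst0 : 0 ≤ s / (1 + δ) := by positivity
  refine ⟨⟨hM0, hM1⟩, ?_, ?_, by linarith⟩
  · rw [div_le_iff₀ hM0, hM]
    have hkey : 1 - b / (4 * (1 + δ) ^ 2) ≥ 1 - b + s / (1 + δ) * b := by
      have h14 : b / (4 * (1 + δ) ^ 2) ≤ b / 4 := by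
        apply div_le_div_of_nonneg_left hb0.le (by norm_num) ?_
        nlinarith
      nlinarith [mul_le_mul_of_nonneg_right hst hb0.le]
    have hne : (1 - b / (4 * (1 + δ) ^ 2)) ≠ 0 := ne_of_gt hD
    have expand : s * b / (1 + δ) = (s / (1 + δ)) * b := by ring
    rw [expand]
    set t := s / (1 + δ) with htdef
    set D := 1 - b / (4 * (1 + δ) ^ 2) with hDdef
    have ht12 : t ≤ 1/2 := hst
    have ht0' : 0 ≤ t := hst0
    -- goal: 1 - b ≤ (1 - (1 - t)*b) * (1 - t*b/D)
    have hdiv : t * b / D ≤ t * b / (1 - b + t * b) ∨ True := Or.inr trivial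
    have h1 : (1 - (1 - t)*b) * (1 - t*b/D) - (1 - b) = t*b * ((D - (1 - b + t*b))/D) := by
      field_simp
      ring
    nlinarith [mul_nonneg (mul_nonneg ht0' hb0.le)
        (div_nonneg (by linarith : (0:ℝ) ≤ D - (1 - b + t*b)) hD.le), h1]
  · nlinarith [mul_le_mul_of_nonneg_right hst hb0.le]
end

section
/- One-step SVRG-oracle bound (Lemma for the finite-sum setting). For i = 1,…,m and j = 1,…,n let f_{ij} : ℝ^{d_x} × ℝ^{d_y} → ℝ be differentiable with f_{ij}(·,y) convex and ∇_x f_{ij}(·,y) L_xx-Lipschitz, f_{ij}(x,·) concave and ∇_y f_{ij}(x,·) L_yy-Lipschitz, ∇_x f_{ij}(x,·) L_xy-Lipschitz in y and ∇_y f_{ij}(·,y) L_yx-Lipschitz in x; set f_i := (1/n)Σ_j f_{ij} and assume each f_i is μ_x-strongly convex in x and μ_y-strongly concave in y. Let p_{i1},…,p_{in} > 0 with Σ_j p_{ij} = 1 for each i and p_min := min_{i,j} p_{ij}. Fix a point z⋆ = (x⋆,y⋆), deterministic stacked iterates x_t ∈ ℝ^{md_x}, y_t ∈ ℝ^{md_y}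 with blocks z^i_t = (x^i_t, y^i_t), and deterministic reference points z̃^i_t = (x̃^i_t, ỹ^i_t). Independently for each node i sample an index l_i ∈ {1,…,n} with P(l_i = j) = p_{ij}, and define the SVRG gradients G^{i,x} := (1/(n p_{i l_i}))·(∇_x f_{i l_i}(z^i_t) − ∇_x f_{i l_i}(z̃^i_t)) + ∇_x f_i(z̃^i_t) and G^{i,y} := (1/(n p_{i l_i}))·(∇_y f_{i l_i}(z^i_t) − ∇_y f_{i l_i}(z̃^i_t)) + ∇_y f_i(z̃^i_t), with stacked vectors G^x, G^y. Then for every s > 0: E‖x_t − 𝟙x⋆ − sG^x + s∇_x F(𝟙x⋆,𝟙y⋆)‖² + E‖y_t − 𝟙y⋆ + sG^y − s∇_y F(𝟙x⋆,𝟙y⋆)‖² ≤ (1 − μ_x s + 4s²L_yx²/(np_min))·‖x_t − 𝟙x⋆‖² + (1 − μ_y s + 4s²L_xy²/(np_min))·‖y_t − 𝟙y⋆‖² − (2s − 8s²L_xx/(np_min))·Σᵢ V_{f_i,y^i_t}(x⋆,x^i_t) − (2s − 8s²L_yy/(np_min))·Σᵢ V_{−f_i,x^i_t}(y⋆,y^i_t)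 + (4s²(L_xx² + L_yx²)/(np_min))·‖x̃_t − 𝟙x⋆‖² + (4s²(L_yy² + L_xy²)/(np_min))·‖ỹ_t − 𝟙y⋆‖². -/
open MeasureTheory RealInnerProductSpace

section SVRGHelpers

variable {E : Type*} [NormedAddCommGroup E] [InnerProductSpace ℝ E] [CompleteSpace E]

lemma grad_inner_eq (f : E → ℝ) (hd : Differentiable ℝ f) (x v : E) :
    ⟪gradient f x, v⟫ = fderiv ℝ f x v := by
  have h := (hd x).hasGradientAt
  rw [hasGradientAt_iff_hasFDerivAt] at h
  rw [h.fderiv]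
  simp [InnerProductSpace.toDual_apply_apply]

lemma hasDerivAt_line (f : E → ℝ) (hd : Differentiable ℝ f) (x y : E) (t : ℝ) :
    HasDerivAt (fun t : ℝ => f (x + t • (y - x))) ⟪gradient f (x + t • (y - x)), y - x⟫ t := by
  have hline : HasDerivAt (fun t : ℝ => x + t • (y - x)) (y - x) t := by
    simpa using ((hasDerivAt_id t).smul_const (y - x)).const_add x
  have h := (hd (x + t • (y - x))).hasGradientAt
  rw [hasGradientAt_iff_hasFDerivAt] at h
  have := h.comp_hasDerivAt t hline
  simpa [InnerProductSpace.toDual_apply_apply, Function.comp_def] using this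

lemma support_ineq (f : E → ℝ) (hd : Differentiable ℝ f) (hc : ConvexOn ℝ Set.univ f)
    (x y : E) : f x + ⟪gradient f x, y - x⟫ ≤ f y := by
  have hg : ConvexOn ℝ Set.univ (fun t : ℝ => f (x + t • (y - x))) := by
    have := hc.comp_affineMap (AffineMap.lineMap x y)
    have he : (fun t : ℝ => f (x + t • (y - x))) = (f ∘ (AffineMap.lineMap x y)) := by
      funext t; rw [Function.comp_apply, AffineMap.lineMap_apply]
      norm_num [add_comm]
    rw [he]
    simpa using this
  have hderiv := hasDerivAt_line f hd x y 0
  simp only [zero_smul, add_zero] at hderiv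
  have := hg.le_slope_of_hasDerivAt (Set.mem_univ (0:ℝ)) (Set.mem_univ (1:ℝ)) one_pos hderiv
  rw [slope_def_field] at this
  simp at this
  have h2 := grad_inner_eq f hd x (y - x)
  rw [map_sub] at h2
  linarith

lemma descent_lemma (f : E → ℝ) (hd : Differentiable ℝ f) {L : ℝ}
    (hL : ∀ a b, ‖gradient f a - gradient f b‖ ≤ L * ‖a - b‖) (x y : E) :
    f y ≤ f x + ⟪gradient f x, y - x⟫ + L / 2 * ‖y - x‖ ^ 2 := by
  set g' : ℝ → ℝ := fun t => ⟪gradient f (x + t • (y - x)), y - x⟫ with hg'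
  have hgrad_cont : Continuous (gradient f) := by
    have : LipschitzWith (Real.toNNReal |L|) (gradient f) := by
      apply LipschitzWith.of_dist_le_mul
      intro a b
      rw [dist_eq_norm, dist_eq_norm]
      calc ‖gradient f a - gradient f b‖ ≤ L * ‖a - b‖ := hL a b
        _ ≤ |L| * ‖a - b‖ := by
            apply mul_le_mul_of_nonneg_right (le_abs_self L) (norm_nonneg _)
        _ = (Real.toNNReal |L|) * ‖a - b‖ := by
            rw [Real.coe_toNNReal _ (abs_nonneg L)]
    exact this.continuous
  have hcont : Continuous g' := by
    apply Continuous.inner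
    · exact hgrad_cont.comp (by continuity)
    · exact continuous_const
  have hftc : ∫ t in (0:ℝ)..1, g' t = f (x + (1:ℝ) • (y - x)) - f (x + (0:ℝ) • (y - x)) := by
    apply intervalIntegral.integral_eq_sub_of_hasDerivAt
      (f := fun t : ℝ => f (x + t • (y - x)))
    · intro t _
      exact hasDerivAt_line f hd x y t
    · exact (hcont.intervalIntegrable 0 1)
  have hbound : ∫ t in (0:ℝ)..1, g' t ≤ ∫ t in (0:ℝ)..1, (g' 0 + L * t * ‖y - x‖ ^ 2) := by
    apply intervalIntegral.integral_mono_on zero_le_one (hcont.intervalIntegrable 0 1)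
    · apply IntervalIntegrable.add intervalIntegrable_const
      apply Continuous.intervalIntegrable; continuity
    · intro t ht
      have h1 : g' t - g' 0 = ⟪gradient f (x + t • (y - x)) - gradient f x, y - x⟫ := by
        simp [hg', inner_sub_left]
      have h2 : ⟪gradient f (x + t • (y - x)) - gradient f x, y - x⟫
          ≤ L * t * ‖y - x‖ ^ 2 := by
        calc ⟪gradient f (x + t • (y - x)) - gradient f x, y - x⟫
            ≤ ‖gradient f (x + t • (y - x)) - gradient f x‖ * ‖y - x‖ :=
              real_inner_le_norm _ _
          _ ≤ (L * ‖(x + t • (y - x)) - x‖) * ‖y - x‖ := by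
              apply mul_le_mul_of_nonneg_right (hL _ _) (norm_nonneg _)
          _ = L * t * ‖y - x‖ ^ 2 := by
              rw [add_sub_cancel_left, norm_smul]
              simp [abs_of_nonneg ht.1]
              ring
      linarith
  have hint : ∫ t in (0:ℝ)..1, (g' 0 + L * t * ‖y - x‖ ^ 2)
      = g' 0 + L / 2 * ‖y - x‖ ^ 2 := by
    rw [intervalIntegral.integral_add intervalIntegrable_const
      (by apply Continuous.intervalIntegrable; continuity)]
    have : ∀ t : ℝ, L * t * ‖y - x‖ ^ 2 = (L * ‖y - x‖ ^ 2) * t := fun t => by ring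
    simp only [this]
    rw [intervalIntegral.integral_const_mul, integral_id]
    norm_num; ring
  have h0 : g' 0 = ⟪gradient f x, y - x⟫ := by simp [hg']
  simp only [one_smul, zero_smul, add_zero, add_sub_cancel] at hftc
  rw [h0] at hint
  rw [h0] at hbound
  rw [hftc] at hbound
  rw [hint] at hbound
  linarith

lemma grad_sub_linear (f : E → ℝ) (hd : Differentiable ℝ f) (c : E) (z : E) :
    HasGradientAt (fun w => f w - ⟪c, w⟫) (gradient f z - c) z := by
  rw [hasGradientAt_iff_hasFDerivAt]
  have h1 : HasFDerivAt f (InnerProductSpace.toDual ℝ E (gradient f z)) z :=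
    hasGradientAt_iff_hasFDerivAt.mp (hd z).hasGradientAt
  have h2 : HasFDerivAt (fun w : E => ⟪c, w⟫) (InnerProductSpace.toDual ℝ E c) z := by
    have := (InnerProductSpace.toDual ℝ E c).hasFDerivAt (x := z)
    exact this
  have := h1.sub h2
  rw [map_sub]
  exact this

lemma cocoercive (f : E → ℝ) (hd : Differentiable ℝ f) (hc : ConvexOn ℝ Set.univ f) {L : ℝ}
    (hL : ∀ a b, ‖gradient f a - gradient f b‖ ≤ L * ‖a - b‖) (a b : E) :
    ‖gradient f a - gradient f b‖ ^ 2 ≤ 2 * L * (f a - f b - ⟪gradient f b, a - b⟫) := by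
  rcases subsingleton_or_nontrivial E with hE | hE
  · have hab : a = b := Subsingleton.elim a b
    subst hab; simp
  have hL0 : 0 ≤ L := by
    obtain ⟨u, v, huv⟩ := exists_pair_ne E
    have h1 := hL u v
    have h2 : 0 < ‖u - v‖ := by
      rw [norm_pos_iff]; exact sub_ne_zero_of_ne huv
    nlinarith [norm_nonneg (gradient f u - gradient f v)]
  rcases eq_or_lt_of_le hL0 with hL0' | hLpos
  · have h1 := hL a b
    rw [← hL0'] at h1
    simp at h1
    have h2 : ‖gradient f a - gradient f b‖ = 0 := by rw [h1]; simp
    rw [h2, ← hL0']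
    have := support_ineq f hd hc b a
    nlinarith
  -- main case L > 0
  set φ : E → ℝ := fun w => f w - ⟪gradient f b, w⟫ with hφ
  have hdφ : Differentiable ℝ φ := by
    apply Differentiable.sub hd
    exact (InnerProductSpace.toDual ℝ E (gradient f b)).differentiable
  have hgradφ : ∀ z, gradient φ z = gradient f z - gradient f b :=
    fun z => (grad_sub_linear f hd (gradient f b) z).gradient
  have hcφ : ConvexOn ℝ Set.univ φ := by
    refine ⟨convex_univ, ?_⟩
    intro u _ v _ q r hq hr hqr
    have hcc := hc.2 (Set.mem_univ u) (Set.mem_univ v) hq hr hqr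
    simp only [hφ, smul_eq_mul] at *
    rw [inner_add_right, inner_smul_right, inner_smul_right]
    linarith
  have hLφ : ∀ u v, ‖gradient φ u - gradient φ v‖ ≤ L * ‖u - v‖ := by
    intro u v
    rw [hgradφ, hgradφ]
    simpa using hL u v
  -- b is a global min of φ
  have hmin : ∀ w, φ b ≤ φ w := by
    intro w
    have := support_ineq φ hdφ hcφ b w
    rw [hgradφ b] at this
    simpa using this
  -- descent step from a
  set w := a - (1 / L) • (gradient f a - gradient f b) with hw
  have hdesc := descent_lemma φ hdφ hLφ a w
  rw [hgradφ a] at hdesc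
  have hwa : w - a = -((1 / L) • (gradient f a - gradient f b)) := by
    rw [hw]; abel
  rw [hwa] at hdesc
  have hnorm : ‖-((1 / L) • (gradient f a - gradient f b))‖ ^ 2
      = (1 / L) ^ 2 * ‖gradient f a - gradient f b‖ ^ 2 := by
    rw [norm_neg, norm_smul, mul_pow, Real.norm_eq_abs,
      abs_of_pos (one_div_pos.mpr hLpos)]
  have hinner : ⟪gradient f a - gradient f b, -((1 / L) • (gradient f a - gradient f b))⟫
      = -(1 / L) * ‖gradient f a - gradient f b‖ ^ 2 := by
    rw [inner_neg_right, real_inner_smul_right, real_inner_self_eq_norm_sq]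
    ring
  rw [hnorm, hinner] at hdesc
  have hkey : φ b ≤ φ a - 1 / (2 * L) * ‖gradient f a - gradient f b‖ ^ 2 := by
    have h1 := hmin w
    have h2 : L / 2 * ((1 / L) ^ 2 * ‖gradient f a - gradient f b‖ ^ 2)
        - 1 / L * ‖gradient f a - gradient f b‖ ^ 2
        = -(1 / (2 * L)) * ‖gradient f a - gradient f b‖ ^ 2 := by
      field_simp; ring
    calc φ b ≤ φ w := h1
      _ ≤ φ a + -(1 / L) * ‖gradient f a - gradient f b‖ ^ 2
          + L / 2 * ((1 / L) ^ 2 * ‖gradient f a - gradient f b‖ ^ 2) := hdesc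
      _ = φ a - 1 / (2 * L) * ‖gradient f a - gradient f b‖ ^ 2 := by
          have h3 : L ≠ 0 := ne_of_gt hLpos
          field_simp
          ring
  have hφa : φ a = f a - ⟪gradient f b, a⟫ := rfl
  have hφb : φ b = f b - ⟪gradient f b, b⟫ := rfl
  have hib : ⟪gradient f b, a - b⟫ = ⟪gradient f b, a⟫ - ⟪gradient f b, b⟫ :=
    inner_sub_right _ _ _
  have hL2 : 0 < 2 * L := by linarith
  rw [hφa, hφb] at hkey
  have := mul_le_mul_of_nonneg_left (by linarith [hkey] :
    1 / (2 * L) * ‖gradient f a - gradient f b‖ ^ 2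
      ≤ f a - f b - ⟪gradient f b, a - b⟫) (le_of_lt hL2)
  calc ‖gradient f a - gradient f b‖ ^ 2
      = 2 * L * (1 / (2 * L) * ‖gradient f a - gradient f b‖ ^ 2) := by
        field_simp
    _ ≤ 2 * L * (f a - f b - ⟪gradient f b, a - b⟫) := this

lemma sq_norm_add_le (x y : E) : ‖x + y‖ ^ 2 ≤ 2 * ‖x‖ ^ 2 + 2 * ‖y‖ ^ 2 := by
  have h := norm_add_le x y
  have h2 : ‖x + y‖ ^ 2 ≤ (‖x‖ + ‖y‖) ^ 2 :=
    pow_le_pow_left₀ (norm_nonneg _) h 2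
  nlinarith [sq_nonneg (‖x‖ - ‖y‖)]

lemma variance_le {n : ℕ} (p : Fin n → ℝ) (hp1 : ∑ j, p j = 1)
    (B : Fin n → E) :
    ∑ j, p j * ‖B j - ∑ k, p k • B k‖ ^ 2 ≤ ∑ j, p j * ‖B j‖ ^ 2 := by
  set C := ∑ k, p k • B k with hC
  have hexp : ∀ j, ‖B j - C‖ ^ 2 = ‖B j‖ ^ 2 - 2 * ⟪B j, C⟫ + ‖C‖ ^ 2 := fun j =>
    norm_sub_sq_real _ _
  have hsum : ∑ j, p j * ⟪B j, C⟫ = ‖C‖ ^ 2 := by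
    rw [← real_inner_self_eq_norm_sq, hC, sum_inner]
    exact Finset.sum_congr rfl fun j _ => (real_inner_smul_left _ _ _).symm
  calc ∑ j, p j * ‖B j - C‖ ^ 2
      = ∑ j, (p j * ‖B j‖ ^ 2 - 2 * (p j * ⟪B j, C⟫) + p j * ‖C‖ ^ 2) := by
        refine Finset.sum_congr rfl fun j _ => ?_
        rw [hexp j]; ring
    _ = ∑ j, p j * ‖B j‖ ^ 2 - 2 * ∑ j, p j * ⟪B j, C⟫ + (∑ j, p j) * ‖C‖ ^ 2 := by
        rw [Finset.sum_add_distrib, Finset.sum_sub_distrib, ← Finset.mul_sum,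
          ← Finset.sum_mul, Finset.mul_sum]
    _ = ∑ j, p j * ‖B j‖ ^ 2 - ‖C‖ ^ 2 := by rw [hsum, hp1]; ring
    _ ≤ ∑ j, p j * ‖B j‖ ^ 2 := by nlinarith [norm_nonneg C, sq_nonneg ‖C‖]

lemma grad_avg {n : ℕ} (g : Fin n → E → ℝ) (hd : ∀ j, Differentiable ℝ (g j))
    (f : E → ℝ) (hf : ∀ x, f x = (1 / (n : ℝ)) * ∑ j, g j x) (x : E) :
    HasGradientAt f ((1 / (n : ℝ)) • ∑ j, gradient (g j) x) x := by
  rw [hasGradientAt_iff_hasFDerivAt]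
  have h1 : ∀ j, HasFDerivAt (g j) (InnerProductSpace.toDual ℝ E (gradient (g j) x)) x :=
    fun j => hasGradientAt_iff_hasFDerivAt.mp ((hd j) x).hasGradientAt
  have h2 : HasFDerivAt (fun x => ∑ j, g j x)
      (∑ j, InnerProductSpace.toDual ℝ E (gradient (g j) x)) x :=
    HasFDerivAt.fun_sum (fun j _ => h1 j)
  have h3 := h2.const_mul (1 / (n : ℝ))
  have he : (fun x => (1 / (n : ℝ)) * ∑ j, g j x) = f := by
    funext z; rw [hf z]
  rw [he] at h3
  rw [_root_.map_smul, map_sum]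
  exact h3

lemma grad_neg (f : E → ℝ) (hd : Differentiable ℝ f) (x : E) :
    gradient (fun z => -(f z)) x = -gradient f x := by
  have h1 : HasFDerivAt f (InnerProductSpace.toDual ℝ E (gradient f x)) x :=
    hasGradientAt_iff_hasFDerivAt.mp (hd x).hasGradientAt
  have h2 := h1.neg
  have : HasGradientAt (fun z => -(f z)) (-gradient f x) x := by
    rw [hasGradientAt_iff_hasFDerivAt, map_neg]
    exact h2
  exact this.gradient

open MeasureTheory in
lemma exp_fin {Ω : Type*} [MeasurableSpace Ω] (μ : Measure Ω) [IsProbabilityMeasure μ]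
    {n : ℕ} (X : Ω → Fin n) (hX : Measurable X) (p : Fin n → ℝ) (hp : ∀ j, 0 ≤ p j)
    (hlaw : ∀ j, μ {ω | X ω = j} = ENNReal.ofReal (p j)) (g : Fin n → ℝ) :
    Integrable (fun ω => g (X ω)) μ ∧ ∫ ω, g (X ω) ∂μ = ∑ j, p j * g j := by
  have hms : ∀ j : Fin n, MeasurableSet {ω | X ω = j} := fun j =>
    hX (measurableSet_singleton j)
  have hrep : (fun ω => g (X ω))
      = fun ω => ∑ j, Set.indicator {ω | X ω = j} (fun _ => g j) ω := by
    funext ω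
    rw [Finset.sum_eq_single (X ω)]
    · rw [Set.indicator_of_mem (by simp : ω ∈ {ω' | X ω' = X ω})]
    · intro j _ hj
      rw [Set.indicator_of_notMem]
      simp only [Set.mem_setOf_eq]
      exact fun h => hj (h ▸ rfl)
    · simp
  have hint : ∀ j : Fin n, Integrable
      (fun ω => Set.indicator {ω | X ω = j} (fun _ => g j) ω) μ := by
    intro j
    exact (integrable_const (g j)).indicator (hms j)
  constructor
  · rw [hrep]; exact integrable_finset_sum _ (fun j _ => hint j)
  · rw [hrep, integral_finset_sum _ (fun j _ => hint j)]
    refine Finset.sum_congr rfl fun j _ => ?_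
    rw [integral_indicator_const _ (hms j), measureReal_def, hlaw j, smul_eq_mul,
      ENNReal.toReal_ofReal (hp j)]

variable {F : Type*} [NormedAddCommGroup F] [InnerProductSpace ℝ F] [CompleteSpace F]

lemma side_bound {n : ℕ} (hn : 0 < n)
    (fj : Fin n → E → F → ℝ)
    (hdx : ∀ j y, Differentiable ℝ (fun x => fj j x y))
    (hconvx : ∀ j y, ConvexOn ℝ Set.univ (fun x => fj j x y))
    (Lxx Lxy : ℝ)
    (hLxx : ∀ j y x₁ x₂, ‖gradient (fun x => fj j x y) x₁
        - gradient (fun x => fj j x y) x₂‖ ≤ Lxx * ‖x₁ - x₂‖)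
    (hLxy : ∀ j x y₁ y₂, ‖gradient (fun x' => fj j x' y₁) x
        - gradient (fun x' => fj j x' y₂) x‖ ≤ Lxy * ‖y₁ - y₂‖)
    (f : E → F → ℝ) (hf : ∀ x y, f x y = (1 / (n : ℝ)) * ∑ j, fj j x y)
    (μx : ℝ)
    (hsc : ∀ y x₁ x₂, f x₂ y + ⟪gradient (fun x => f x y) x₂, x₁ - x₂⟫
        + μx / 2 * ‖x₁ - x₂‖ ^ 2 ≤ f x₁ y)
    (p : Fin n → ℝ) (hp : ∀ j, 0 < p j) (hp1 : ∑ j, p j = 1)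
    (pmin : ℝ) (hpm0 : 0 < pmin) (hpmle : ∀ j, pmin ≤ p j)
    (xs xt xr : E) (ys yt yr : F) (s : ℝ) (hs : 0 < s) :
    ∑ j, p j * ‖xt - xs - s • ((1 / ((n : ℝ) * p j)) •
          (gradient (fun x => fj j x yt) xt - gradient (fun x => fj j x yr) xr)
        + gradient (fun x => f x yr) xr) + s • gradient (fun x => f x ys) xs‖ ^ 2
    ≤ (1 - μx * s) * ‖xt - xs‖ ^ 2
      - 2 * s * (f xs yt - f xt yt - ⟪gradient (fun x => f x yt) xt, xs - xt⟫)
      - 2 * s * (f xt yt - f xs yt - f xt ys + f xs ys)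
      + s ^ 2 / ((n : ℝ) * pmin) *
        (8 * Lxx * (f xs yt - f xt yt - ⟪gradient (fun x => f x yt) xt, xs - xt⟫)
          + 4 * Lxy ^ 2 * ‖yt - ys‖ ^ 2 + 4 * Lxx ^ 2 * ‖xr - xs‖ ^ 2
          + 4 * Lxy ^ 2 * ‖yr - ys‖ ^ 2) := by
  have hn0 : (0 : ℝ) < (n : ℝ) := Nat.cast_pos.mpr hn
  set a : E := xt - xs with ha
  set Dt : Fin n → E := fun j => gradient (fun x => fj j x yt) xt with hDt
  set Dr : Fin n → E := fun j => gradient (fun x => fj j x yr) xr with hDr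
  set Ds : Fin n → E := fun j => gradient (fun x => fj j x ys) xs with hDs
  set Dst : Fin n → E := fun j => gradient (fun x => fj j x yt) xs with hDst
  set Ct : E := gradient (fun x => f x yt) xt with hCt
  set Cr : E := gradient (fun x => f x yr) xr with hCr
  set Cs : E := gradient (fun x => f x ys) xs with hCs
  -- gradient of average identities
  have hgavg : ∀ (y : F) (z : E), gradient (fun x => f x y) z
      = (1 / (n : ℝ)) • ∑ j, gradient (fun x => fj j x y) z := by
    intro y z
    exact (grad_avg (fun j x => fj j x y) (fun j => hdx j y) (fun x => f x y)
      (fun x => hf x y) z).gradient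
  have hCt' : Ct = (1 / (n : ℝ)) • ∑ j, Dt j := hgavg yt xt
  have hCr' : Cr = (1 / (n : ℝ)) • ∑ j, Dr j := hgavg yr xr
  have hCs' : Cs = (1 / (n : ℝ)) • ∑ j, Ds j := hgavg ys xs
  set G : Fin n → E := fun j => (1 / ((n : ℝ) * p j)) • (Dt j - Dr j) + Cr with hG
  set q : Fin n → E := fun j => G j - Cs with hq
  set A : Fin n → E := fun j => (1 / ((n : ℝ) * p j)) • (Dt j - Ds j) with hA
  set B : Fin n → E := fun j => (1 / ((n : ℝ) * p j)) • (Dr j - Ds j) with hB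
  have hsmul_key : ∀ (j : Fin n) (v : E), p j • ((1 / ((n : ℝ) * p j)) • v)
      = (1 / (n : ℝ)) • v := by
    intro j v
    rw [smul_smul]
    congr 1
    have h1 : (n : ℝ) ≠ 0 := by positivity
    have h2 : p j ≠ 0 := (hp j).ne'
    field_simp
  -- q j = A j - B j + (Cr - Cs)
  have hqrep : ∀ j, q j = A j - B j + (Cr - Cs) := by
    intro j
    have h1 : A j - B j = (1 / ((n : ℝ) * p j)) • (Dt j - Dr j) := by
      rw [hA, hB, ← smul_sub]
      congr 1
      abel
    rw [hq, hG, h1]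
    module
  -- mean of q
  have hmean : ∑ j, p j • q j = Ct - Cs := by
    have h1 : ∀ j, p j • q j = (1 / (n : ℝ)) • (Dt j - Dr j) + p j • Cr - p j • Cs := by
      intro j
      rw [hq, hG, smul_sub, smul_add, hsmul_key]
    rw [Finset.sum_congr rfl (fun j _ => h1 j)]
    rw [Finset.sum_sub_distrib, Finset.sum_add_distrib, ← Finset.sum_smul, ← Finset.sum_smul,
      hp1, one_smul, one_smul, ← Finset.smul_sum, Finset.sum_sub_distrib, smul_sub,
      hCt', hCr', hCs']
    abel
  -- C = sum p B
  have hCB : ∑ k, p k • B k = Cr - Cs := by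
    have h1 : ∀ k, p k • B k = (1 / (n : ℝ)) • (Dr k - Ds k) := fun k => hsmul_key k _
    rw [Finset.sum_congr rfl (fun k _ => h1 k), ← Finset.smul_sum, hCr', hCs',
      ← smul_sub]
    congr 1
    rw [Finset.sum_sub_distrib]
  -- Step 1: expansion
  have hstep1 : ∑ j, p j * ‖xt - xs - s • G j + s • Cs‖ ^ 2
      = ‖a‖ ^ 2 - 2 * s * ⟪a, Ct - Cs⟫ + s ^ 2 * ∑ j, p j * ‖q j‖ ^ 2 := by
    have h1 : ∀ j, xt - xs - s • G j + s • Cs = a - s • q j := by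
      intro j
      rw [ha, hq, smul_sub]
      abel
    have h2 : ∀ j, ‖a - s • q j‖ ^ 2
        = ‖a‖ ^ 2 - 2 * s * ⟪a, q j⟫ + s ^ 2 * ‖q j‖ ^ 2 := by
      intro j
      rw [norm_sub_sq_real, real_inner_smul_right, norm_smul, mul_pow, Real.norm_eq_abs,
        sq_abs]
      ring
    have h3 : ∑ j, p j * ⟪a, q j⟫ = ⟪a, Ct - Cs⟫ := by
      rw [← hmean, inner_sum]
      exact Finset.sum_congr rfl fun j _ => (real_inner_smul_right _ _ _).symm
    calc ∑ j, p j * ‖xt - xs - s • G j + s • Cs‖ ^ 2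
        = ∑ j, (p j * ‖a‖ ^ 2 - 2 * s * (p j * ⟪a, q j⟫) + s ^ 2 * (p j * ‖q j‖ ^ 2)) := by
          refine Finset.sum_congr rfl fun j _ => ?_
          rw [h1 j, h2 j]; ring
      _ = (∑ j, p j) * ‖a‖ ^ 2 - 2 * s * ∑ j, p j * ⟪a, q j⟫
            + s ^ 2 * ∑ j, p j * ‖q j‖ ^ 2 := by
          rw [Finset.sum_add_distrib, Finset.sum_sub_distrib, ← Finset.sum_mul,
            ← Finset.mul_sum, ← Finset.mul_sum]
      _ = ‖a‖ ^ 2 - 2 * s * ⟪a, Ct - Cs⟫ + s ^ 2 * ∑ j, p j * ‖q j‖ ^ 2 := by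
          rw [hp1, h3, one_mul]
  -- Step 2: cross term
  set Vx : ℝ := f xs yt - f xt yt - ⟪Ct, xs - xt⟫ with hVx
  set D : ℝ := f xt yt - f xs yt - f xt ys + f xs ys with hD
  have hcross : Vx + D + μx / 2 * ‖a‖ ^ 2 ≤ ⟪a, Ct - Cs⟫ := by
    have h1 : ⟪a, Ct⟫ = -⟪Ct, xs - xt⟫ := by
      rw [real_inner_comm, ha, ← inner_neg_right]
      congr 1
      abel
    have h2 : ⟪Cs, xt - xs⟫ ≤ f xt ys - f xs ys - μx / 2 * ‖xt - xs‖ ^ 2 := by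
      have := hsc ys xt xs
      rw [← hCs] at this
      linarith
    have h3 : ⟪a, Cs⟫ = ⟪Cs, xt - xs⟫ := by rw [real_inner_comm, ha]
    rw [inner_sub_right, h1, h3]
    rw [hVx, hD, ha]
    linarith
  -- Step 3: second moment
  set W : ℝ := 8 * Lxx * Vx + 4 * Lxy ^ 2 * ‖yt - ys‖ ^ 2
    + 4 * Lxx ^ 2 * ‖xr - xs‖ ^ 2 + 4 * Lxy ^ 2 * ‖yr - ys‖ ^ 2 with hW
  have hsecond : ∑ j, p j * ‖q j‖ ^ 2 ≤ 1 / ((n : ℝ) * pmin) * W := by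
    rw [hW]
    -- split q j
    have hsplit : ∀ j, ‖q j‖ ^ 2 ≤ 2 * ‖A j‖ ^ 2 + 2 * ‖B j - (Cr - Cs)‖ ^ 2 := by
      intro j
      have h1 : q j = A j + -(B j - (Cr - Cs)) := by rw [hqrep j]; abel
      rw [h1]
      calc ‖A j + -(B j - (Cr - Cs))‖ ^ 2
          ≤ 2 * ‖A j‖ ^ 2 + 2 * ‖-(B j - (Cr - Cs))‖ ^ 2 := sq_norm_add_le _ _
        _ = 2 * ‖A j‖ ^ 2 + 2 * ‖B j - (Cr - Cs)‖ ^ 2 := by rw [norm_neg]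
    have hsum_split : ∑ j, p j * ‖q j‖ ^ 2
        ≤ 2 * ∑ j, p j * ‖A j‖ ^ 2 + 2 * ∑ j, p j * ‖B j‖ ^ 2 := by
      have hvar : ∑ j, p j * ‖B j - (Cr - Cs)‖ ^ 2 ≤ ∑ j, p j * ‖B j‖ ^ 2 := by
        rw [← hCB]
        exact variance_le p hp1 B
      calc ∑ j, p j * ‖q j‖ ^ 2
          ≤ ∑ j, p j * (2 * ‖A j‖ ^ 2 + 2 * ‖B j - (Cr - Cs)‖ ^ 2) := by
            apply Finset.sum_le_sum
            intro j _
            exact mul_le_mul_of_nonneg_left (hsplit j) (hp j).le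
        _ = 2 * ∑ j, p j * ‖A j‖ ^ 2 + 2 * ∑ j, p j * ‖B j - (Cr - Cs)‖ ^ 2 := by
            rw [Finset.mul_sum, Finset.mul_sum, ← Finset.sum_add_distrib]
            exact Finset.sum_congr rfl fun j _ => by ring
        _ ≤ 2 * ∑ j, p j * ‖A j‖ ^ 2 + 2 * ∑ j, p j * ‖B j‖ ^ 2 := by linarith
    -- per-j gradient difference bounds
    have hAnorm : ∀ j, p j * ‖A j‖ ^ 2
        ≤ 1 / ((n : ℝ) ^ 2 * pmin) * ‖Dt j - Ds j‖ ^ 2 := by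
      intro j
      have h1 : ‖A j‖ ^ 2 = (1 / ((n : ℝ) * p j)) ^ 2 * ‖Dt j - Ds j‖ ^ 2 := by
        rw [hA, norm_smul, mul_pow, Real.norm_eq_abs, sq_abs]
      rw [h1]
      have h2 : p j * ((1 / ((n : ℝ) * p j)) ^ 2) = 1 / ((n : ℝ) ^ 2 * p j) := by
        have := (hp j).ne'
        field_simp
      rw [← mul_assoc, h2]
      apply mul_le_mul_of_nonneg_right _ (sq_nonneg _)
      apply div_le_div_of_nonneg_left one_pos.le (by positivity)
      apply mul_le_mul_of_nonneg_left (hpmle j) (by positivity)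
    have hBnorm : ∀ j, p j * ‖B j‖ ^ 2
        ≤ 1 / ((n : ℝ) ^ 2 * pmin) * ‖Dr j - Ds j‖ ^ 2 := by
      intro j
      have h1 : ‖B j‖ ^ 2 = (1 / ((n : ℝ) * p j)) ^ 2 * ‖Dr j - Ds j‖ ^ 2 := by
        rw [hB, norm_smul, mul_pow, Real.norm_eq_abs, sq_abs]
      rw [h1]
      have h2 : p j * ((1 / ((n : ℝ) * p j)) ^ 2) = 1 / ((n : ℝ) ^ 2 * p j) := by
        have := (hp j).ne'
        field_simp
      rw [← mul_assoc, h2]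
      apply mul_le_mul_of_nonneg_right _ (sq_nonneg _)
      apply div_le_div_of_nonneg_left one_pos.le (by positivity)
      apply mul_le_mul_of_nonneg_left (hpmle j) (by positivity)
    -- cocoercivity bound for Dt - Ds
    have hDtDs : ∀ j, ‖Dt j - Ds j‖ ^ 2
        ≤ 4 * Lxx * (fj j xs yt - fj j xt yt - ⟪Dt j, xs - xt⟫)
          + 2 * Lxy ^ 2 * ‖yt - ys‖ ^ 2 := by
      intro j
      have hco := cocoercive (fun x => fj j x yt) (hdx j yt) (hconvx j yt)
        (hLxx j yt) xs xt
      have h1 : ‖Dt j - Dst j‖ ^ 2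
          ≤ 2 * Lxx * (fj j xs yt - fj j xt yt - ⟪Dt j, xs - xt⟫) := by
        rw [hDt, hDst, ← norm_neg]
        simpa [neg_sub] using hco
      have h2 : ‖Dst j - Ds j‖ ^ 2 ≤ Lxy ^ 2 * ‖yt - ys‖ ^ 2 := by
        have := hLxy j xs yt ys
        rw [hDst, hDs]
        calc ‖gradient (fun x' => fj j x' yt) xs - gradient (fun x' => fj j x' ys) xs‖ ^ 2
            ≤ (Lxy * ‖yt - ys‖) ^ 2 := pow_le_pow_left₀ (norm_nonneg _) this 2
          _ = Lxy ^ 2 * ‖yt - ys‖ ^ 2 := by ring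
      have h3 : Dt j - Ds j = (Dt j - Dst j) + (Dst j - Ds j) := by abel
      rw [h3]
      calc ‖(Dt j - Dst j) + (Dst j - Ds j)‖ ^ 2
          ≤ 2 * ‖Dt j - Dst j‖ ^ 2 + 2 * ‖Dst j - Ds j‖ ^ 2 := sq_norm_add_le _ _
        _ ≤ 4 * Lxx * (fj j xs yt - fj j xt yt - ⟪Dt j, xs - xt⟫)
            + 2 * Lxy ^ 2 * ‖yt - ys‖ ^ 2 := by linarith
    -- Lipschitz bound for Dr - Ds
    have hDrDs : ∀ j, ‖Dr j - Ds j‖ ^ 2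
        ≤ 2 * Lxx ^ 2 * ‖xr - xs‖ ^ 2 + 2 * Lxy ^ 2 * ‖yr - ys‖ ^ 2 := by
      intro j
      set Dsr : E := gradient (fun x => fj j x yr) xs with hDsr
      have h1 : ‖Dr j - Dsr‖ ^ 2 ≤ Lxx ^ 2 * ‖xr - xs‖ ^ 2 := by
        have := hLxx j yr xr xs
        rw [hDr, hDsr]
        calc ‖gradient (fun x => fj j x yr) xr - gradient (fun x => fj j x yr) xs‖ ^ 2
            ≤ (Lxx * ‖xr - xs‖) ^ 2 := pow_le_pow_left₀ (norm_nonneg _) this 2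
          _ = Lxx ^ 2 * ‖xr - xs‖ ^ 2 := by ring
      have h2 : ‖Dsr - Ds j‖ ^ 2 ≤ Lxy ^ 2 * ‖yr - ys‖ ^ 2 := by
        have := hLxy j xs yr ys
        rw [hDsr, hDs]
        calc ‖gradient (fun x' => fj j x' yr) xs - gradient (fun x' => fj j x' ys) xs‖ ^ 2
            ≤ (Lxy * ‖yr - ys‖) ^ 2 := pow_le_pow_left₀ (norm_nonneg _) this 2
          _ = Lxy ^ 2 * ‖yr - ys‖ ^ 2 := by ring
      have h3 : Dr j - Ds j = (Dr j - Dsr) + (Dsr - Ds j) := by abel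
      rw [h3]
      calc ‖(Dr j - Dsr) + (Dsr - Ds j)‖ ^ 2
          ≤ 2 * ‖Dr j - Dsr‖ ^ 2 + 2 * ‖Dsr - Ds j‖ ^ 2 := sq_norm_add_le _ _
        _ ≤ 2 * Lxx ^ 2 * ‖xr - xs‖ ^ 2 + 2 * Lxy ^ 2 * ‖yr - ys‖ ^ 2 := by linarith
    -- average of Bregman distances
    have hVsum : (1 / (n : ℝ)) * ∑ j, (fj j xs yt - fj j xt yt - ⟪Dt j, xs - xt⟫) = Vx := by
      have h1 : ⟪Ct, xs - xt⟫ = (1 / (n : ℝ)) * ∑ j, ⟪Dt j, xs - xt⟫ := by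
        rw [hCt', real_inner_smul_left, sum_inner]
      rw [hVx, hf xs yt, hf xt yt, h1, Finset.sum_sub_distrib, Finset.sum_sub_distrib,
        mul_sub, mul_sub]
    -- assemble
    have hAsum : ∑ j, p j * ‖A j‖ ^ 2
        ≤ 1 / ((n : ℝ) * pmin) * (4 * Lxx * Vx + 2 * Lxy ^ 2 * ‖yt - ys‖ ^ 2) := by
      calc ∑ j, p j * ‖A j‖ ^ 2
          ≤ ∑ j, 1 / ((n : ℝ) ^ 2 * pmin) *
            (4 * Lxx * (fj j xs yt - fj j xt yt - ⟪Dt j, xs - xt⟫)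
              + 2 * Lxy ^ 2 * ‖yt - ys‖ ^ 2) := by
            apply Finset.sum_le_sum
            intro j _
            calc p j * ‖A j‖ ^ 2 ≤ 1 / ((n : ℝ) ^ 2 * pmin) * ‖Dt j - Ds j‖ ^ 2 :=
                hAnorm j
              _ ≤ _ := by
                  apply mul_le_mul_of_nonneg_left (hDtDs j) (by positivity)
        _ = 1 / ((n : ℝ) * pmin) * (4 * Lxx *
              ((1 / (n : ℝ)) * ∑ j, (fj j xs yt - fj j xt yt - ⟪Dt j, xs - xt⟫))
              + 2 * Lxy ^ 2 * ‖yt - ys‖ ^ 2) := by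
            rw [← Finset.mul_sum, Finset.sum_add_distrib, Finset.sum_const,
              Finset.card_univ, Fintype.card_fin, ← Finset.mul_sum]
            have hne : (n : ℝ) ≠ 0 := by positivity
            have hpe : pmin ≠ 0 := hpm0.ne'
            field_simp
            ring
        _ = 1 / ((n : ℝ) * pmin) * (4 * Lxx * Vx + 2 * Lxy ^ 2 * ‖yt - ys‖ ^ 2) := by
            rw [hVsum]
    have hBsum : ∑ j, p j * ‖B j‖ ^ 2
        ≤ 1 / ((n : ℝ) * pmin) *
          (2 * Lxx ^ 2 * ‖xr - xs‖ ^ 2 + 2 * Lxy ^ 2 * ‖yr - ys‖ ^ 2) := by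
      calc ∑ j, p j * ‖B j‖ ^ 2
          ≤ ∑ j, 1 / ((n : ℝ) ^ 2 * pmin) *
            (2 * Lxx ^ 2 * ‖xr - xs‖ ^ 2 + 2 * Lxy ^ 2 * ‖yr - ys‖ ^ 2) := by
            apply Finset.sum_le_sum
            intro j _
            calc p j * ‖B j‖ ^ 2 ≤ 1 / ((n : ℝ) ^ 2 * pmin) * ‖Dr j - Ds j‖ ^ 2 :=
                hBnorm j
              _ ≤ _ := mul_le_mul_of_nonneg_left (hDrDs j) (by positivity)
        _ = 1 / ((n : ℝ) * pmin) *
            (2 * Lxx ^ 2 * ‖xr - xs‖ ^ 2 + 2 * Lxy ^ 2 * ‖yr - ys‖ ^ 2) := by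
            rw [Finset.sum_const, Finset.card_univ, Fintype.card_fin, nsmul_eq_mul]
            have hne : (n : ℝ) ≠ 0 := by positivity
            have hpe : pmin ≠ 0 := hpm0.ne'
            field_simp
    calc ∑ j, p j * ‖q j‖ ^ 2
        ≤ 2 * ∑ j, p j * ‖A j‖ ^ 2 + 2 * ∑ j, p j * ‖B j‖ ^ 2 := hsum_split
      _ ≤ 2 * (1 / ((n : ℝ) * pmin) * (4 * Lxx * Vx + 2 * Lxy ^ 2 * ‖yt - ys‖ ^ 2))
          + 2 * (1 / ((n : ℝ) * pmin) *
            (2 * Lxx ^ 2 * ‖xr - xs‖ ^ 2 + 2 * Lxy ^ 2 * ‖yr - ys‖ ^ 2)) := by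
          have := hAsum
          have := hBsum
          linarith
      _ = 1 / ((n : ℝ) * pmin) * (8 * Lxx * Vx + 4 * Lxy ^ 2 * ‖yt - ys‖ ^ 2
          + 4 * Lxx ^ 2 * ‖xr - xs‖ ^ 2 + 4 * Lxy ^ 2 * ‖yr - ys‖ ^ 2) := by ring
  -- final assembly
  have hc2 := mul_le_mul_of_nonneg_left hcross (by linarith : (0:ℝ) ≤ 2 * s)
  have h2 := mul_le_mul_of_nonneg_left hsecond (sq_nonneg s)
  calc ∑ j, p j * ‖xt - xs - s • G j + s • Cs‖ ^ 2
      = ‖a‖ ^ 2 - 2 * s * ⟪a, Ct - Cs⟫ + s ^ 2 * ∑ j, p j * ‖q j‖ ^ 2 := hstep1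
    _ ≤ ‖a‖ ^ 2 - 2 * s * (Vx + D + μx / 2 * ‖a‖ ^ 2)
        + s ^ 2 * (1 / ((n : ℝ) * pmin) * W) := by linarith
    _ = (1 - μx * s) * ‖a‖ ^ 2 - 2 * s * Vx - 2 * s * D
        + s ^ 2 / ((n : ℝ) * pmin) * W := by ring


end SVRGHelpers

/-- One-step SVRG-oracle bound (Lemma `exp_xkt_ykt_svrg`, finite-sum setting): with the
SVRG stochastic gradients built from independently sampled indices `l_i ~ (p_{ij})_j`,
the expected squared distances of the SVRG gradient steps are controlled by the current
iterates, the Bregman distances, and the reference points. -/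
theorem one_step_svrg_oracle_bound {dx dy m n : ℕ} (hm : 0 < m) (hn : 0 < n)
    {Ω : Type*} [MeasurableSpace Ω] (μP : Measure Ω) [IsProbabilityMeasure μP]
    (fij : Fin m → Fin n → EuclideanSpace ℝ (Fin dx) → EuclideanSpace ℝ (Fin dy) → ℝ)
    (hdx : ∀ i j y, Differentiable ℝ (fun x => fij i j x y))
    (hdy : ∀ i j x, Differentiable ℝ (fun y => fij i j x y))
    (hconvx : ∀ i j y, ConvexOn ℝ Set.univ (fun x => fij i j x y))
    (hconcy : ∀ i j x, ConcaveOn ℝ Set.univ (fun y => fij i j x y))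
    (Lxx Lyy Lxy Lyx : ℝ)
    (hLxx : ∀ i j y x₁ x₂, ‖gradient (fun x => fij i j x y) x₁
        - gradient (fun x => fij i j x y) x₂‖ ≤ Lxx * ‖x₁ - x₂‖)
    (hLyy : ∀ i j x y₁ y₂, ‖gradient (fun y => fij i j x y) y₁
        - gradient (fun y => fij i j x y) y₂‖ ≤ Lyy * ‖y₁ - y₂‖)
    (hLxy : ∀ i j x y₁ y₂, ‖gradient (fun x' => fij i j x' y₁) x
        - gradient (fun x' => fij i j x' y₂) x‖ ≤ Lxy * ‖y₁ - y₂‖)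
    (hLyx : ∀ i j y x₁ x₂, ‖gradient (fun y' => fij i j x₁ y') y
        - gradient (fun y' => fij i j x₂ y') y‖ ≤ Lyx * ‖x₁ - x₂‖)
    (fi : Fin m → EuclideanSpace ℝ (Fin dx) → EuclideanSpace ℝ (Fin dy) → ℝ)
    (hfi : ∀ i x y, fi i x y = (1 / (n : ℝ)) * ∑ j, fij i j x y)
    (μx μy : ℝ)
    (hsc : ∀ i y x₁ x₂, fi i x₂ y + ⟪gradient (fun x => fi i x y) x₂, x₁ - x₂⟫
        + μx / 2 * ‖x₁ - x₂‖ ^ 2 ≤ fi i x₁ y)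
    (hscc : ∀ i x y₁ y₂, fi i x y₁ ≤ fi i x y₂ + ⟪gradient (fun y => fi i x y) y₂, y₁ - y₂⟫
        - μy / 2 * ‖y₁ - y₂‖ ^ 2)
    -- sampling probabilities
    (p : Fin m → Fin n → ℝ) (hp : ∀ i j, 0 < p i j) (hp1 : ∀ i, ∑ j, p i j = 1)
    (pmin : ℝ) (hpmin : IsLeast {t : ℝ | ∃ i j, p i j = t} pmin)
    -- the fixed point `z⋆`, the iterates and the reference points
    (xs : EuclideanSpace ℝ (Fin dx)) (ys : EuclideanSpace ℝ (Fin dy))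
    (xt xr : Fin m → EuclideanSpace ℝ (Fin dx)) (yt yr : Fin m → EuclideanSpace ℝ (Fin dy))
    -- the independently sampled indices
    (l : Fin m → Ω → Fin n) (hlmeas : ∀ i, Measurable (l i))
    (hlindep : ProbabilityTheory.iIndepFun l μP)
    (hllaw : ∀ i j, μP {ω | l i ω = j} = ENNReal.ofReal (p i j))
    (s : ℝ) (hs : 0 < s) :
    (∫ ω, ∑ i, ‖xt i - xs
          - s • ((1 / ((n : ℝ) * p i (l i ω))) •
                (gradient (fun x => fij i (l i ω) x (yt i)) (xt i)
                  - gradient (fun x => fij i (l i ω) x (yr i)) (xr i))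
              + gradient (fun x => fi i x (yr i)) (xr i))
          + s • gradient (fun x => fi i x ys) xs‖ ^ 2 ∂μP)
      + (∫ ω, ∑ i, ‖yt i - ys
          + s • ((1 / ((n : ℝ) * p i (l i ω))) •
                (gradient (fun y => fij i (l i ω) (xt i) y) (yt i)
                  - gradient (fun y => fij i (l i ω) (xr i) y) (yr i))
              + gradient (fun y => fi i (xr i) y) (yr i))
          - s • gradient (fun y => fi i xs y) ys‖ ^ 2 ∂μP) ≤
      (1 - μx * s + 4 * s ^ 2 * Lyx ^ 2 / (n * pmin)) * ∑ i, ‖xt i - xs‖ ^ 2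
        + (1 - μy * s + 4 * s ^ 2 * Lxy ^ 2 / (n * pmin)) * ∑ i, ‖yt i - ys‖ ^ 2
        - (2 * s - 8 * s ^ 2 * Lxx / (n * pmin)) *
            ∑ i, (fi i xs (yt i) - fi i (xt i) (yt i)
              - ⟪gradient (fun x => fi i x (yt i)) (xt i), xs - xt i⟫)
        - (2 * s - 8 * s ^ 2 * Lyy / (n * pmin)) *
            ∑ i, (-(fi i (xt i) ys) + fi i (xt i) (yt i)
              + ⟪gradient (fun y => fi i (xt i) y) (yt i), ys - yt i⟫)
        + (4 * s ^ 2 * (Lxx ^ 2 + Lyx ^ 2) / (n * pmin)) * ∑ i, ‖xr i - xs‖ ^ 2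
        + (4 * s ^ 2 * (Lyy ^ 2 + Lxy ^ 2) / (n * pmin)) * ∑ i, ‖yr i - ys‖ ^ 2 := by
  obtain ⟨⟨i0, j0, hij0⟩, hlb⟩ := hpmin
  have hpm0 : 0 < pmin := hij0 ▸ hp i0 j0
  have hpmle : ∀ i j, pmin ≤ p i j := fun i j => hlb ⟨i, j, rfl⟩
  have hdfiy : ∀ i x, Differentiable ℝ (fun y => fi i x y) := by
    intro i x
    have he : (fun y => fi i x y) = fun y => (1 / (n : ℝ)) * ∑ j, fij i j x y :=
      funext fun y => hfi i x y
    rw [he]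
    exact Differentiable.const_mul (Differentiable.fun_sum fun j _ => hdy i j x) _
  -- expectation computation
  have key : ∀ (g : Fin m → Fin n → ℝ), (∫ ω, ∑ i, g i (l i ω) ∂μP)
      = ∑ i, ∑ j, p i j * g i j := by
    intro g
    rw [integral_finset_sum _ (fun i _ =>
      (exp_fin μP (l i) (hlmeas i) (p i) (fun j => (hp i j).le) (hllaw i) (g i)).1)]
    exact Finset.sum_congr rfl fun i _ =>
      (exp_fin μP (l i) (hlmeas i) (p i) (fun j => (hp i j).le) (hllaw i) (g i)).2
  have e1 : (∫ ω, ∑ i, ‖xt i - xs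
          - s • ((1 / ((n : ℝ) * p i (l i ω))) •
                (gradient (fun x => fij i (l i ω) x (yt i)) (xt i)
                  - gradient (fun x => fij i (l i ω) x (yr i)) (xr i))
              + gradient (fun x => fi i x (yr i)) (xr i))
          + s • gradient (fun x => fi i x ys) xs‖ ^ 2 ∂μP)
      = ∑ i, ∑ j, p i j * ‖xt i - xs
          - s • ((1 / ((n : ℝ) * p i j)) •
                (gradient (fun x => fij i j x (yt i)) (xt i)
                  - gradient (fun x => fij i j x (yr i)) (xr i))
              + gradient (fun x => fi i x (yr i)) (xr i))
          + s • gradient (fun x => fi i x ys) xs‖ ^ 2 :=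
    key (fun i j => ‖xt i - xs
          - s • ((1 / ((n : ℝ) * p i j)) •
                (gradient (fun x => fij i j x (yt i)) (xt i)
                  - gradient (fun x => fij i j x (yr i)) (xr i))
              + gradient (fun x => fi i x (yr i)) (xr i))
          + s • gradient (fun x => fi i x ys) xs‖ ^ 2)
  have e2 : (∫ ω, ∑ i, ‖yt i - ys
          + s • ((1 / ((n : ℝ) * p i (l i ω))) •
                (gradient (fun y => fij i (l i ω) (xt i) y) (yt i)
                  - gradient (fun y => fij i (l i ω) (xr i) y) (yr i))
              + gradient (fun y => fi i (xr i) y) (yr i))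
          - s • gradient (fun y => fi i xs y) ys‖ ^ 2 ∂μP)
      = ∑ i, ∑ j, p i j * ‖yt i - ys
          + s • ((1 / ((n : ℝ) * p i j)) •
                (gradient (fun y => fij i j (xt i) y) (yt i)
                  - gradient (fun y => fij i j (xr i) y) (yr i))
              + gradient (fun y => fi i (xr i) y) (yr i))
          - s • gradient (fun y => fi i xs y) ys‖ ^ 2 :=
    key (fun i j => ‖yt i - ys
          + s • ((1 / ((n : ℝ) * p i j)) •
                (gradient (fun y => fij i j (xt i) y) (yt i)
                  - gradient (fun y => fij i j (xr i) y) (yr i))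
              + gradient (fun y => fi i (xr i) y) (yr i))
          - s • gradient (fun y => fi i xs y) ys‖ ^ 2)
  rw [e1, e2, ← Finset.sum_add_distrib]
  -- per node bound
  set T : Fin m → ℝ := fun i =>
    (1 - μx * s + 4 * s ^ 2 * Lyx ^ 2 / ((n : ℝ) * pmin)) * ‖xt i - xs‖ ^ 2
    + (1 - μy * s + 4 * s ^ 2 * Lxy ^ 2 / ((n : ℝ) * pmin)) * ‖yt i - ys‖ ^ 2
    - (2 * s - 8 * s ^ 2 * Lxx / ((n : ℝ) * pmin)) *
        (fi i xs (yt i) - fi i (xt i) (yt i)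
          - ⟪gradient (fun x => fi i x (yt i)) (xt i), xs - xt i⟫)
    - (2 * s - 8 * s ^ 2 * Lyy / ((n : ℝ) * pmin)) *
        (-(fi i (xt i) ys) + fi i (xt i) (yt i)
          + ⟪gradient (fun y => fi i (xt i) y) (yt i), ys - yt i⟫)
    + (4 * s ^ 2 * (Lxx ^ 2 + Lyx ^ 2) / ((n : ℝ) * pmin)) * ‖xr i - xs‖ ^ 2
    + (4 * s ^ 2 * (Lyy ^ 2 + Lxy ^ 2) / ((n : ℝ) * pmin)) * ‖yr i - ys‖ ^ 2 with hT
  have per : ∀ i : Fin m,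
      (∑ j, p i j * ‖xt i - xs
          - s • ((1 / ((n : ℝ) * p i j)) •
                (gradient (fun x => fij i j x (yt i)) (xt i)
                  - gradient (fun x => fij i j x (yr i)) (xr i))
              + gradient (fun x => fi i x (yr i)) (xr i))
          + s • gradient (fun x => fi i x ys) xs‖ ^ 2)
      + (∑ j, p i j * ‖yt i - ys
          + s • ((1 / ((n : ℝ) * p i j)) •
                (gradient (fun y => fij i j (xt i) y) (yt i)
                  - gradient (fun y => fij i j (xr i) y) (yr i))
              + gradient (fun y => fi i (xr i) y) (yr i))
          - s • gradient (fun y => fi i xs y) ys‖ ^ 2) ≤ T i := by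
    intro i
    have hX := side_bound hn (fun j => fij i j) (hdx i) (hconvx i) Lxx Lxy (hLxx i)
      (hLxy i) (fi i) (hfi i) μx (hsc i) (p i) (hp i) (hp1 i) pmin hpm0
      (fun j => hpmle i j) xs (xt i) (xr i) ys (yt i) (yr i) s hs
    -- the y-side via negation
    have gneg1 : ∀ (j : Fin n) (x : EuclideanSpace ℝ (Fin dx))
        (yv : EuclideanSpace ℝ (Fin dy)),
        gradient (fun y => -(fij i j x y)) yv = -gradient (fun y => fij i j x y) yv :=
      fun j x yv => grad_neg _ (hdy i j x) yv
    have gneg2 : ∀ (x : EuclideanSpace ℝ (Fin dx)) (yv : EuclideanSpace ℝ (Fin dy)),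
        gradient (fun y => -(fi i x y)) yv = -gradient (fun y => fi i x y) yv :=
      fun x yv => grad_neg _ (hdfiy i x) yv
    have hLyy' : ∀ (j : Fin n) (x : EuclideanSpace ℝ (Fin dx))
        (y₁ y₂ : EuclideanSpace ℝ (Fin dy)),
        ‖gradient (fun y => -(fij i j x y)) y₁ - gradient (fun y => -(fij i j x y)) y₂‖
          ≤ Lyy * ‖y₁ - y₂‖ := by
      intro j x y₁ y₂
      rw [gneg1, gneg1, show -gradient (fun y => fij i j x y) y₁
          - -gradient (fun y => fij i j x y) y₂
          = -(gradient (fun y => fij i j x y) y₁ - gradient (fun y => fij i j x y) y₂)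
          from by abel, norm_neg]
      exact hLyy i j x y₁ y₂
    have hLyx' : ∀ (j : Fin n) (yv : EuclideanSpace ℝ (Fin dy))
        (x₁ x₂ : EuclideanSpace ℝ (Fin dx)),
        ‖gradient (fun y => -(fij i j x₁ y)) yv - gradient (fun y => -(fij i j x₂ y)) yv‖
          ≤ Lyx * ‖x₁ - x₂‖ := by
      intro j yv x₁ x₂
      rw [gneg1, gneg1, show -gradient (fun y => fij i j x₁ y) yv
          - -gradient (fun y => fij i j x₂ y) yv
          = -(gradient (fun y' => fij i j x₁ y') yv - gradient (fun y' => fij i j x₂ y') yv)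
          from by abel, norm_neg]
      exact hLyx i j yv x₁ x₂
    have hfneg : ∀ (yv : EuclideanSpace ℝ (Fin dy)) (x : EuclideanSpace ℝ (Fin dx)),
        -(fi i x yv) = (1 / (n : ℝ)) * ∑ j, -(fij i j x yv) := by
      intro yv x
      rw [hfi i x yv, Finset.sum_neg_distrib]
      ring
    have hsc' : ∀ (x : EuclideanSpace ℝ (Fin dx)) (y₁ y₂ : EuclideanSpace ℝ (Fin dy)),
        -(fi i x y₂) + ⟪gradient (fun y => -(fi i x y)) y₂, y₁ - y₂⟫
          + μy / 2 * ‖y₁ - y₂‖ ^ 2 ≤ -(fi i x y₁) := by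
      intro x y₁ y₂
      rw [gneg2, inner_neg_left]
      linarith [hscc i x y₁ y₂]
    have hY := side_bound hn
      (fun j (y : EuclideanSpace ℝ (Fin dy)) (x : EuclideanSpace ℝ (Fin dx)) =>
        -(fij i j x y))
      (fun j x => (hdy i j x).neg) (fun j x => (hconcy i j x).neg) Lyy Lyx hLyy' hLyx'
      (fun y x => -(fi i x y)) hfneg μy hsc' (p i) (hp i) (hp1 i) pmin hpm0
      (fun j => hpmle i j) ys (yt i) (yr i) xs (xt i) (xr i) s hs
    simp only [gneg1, gneg2, inner_neg_left] at hY
    have hYeqsum : (∑ j, p i j * ‖yt i - ys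
          + s • ((1 / ((n : ℝ) * p i j)) •
                (gradient (fun y => fij i j (xt i) y) (yt i)
                  - gradient (fun y => fij i j (xr i) y) (yr i))
              + gradient (fun y => fi i (xr i) y) (yr i))
          - s • gradient (fun y => fi i xs y) ys‖ ^ 2)
        = ∑ j, p i j * ‖yt i - ys
          - s • ((1 / ((n : ℝ) * p i j)) •
                (-gradient (fun y => fij i j (xt i) y) (yt i)
                  - -gradient (fun y => fij i j (xr i) y) (yr i))
              + -gradient (fun y => fi i (xr i) y) (yr i))
          + s • -gradient (fun y => fi i xs y) ys‖ ^ 2 := by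
      refine Finset.sum_congr rfl fun j _ => ?_
      congr 3
      module
    rw [hYeqsum]
    refine le_trans (add_le_add hX hY) (le_of_eq ?_)
    rw [hT]
    ring
  refine le_trans (Finset.sum_le_sum fun i _ => per i) (le_of_eq ?_)
  rw [Finset.mul_sum, Finset.mul_sum, Finset.mul_sum, Finset.mul_sum, Finset.mul_sum,
    Finset.mul_sum, ← Finset.sum_add_distrib, ← Finset.sum_sub_distrib,
    ← Finset.sum_sub_distrib, ← Finset.sum_add_distrib, ← Finset.sum_add_distrib]
end

section
/- Compact one-step SVRG bound (Corollary for the finite-sum setting). Under the setting and assumptions of the one-step SVRG-oracle bound above, let L := max{L_xx,L_yy,L_xy,L_yx} > 0, μ := min{μ_x,μ_y} > 0, and s := μ·n·p_min/(24L²). Then E‖x_t − 𝟙x⋆ − sG^x + s∇_x F(𝟙x⋆,𝟙y⋆)‖² + E‖y_t − 𝟙y⋆ + sG^y − s∇_y F(𝟙x⋆,𝟙y⋆)‖² ≤ (1 − μ_x s + 4s²L_yx²/(np_min))·‖x_t − 𝟙x⋆‖² + (1 − μ_y s + 4s²L_xy²/(np_min))·‖y_t − 𝟙y⋆‖² + (4s²(L_xx²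 + L_yx²)/(np_min))·‖x̃_t − 𝟙x⋆‖² + (4s²(L_yy² + L_xy²)/(np_min))·‖ỹ_t − 𝟙y⋆‖². -/
open MeasureTheory RealInnerProductSpace

section AuxSVRG
variable {F : Type*} [NormedAddCommGroup F] [InnerProductSpace ℝ F] [CompleteSpace F]

lemma gradient_const_mul_sum {n : ℕ} (g : Fin n → F → ℝ) (x : F)
    (hg : ∀ j, DifferentiableAt ℝ (g j) x) (c : ℝ) :
    HasGradientAt (fun x => c * ∑ j, g j x) (c • ∑ j, gradient (g j) x) x := by
  rw [hasGradientAt_iff_hasFDerivAt]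
  have h1 : HasFDerivAt (fun x => ∑ j : Fin n, g j x)
      (∑ j : Fin n, (InnerProductSpace.toDual ℝ F) (gradient (g j) x)) x :=
    HasFDerivAt.fun_sum (fun j _ => ((hg j).hasGradientAt).hasFDerivAt)
  have h2 := h1.const_mul c
  convert h2 using 1
  · rfl
  · ext v; simp [Finset.mul_sum]

omit [CompleteSpace F] in
lemma weighted_var_le {n : ℕ} (p : Fin n → ℝ) (hp1 : ∑ j, p j = 1)
    (X : Fin n → F) (e : F) (he : e = ∑ j, p j • X j) :
    ∑ j, p j * ‖X j - e‖ ^ 2 ≤ ∑ j, p j * ‖X j‖ ^ 2 := by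
  have expand : ∀ j : Fin n, p j * ‖X j - e‖ ^ 2
      = p j * ‖X j‖ ^ 2 - 2 * ⟪p j • X j, e⟫ + p j * ‖e‖ ^ 2 := by
    intro j
    rw [norm_sub_sq_real, real_inner_smul_left]; ring
  have h1 : ∑ j : Fin n, (2:ℝ) * ⟪p j • X j, e⟫ = 2 * ‖e‖^2 := by
    rw [← Finset.mul_sum, ← sum_inner, ← he, real_inner_self_eq_norm_sq]
  have h2 : ∑ j : Fin n, p j * ‖e‖^2 = ‖e‖^2 := by
    rw [← Finset.sum_mul, hp1, one_mul]
  have h3 : ∑ j, p j * ‖X j - e‖^2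
      = ∑ j, p j * ‖X j‖^2 - 2*‖e‖^2 + ‖e‖^2 := by
    simp_rw [expand]
    rw [Finset.sum_add_distrib, Finset.sum_sub_distrib, h1, h2]
  rw [h3]
  nlinarith [sq_nonneg ‖e‖]

omit [InnerProductSpace ℝ F] [CompleteSpace F] in
lemma norm_sub_sq_le_two (x y : F) : ‖x - y‖^2 ≤ 2*‖x‖^2 + 2*‖y‖^2 := by
  nlinarith [norm_sub_le x y, norm_nonneg (x - y), norm_nonneg x, norm_nonneg y,
    sq_nonneg (‖x‖ - ‖y‖), mul_self_le_mul_self (norm_nonneg (x-y)) (norm_sub_le x y)]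
omit [CompleteSpace F] in
lemma step_exp_bound {n : ℕ} (hn : 0 < n) (p : Fin n → ℝ) (hp : ∀ j, 0 < p j)
    (hp1 : ∑ j, p j = 1)
    (pmin : ℝ) (hpmin0 : 0 < pmin) (hpminle : ∀ j, pmin ≤ p j)
    (a gr gs gt : F) (s : ℝ) (vt vr vs : Fin n → F)
    (hgt : gt = (1/(n:ℝ)) • ∑ j, vt j)
    (hgr : gr = (1/(n:ℝ)) • ∑ j, vr j)
    (hgs : gs = (1/(n:ℝ)) • ∑ j, vs j)
    (Ut Ur : ℝ) (hUt : ∀ j, ‖vt j - vs j‖ ^ 2 ≤ Ut) (hUr : ∀ j, ‖vr j - vs j‖ ^ 2 ≤ Ur) :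
    ∑ j, p j * ‖a - s • ((1/((n:ℝ) * p j)) • (vt j - vr j) + gr) + s • gs‖ ^ 2
      ≤ ‖a‖ ^ 2 - 2 * s * ⟪a, gt - gs⟫ + s ^ 2 * (2 / ((n:ℝ) * pmin)) * (Ut + Ur) := by
  have hnR : (0:ℝ) < n := by exact_mod_cast hn
  have hfrac : ∀ j : Fin n, p j * (1/((n:ℝ)*p j)) = 1/(n:ℝ) := by
    intro j
    field_simp
    exact div_self (hp j).ne'
  set c : Fin n → F := fun j => (1/((n:ℝ)*p j)) • (vt j - vr j) + (gr - gs) with hc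
  have hrw : ∀ j, a - s • ((1/((n:ℝ)*p j)) • (vt j - vr j) + gr) + s • gs = a - s • c j := by
    intro j; simp only [hc]; module
  have expand : ∀ j, ‖a - s • c j‖^2 = ‖a‖^2 - 2*s*⟪a, c j⟫ + s^2*‖c j‖^2 := by
    intro j
    rw [norm_sub_sq_real, real_inner_smul_right, norm_smul, mul_pow, Real.norm_eq_abs, sq_abs]
    ring
  have hmean : ∑ j, p j • c j = gt - gs := by
    have hterm : ∀ j : Fin n, p j • c j
        = (1/(n:ℝ)) • (vt j - vr j) + p j • (gr - gs) := by
      intro j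
      simp only [hc, smul_add, smul_smul]
      congr 2
      exact hfrac j
    simp_rw [hterm]
    rw [Finset.sum_add_distrib, ← Finset.sum_smul, hp1, one_smul, ← Finset.smul_sum,
      Finset.sum_sub_distrib, smul_sub, ← hgt, ← hgr]
    abel
  have hcross : ∑ j, p j * ⟪a, c j⟫ = ⟪a, gt - gs⟫ := by
    simp_rw [← real_inner_smul_right]
    rw [← inner_sum, hmean]
  -- quadratic term
  have hUt0 : 0 ≤ Ut := le_trans (sq_nonneg _) (hUt ⟨0, hn⟩)
  have hUr0 : 0 ≤ Ur := le_trans (sq_nonneg _) (hUr ⟨0, hn⟩)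
  have hq : (0:ℝ) < (n:ℝ) * pmin := mul_pos hnR hpmin0
  have hsecond : ∀ (w : Fin n → F) (U : ℝ), 0 ≤ U → (∀ j, ‖w j‖^2 ≤ U) →
      ∑ j, p j * ‖(1/((n:ℝ) * p j)) • w j‖^2 ≤ U / ((n:ℝ) * pmin) := by
    intro w U hU0 hU
    have hjle : ∀ j : Fin n, p j * ‖(1/((n:ℝ) * p j)) • w j‖^2 ≤ U / ((n:ℝ)^2 * pmin) := by
      intro j
      have h1 : ‖(1/((n:ℝ) * p j)) • w j‖^2 = (1/((n:ℝ)*p j))^2 * ‖w j‖^2 := by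
        rw [norm_smul, mul_pow, Real.norm_eq_abs, sq_abs]
      have h2 : p j * ((1/((n:ℝ)*p j))^2 * ‖w j‖^2) = ‖w j‖^2 / ((n:ℝ)^2 * p j) := by
        field_simp [(hp j).ne']
      rw [h1, h2]
      exact div_le_div₀ hU0 (hU j) (by positivity)
        (by nlinarith [hpminle j, sq_nonneg (n:ℝ)])
    calc ∑ j, p j * ‖(1/((n:ℝ) * p j)) • w j‖^2
        ≤ ∑ _j : Fin n, U / ((n:ℝ)^2 * pmin) := Finset.sum_le_sum fun j _ => hjle j
      _ = (n:ℝ) * (U / ((n:ℝ)^2 * pmin)) := by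
          rw [Finset.sum_const, Finset.card_univ, Fintype.card_fin, nsmul_eq_mul]
      _ = U / ((n:ℝ) * pmin) := by
          field_simp
  have hquad : ∑ j, p j * ‖c j‖^2 ≤ (2/((n:ℝ)*pmin)) * (Ut + Ur) := by
    set X : Fin n → F := fun j => (1/((n:ℝ)*p j)) • (vr j - vs j) with hX
    have hXe : gr - gs = ∑ j, p j • X j := by
      have hterm : ∀ j : Fin n, p j • X j = (1/(n:ℝ)) • (vr j - vs j) := by
        intro j
        simp only [hX, smul_smul]
        congr 1
        exact hfrac j
      simp_rw [hterm]
      rw [← Finset.smul_sum, Finset.sum_sub_distrib, smul_sub, ← hgr, ← hgs]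
    have hsplit : ∀ j, ‖c j‖^2 ≤ 2*‖(1/((n:ℝ)*p j)) • (vt j - vs j)‖^2
        + 2*‖X j - (gr - gs)‖^2 := by
      intro j
      have hcj : c j = (1/((n:ℝ)*p j)) • (vt j - vs j) - (X j - (gr - gs)) := by
        simp only [hc, hX, smul_sub]
        module
      rw [hcj]
      exact norm_sub_sq_le_two _ _
    have hstep : ∑ j, p j * ‖c j‖^2
        ≤ 2 * (∑ j, p j * ‖(1/((n:ℝ)*p j)) • (vt j - vs j)‖^2)
          + 2 * (∑ j, p j * ‖X j - (gr - gs)‖^2) := by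
      rw [Finset.mul_sum, Finset.mul_sum, ← Finset.sum_add_distrib]
      refine Finset.sum_le_sum fun j _ => ?_
      have := mul_le_mul_of_nonneg_left (hsplit j) (hp j).le
      nlinarith [this]
    have hvar : ∑ j, p j * ‖X j - (gr - gs)‖^2 ≤ ∑ j, p j * ‖X j‖^2 :=
      weighted_var_le p hp1 X (gr - gs) hXe
    have hb1 : ∑ j, p j * ‖(1/((n:ℝ)*p j)) • (vt j - vs j)‖^2 ≤ Ut / ((n:ℝ)*pmin) :=
      hsecond _ _ hUt0 hUt
    have hb2 : ∑ j, p j * ‖X j‖^2 ≤ Ur / ((n:ℝ)*pmin) := by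
      simp only [hX]
      exact hsecond _ _ hUr0 hUr
    have : ∑ j, p j * ‖c j‖^2 ≤ 2 * (Ut / ((n:ℝ)*pmin)) + 2 * (Ur / ((n:ℝ)*pmin)) := by
      linarith
    calc ∑ j, p j * ‖c j‖^2 ≤ 2 * (Ut / ((n:ℝ)*pmin)) + 2 * (Ur / ((n:ℝ)*pmin)) := this
      _ = (2/((n:ℝ)*pmin)) * (Ut + Ur) := by ring
  calc ∑ j, p j * ‖a - s • ((1/((n:ℝ) * p j)) • (vt j - vr j) + gr) + s • gs‖ ^ 2
      = ∑ j, (p j * ‖a‖^2 - 2*s*(p j * ⟪a, c j⟫) + s^2 * (p j * ‖c j‖^2)) := by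
        refine Finset.sum_congr rfl fun j _ => ?_
        rw [hrw j, expand j]; ring
    _ = ‖a‖^2 - 2*s*⟪a, gt - gs⟫ + s^2 * ∑ j, p j * ‖c j‖^2 := by
        rw [Finset.sum_add_distrib, Finset.sum_sub_distrib, ← Finset.sum_mul, hp1,
          ← Finset.mul_sum, ← Finset.mul_sum, hcross]
        ring
    _ ≤ ‖a‖^2 - 2*s*⟪a, gt - gs⟫ + s^2 * ((2/((n:ℝ)*pmin)) * (Ut + Ur)) := by
        have := mul_le_mul_of_nonneg_left hquad (sq_nonneg s)
        linarith
    _ = ‖a‖ ^ 2 - 2 * s * ⟪a, gt - gs⟫ + s ^ 2 * (2 / ((n:ℝ) * pmin)) * (Ut + Ur) := by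
        ring


omit [CompleteSpace F] in
lemma step_exp_bound' {n : ℕ} (hn : 0 < n) (p : Fin n → ℝ) (hp : ∀ j, 0 < p j)
    (hp1 : ∑ j, p j = 1)
    (pmin : ℝ) (hpmin0 : 0 < pmin) (hpminle : ∀ j, pmin ≤ p j)
    (a gr gs gt : F) (s : ℝ) (vt vr vs : Fin n → F)
    (hgt : gt = (1/(n:ℝ)) • ∑ j, vt j)
    (hgr : gr = (1/(n:ℝ)) • ∑ j, vr j)
    (hgs : gs = (1/(n:ℝ)) • ∑ j, vs j)
    (Ut Ur : ℝ) (hUt : ∀ j, ‖vt j - vs j‖ ^ 2 ≤ Ut) (hUr : ∀ j, ‖vr j - vs j‖ ^ 2 ≤ Ur) :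
    ∑ j, p j * ‖a + s • ((1/((n:ℝ) * p j)) • (vt j - vr j) + gr) - s • gs‖ ^ 2
      ≤ ‖a‖ ^ 2 + 2 * s * ⟪a, gt - gs⟫ + s ^ 2 * (2 / ((n:ℝ) * pmin)) * (Ut + Ur) := by
  have h := step_exp_bound hn p hp hp1 pmin hpmin0 hpminle (-a) gr gs gt s vt vr vs
    hgt hgr hgs Ut Ur hUt hUr
  have heq : ∀ j : Fin n, ‖a + s • ((1/((n:ℝ) * p j)) • (vt j - vr j) + gr) - s • gs‖ ^ 2
      = ‖(-a) - s • ((1/((n:ℝ) * p j)) • (vt j - vr j) + gr) + s • gs‖ ^ 2 := by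
    intro j
    rw [show (-a) - s • ((1/((n:ℝ) * p j)) • (vt j - vr j) + gr) + s • gs
        = -(a + s • ((1/((n:ℝ) * p j)) • (vt j - vr j) + gr) - s • gs) by module, norm_neg]
  simp_rw [heq]
  rw [norm_neg, inner_neg_left] at h
  linarith

end AuxSVRG

section AuxProb
variable {Ω : Type*} [MeasurableSpace Ω] (μP : Measure Ω) [IsProbabilityMeasure μP]

omit [MeasurableSpace Ω] in
lemma comp_fin_eq_sum_indicator {n : ℕ} (l : Ω → Fin n) (h : Fin n → ℝ) :
    (fun ω => h (l ω)) = fun ω => ∑ j, ({ω | l ω = j}.indicator (fun _ => h j) ω) := by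
  funext ω
  rw [Finset.sum_eq_single (l ω)]
  · simp
  · intro j _ hj
    exact Set.indicator_of_notMem (fun hh => hj hh.symm) _
  · intro h; exact absurd (Finset.mem_univ _) h

lemma integrable_comp_fin {n : ℕ} (l : Ω → Fin n) (hl : Measurable l) (h : Fin n → ℝ) :
    Integrable (fun ω => h (l ω)) μP := by
  rw [comp_fin_eq_sum_indicator]
  exact integrable_finset_sum _ fun j _ =>
    (integrable_const (h j)).indicator (hl (measurableSet_singleton j))

lemma integral_comp_fin {n : ℕ} (l : Ω → Fin n) (hl : Measurable l) (p : Fin n → ℝ)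
    (hp : ∀ j, 0 ≤ p j) (hlaw : ∀ j, μP {ω | l ω = j} = ENNReal.ofReal (p j))
    (h : Fin n → ℝ) :
    ∫ ω, h (l ω) ∂μP = ∑ j, p j * h j := by
  have hms : ∀ j : Fin n, MeasurableSet {ω | l ω = j} := fun j =>
    hl (measurableSet_singleton j)
  rw [comp_fin_eq_sum_indicator, integral_finset_sum _ (fun j _ =>
    (integrable_const (h j)).indicator (hms j))]
  refine Finset.sum_congr rfl fun j _ => ?_
  rw [integral_indicator_const _ (hms j), measureReal_def, hlaw j,
    ENNReal.toReal_ofReal (hp j), smul_eq_mul]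

end AuxProb

lemma svrg_keyi_arith (q s μx μy Lxx Lxy Lyx Lyy a b ar br Sx Sy Ix Iy : ℝ)
    (hs : 0 ≤ s)
    (hx : Sx ≤ a^2 - 2*s*Ix + s^2*(2/q)*((2*Lxx^2*a^2+2*Lxy^2*b^2)+(2*Lxx^2*ar^2+2*Lxy^2*br^2)))
    (hy : Sy ≤ b^2 + 2*s*Iy + s^2*(2/q)*((2*Lyx^2*a^2+2*Lyy^2*b^2)+(2*Lyx^2*ar^2+2*Lyy^2*br^2)))
    (hc : -Ix + Iy ≤ -(μx*a^2) - μy*b^2) :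
    Sx + Sy ≤ (1-2*s*μx+4*s^2/q*(Lxx^2+Lyx^2))*a^2 + (1-2*s*μy+4*s^2/q*(Lxy^2+Lyy^2))*b^2
      + (4*s^2/q*(Lxx^2+Lyx^2))*ar^2 + (4*s^2/q*(Lxy^2+Lyy^2))*br^2 := by
  have hc2 := mul_le_mul_of_nonneg_left hc (by linarith : (0:ℝ) ≤ 2*s)
  ring_nf at hx hy hc2 ⊢
  linarith [hx, hy, hc2]

lemma svrg_final_arith (q s μx μy Lxx Lxy Lyx Lyy A B Ar Br : ℝ)
    (hxA : 4*s^2/q*Lxx^2 * A ≤ s*μx * A)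
    (hyB : 4*s^2/q*Lyy^2 * B ≤ s*μy * B) :
    (1-2*s*μx+4*s^2/q*(Lxx^2+Lyx^2))*A + (1-2*s*μy+4*s^2/q*(Lxy^2+Lyy^2))*B
      + (4*s^2/q*(Lxx^2+Lyx^2))*Ar + (4*s^2/q*(Lxy^2+Lyy^2))*Br
    ≤ (1 - μx*s + 4*s^2*Lyx^2/q)*A + (1 - μy*s + 4*s^2*Lxy^2/q)*B
      + (4*s^2*(Lxx^2+Lyx^2)/q)*Ar + (4*s^2*(Lyy^2+Lxy^2)/q)*Br := by
  ring_nf at hxA hyB ⊢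
  linarith [hxA, hyB]

set_option maxHeartbeats 2000000 in
/-- Compact one-step SVRG bound (Corollary `exp_xkt_ykt_svrg`, finite-sum setting): under
the setting of the one-step SVRG-oracle bound, with `L = max{L_xx,L_yy,L_xy,L_yx} > 0`,
`μ = min{μ_x,μ_y} > 0` and the step size `s = μ n p_min/(24 L²)`, the Bregman-distance
terms can be dropped. -/
theorem compact_one_step_svrg_bound {dx dy m n : ℕ} (hm : 0 < m) (hn : 0 < n)
    {Ω : Type*} [MeasurableSpace Ω] (μP : Measure Ω) [IsProbabilityMeasure μP]
    (fij : Fin m → Fin n → EuclideanSpace ℝ (Fin dx) → EuclideanSpace ℝ (Fin dy) → ℝ)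
    (hdx : ∀ i j y, Differentiable ℝ (fun x => fij i j x y))
    (hdy : ∀ i j x, Differentiable ℝ (fun y => fij i j x y))
    (hconvx : ∀ i j y, ConvexOn ℝ Set.univ (fun x => fij i j x y))
    (hconcy : ∀ i j x, ConcaveOn ℝ Set.univ (fun y => fij i j x y))
    (Lxx Lyy Lxy Lyx : ℝ)
    (hLxx : ∀ i j y x₁ x₂, ‖gradient (fun x => fij i j x y) x₁
        - gradient (fun x => fij i j x y) x₂‖ ≤ Lxx * ‖x₁ - x₂‖)
    (hLyy : ∀ i j x y₁ y₂, ‖gradient (fun y => fij i j x y) y₁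
        - gradient (fun y => fij i j x y) y₂‖ ≤ Lyy * ‖y₁ - y₂‖)
    (hLxy : ∀ i j x y₁ y₂, ‖gradient (fun x' => fij i j x' y₁) x
        - gradient (fun x' => fij i j x' y₂) x‖ ≤ Lxy * ‖y₁ - y₂‖)
    (hLyx : ∀ i j y x₁ x₂, ‖gradient (fun y' => fij i j x₁ y') y
        - gradient (fun y' => fij i j x₂ y') y‖ ≤ Lyx * ‖x₁ - x₂‖)
    (fi : Fin m → EuclideanSpace ℝ (Fin dx) → EuclideanSpace ℝ (Fin dy) → ℝ)
    (hfi : ∀ i x y, fi i x y = (1 / (n : ℝ)) * ∑ j, fij i j x y)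
    (μx μy : ℝ)
    (hsc : ∀ i y x₁ x₂, fi i x₂ y + ⟪gradient (fun x => fi i x y) x₂, x₁ - x₂⟫
        + μx / 2 * ‖x₁ - x₂‖ ^ 2 ≤ fi i x₁ y)
    (hscc : ∀ i x y₁ y₂, fi i x y₁ ≤ fi i x y₂ + ⟪gradient (fun y => fi i x y) y₂, y₁ - y₂⟫
        - μy / 2 * ‖y₁ - y₂‖ ^ 2)
    (p : Fin m → Fin n → ℝ) (hp : ∀ i j, 0 < p i j) (hp1 : ∀ i, ∑ j, p i j = 1)
    (pmin : ℝ) (hpmin : IsLeast {t : ℝ | ∃ i j, p i j = t} pmin)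
    (xs : EuclideanSpace ℝ (Fin dx)) (ys : EuclideanSpace ℝ (Fin dy))
    (xt xr : Fin m → EuclideanSpace ℝ (Fin dx)) (yt yr : Fin m → EuclideanSpace ℝ (Fin dy))
    (l : Fin m → Ω → Fin n) (hlmeas : ∀ i, Measurable (l i))
    (hlindep : ProbabilityTheory.iIndepFun l μP)
    (hllaw : ∀ i j, μP {ω | l i ω = j} = ENNReal.ofReal (p i j))
    -- the constants `L`, `μ` and the step size
    (L μ' : ℝ) (hL : L = max (max Lxx Lyy) (max Lxy Lyx)) (hL0 : 0 < L)
    (hμ' : μ' = min μx μy) (hμ0 : 0 < μ')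
    (s : ℝ) (hs : s = μ' * n * pmin / (24 * L ^ 2)) :
    (∫ ω, ∑ i, ‖xt i - xs
          - s • ((1 / ((n : ℝ) * p i (l i ω))) •
                (gradient (fun x => fij i (l i ω) x (yt i)) (xt i)
                  - gradient (fun x => fij i (l i ω) x (yr i)) (xr i))
              + gradient (fun x => fi i x (yr i)) (xr i))
          + s • gradient (fun x => fi i x ys) xs‖ ^ 2 ∂μP)
      + (∫ ω, ∑ i, ‖yt i - ys
          + s • ((1 / ((n : ℝ) * p i (l i ω))) •
                (gradient (fun y => fij i (l i ω) (xt i) y) (yt i)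
                  - gradient (fun y => fij i (l i ω) (xr i) y) (yr i))
              + gradient (fun y => fi i (xr i) y) (yr i))
          - s • gradient (fun y => fi i xs y) ys‖ ^ 2 ∂μP) ≤
      (1 - μx * s + 4 * s ^ 2 * Lyx ^ 2 / (n * pmin)) * ∑ i, ‖xt i - xs‖ ^ 2
        + (1 - μy * s + 4 * s ^ 2 * Lxy ^ 2 / (n * pmin)) * ∑ i, ‖yt i - ys‖ ^ 2
        + (4 * s ^ 2 * (Lxx ^ 2 + Lyx ^ 2) / (n * pmin)) * ∑ i, ‖xr i - xs‖ ^ 2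
        + (4 * s ^ 2 * (Lyy ^ 2 + Lxy ^ 2) / (n * pmin)) * ∑ i, ‖yr i - ys‖ ^ 2 := by
  have hnR : (0:ℝ) < n := by exact_mod_cast hn
  obtain ⟨⟨i0, j0, hpij0⟩, hlb⟩ := hpmin
  have hpmin0 : 0 < pmin := hpij0 ▸ hp i0 j0
  have hpminle : ∀ i j, pmin ≤ p i j := fun i j => hlb ⟨i, j, rfl⟩
  have hq : (0:ℝ) < (n:ℝ) * pmin := mul_pos hnR hpmin0
  have hL2 : (0:ℝ) < 24 * L^2 := mul_pos (by norm_num) (pow_pos hL0 2)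
  have hs0 : 0 < s := by
    rw [hs]; exact div_pos (mul_pos (mul_pos hμ0 hnR) hpmin0) hL2
  have hμx' : μ' ≤ μx := hμ' ▸ min_le_left _ _
  have hμy' : μ' ≤ μy := hμ' ▸ min_le_right _ _
  -- gradients of the averages
  have hgradx : ∀ (i : Fin m) (x : EuclideanSpace ℝ (Fin dx)) (y : EuclideanSpace ℝ (Fin dy)),
      gradient (fun x' => fi i x' y) x
        = (1/(n:ℝ)) • ∑ j, gradient (fun x' => fij i j x' y) x := by
    intro i x y
    have hfun : (fun x' => fi i x' y) = fun x' => (1/(n:ℝ)) * ∑ j, fij i j x' y :=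
      funext fun x' => hfi i x' y
    rw [hfun]
    exact (gradient_const_mul_sum _ x (fun j => (hdx i j y).differentiableAt) _).gradient
  have hgrady : ∀ (i : Fin m) (x : EuclideanSpace ℝ (Fin dx)) (y : EuclideanSpace ℝ (Fin dy)),
      gradient (fun y' => fi i x y') y
        = (1/(n:ℝ)) • ∑ j, gradient (fun y' => fij i j x y') y := by
    intro i x y
    have hfun : (fun y' => fi i x y') = fun y' => (1/(n:ℝ)) * ∑ j, fij i j x y' :=
      funext fun y' => hfi i x y'
    rw [hfun]
    exact (gradient_const_mul_sum _ y (fun j => (hdy i j x).differentiableAt) _).gradient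
  -- strong convexity/concavity cross bound
  have hcrossineq : ∀ i : Fin m,
      -⟪xt i - xs, gradient (fun x => fi i x (yt i)) (xt i)
          - gradient (fun x => fi i x ys) xs⟫
      + ⟪yt i - ys, gradient (fun y => fi i (xt i) y) (yt i)
          - gradient (fun y => fi i xs y) ys⟫
      ≤ -(μx * ‖xt i - xs‖^2) - μy * ‖yt i - ys‖^2 := by
    intro i
    have h1 := hsc i (yt i) xs (xt i)
    have h2 := hsc i ys (xt i) xs
    have h3 := hscc i (xt i) ys (yt i)
    have h4 := hscc i xs (yt i) ys
    have e1 : ⟪gradient (fun x => fi i x (yt i)) (xt i), xs - xt i⟫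
        = -⟪xt i - xs, gradient (fun x => fi i x (yt i)) (xt i)⟫ := by
      rw [show xs - xt i = -(xt i - xs) from (neg_sub _ _).symm, inner_neg_right,
        real_inner_comm]
    have e2 : ⟪gradient (fun x => fi i x ys) xs, xt i - xs⟫
        = ⟪xt i - xs, gradient (fun x => fi i x ys) xs⟫ := real_inner_comm _ _
    have e3 : ⟪gradient (fun y => fi i (xt i) y) (yt i), ys - yt i⟫
        = -⟪yt i - ys, gradient (fun y => fi i (xt i) y) (yt i)⟫ := by
      rw [show ys - yt i = -(yt i - ys) from (neg_sub _ _).symm, inner_neg_right,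
        real_inner_comm]
    have e4 : ⟪gradient (fun y => fi i xs y) ys, yt i - ys⟫
        = ⟪yt i - ys, gradient (fun y => fi i xs y) ys⟫ := real_inner_comm _ _
    have n1 : ‖xs - xt i‖ = ‖xt i - xs‖ := norm_sub_rev _ _
    have n3 : ‖ys - yt i‖ = ‖yt i - ys‖ := norm_sub_rev _ _
    rw [e1, n1] at h1
    rw [e2] at h2
    rw [e3, n3] at h3
    rw [e4] at h4
    rw [inner_sub_right, inner_sub_right]
    linarith
  -- Lipschitz square bounds
  have hUtx : ∀ (i : Fin m) (j : Fin n),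
      ‖gradient (fun x => fij i j x (yt i)) (xt i) - gradient (fun x => fij i j x ys) xs‖^2
      ≤ 2*Lxx^2*‖xt i - xs‖^2 + 2*Lxy^2*‖yt i - ys‖^2 := by
    intro i j
    have t1 := hLxx i j (yt i) (xt i) xs
    have t2 := hLxy i j xs (yt i) ys
    have tri : ‖gradient (fun x => fij i j x (yt i)) (xt i)
        - gradient (fun x => fij i j x ys) xs‖
        ≤ Lxx*‖xt i - xs‖ + Lxy*‖yt i - ys‖ := by
      have hdec : gradient (fun x => fij i j x (yt i)) (xt i)
          - gradient (fun x => fij i j x ys) xs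
          = (gradient (fun x => fij i j x (yt i)) (xt i)
              - gradient (fun x => fij i j x (yt i)) xs)
            + (gradient (fun x => fij i j x (yt i)) xs
              - gradient (fun x => fij i j x ys) xs) := by abel
      rw [hdec]
      exact (norm_add_le _ _).trans (add_le_add t1 t2)
    nlinarith [mul_self_le_mul_self (norm_nonneg (gradient (fun x => fij i j x (yt i)) (xt i)
        - gradient (fun x => fij i j x ys) xs)) tri,
      sq_nonneg (Lxx*‖xt i - xs‖ - Lxy*‖yt i - ys‖),
      norm_nonneg (gradient (fun x => fij i j x (yt i)) (xt i)
        - gradient (fun x => fij i j x ys) xs)]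
  have hUrx : ∀ (i : Fin m) (j : Fin n),
      ‖gradient (fun x => fij i j x (yr i)) (xr i) - gradient (fun x => fij i j x ys) xs‖^2
      ≤ 2*Lxx^2*‖xr i - xs‖^2 + 2*Lxy^2*‖yr i - ys‖^2 := by
    intro i j
    have t1 := hLxx i j (yr i) (xr i) xs
    have t2 := hLxy i j xs (yr i) ys
    have tri : ‖gradient (fun x => fij i j x (yr i)) (xr i)
        - gradient (fun x => fij i j x ys) xs‖
        ≤ Lxx*‖xr i - xs‖ + Lxy*‖yr i - ys‖ := by
      have hdec : gradient (fun x => fij i j x (yr i)) (xr i)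
          - gradient (fun x => fij i j x ys) xs
          = (gradient (fun x => fij i j x (yr i)) (xr i)
              - gradient (fun x => fij i j x (yr i)) xs)
            + (gradient (fun x => fij i j x (yr i)) xs
              - gradient (fun x => fij i j x ys) xs) := by abel
      rw [hdec]
      exact (norm_add_le _ _).trans (add_le_add t1 t2)
    nlinarith [mul_self_le_mul_self (norm_nonneg (gradient (fun x => fij i j x (yr i)) (xr i)
        - gradient (fun x => fij i j x ys) xs)) tri,
      sq_nonneg (Lxx*‖xr i - xs‖ - Lxy*‖yr i - ys‖),
      norm_nonneg (gradient (fun x => fij i j x (yr i)) (xr i)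
        - gradient (fun x => fij i j x ys) xs)]
  have hUty : ∀ (i : Fin m) (j : Fin n),
      ‖gradient (fun y => fij i j (xt i) y) (yt i) - gradient (fun y => fij i j xs y) ys‖^2
      ≤ 2*Lyx^2*‖xt i - xs‖^2 + 2*Lyy^2*‖yt i - ys‖^2 := by
    intro i j
    have t1 := hLyy i j (xt i) (yt i) ys
    have t2 := hLyx i j ys (xt i) xs
    have tri : ‖gradient (fun y => fij i j (xt i) y) (yt i)
        - gradient (fun y => fij i j xs y) ys‖
        ≤ Lyy*‖yt i - ys‖ + Lyx*‖xt i - xs‖ := by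
      have hdec : gradient (fun y => fij i j (xt i) y) (yt i)
          - gradient (fun y => fij i j xs y) ys
          = (gradient (fun y => fij i j (xt i) y) (yt i)
              - gradient (fun y => fij i j (xt i) y) ys)
            + (gradient (fun y => fij i j (xt i) y) ys
              - gradient (fun y => fij i j xs y) ys) := by abel
      rw [hdec]
      exact (norm_add_le _ _).trans (add_le_add t1 t2)
    nlinarith [mul_self_le_mul_self (norm_nonneg (gradient (fun y => fij i j (xt i) y) (yt i)
        - gradient (fun y => fij i j xs y) ys)) tri,
      sq_nonneg (Lyy*‖yt i - ys‖ - Lyx*‖xt i - xs‖),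
      norm_nonneg (gradient (fun y => fij i j (xt i) y) (yt i)
        - gradient (fun y => fij i j xs y) ys)]
  have hUry : ∀ (i : Fin m) (j : Fin n),
      ‖gradient (fun y => fij i j (xr i) y) (yr i) - gradient (fun y => fij i j xs y) ys‖^2
      ≤ 2*Lyx^2*‖xr i - xs‖^2 + 2*Lyy^2*‖yr i - ys‖^2 := by
    intro i j
    have t1 := hLyy i j (xr i) (yr i) ys
    have t2 := hLyx i j ys (xr i) xs
    have tri : ‖gradient (fun y => fij i j (xr i) y) (yr i)
        - gradient (fun y => fij i j xs y) ys‖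
        ≤ Lyy*‖yr i - ys‖ + Lyx*‖xr i - xs‖ := by
      have hdec : gradient (fun y => fij i j (xr i) y) (yr i)
          - gradient (fun y => fij i j xs y) ys
          = (gradient (fun y => fij i j (xr i) y) (yr i)
              - gradient (fun y => fij i j (xr i) y) ys)
            + (gradient (fun y => fij i j (xr i) y) ys
              - gradient (fun y => fij i j xs y) ys) := by abel
      rw [hdec]
      exact (norm_add_le _ _).trans (add_le_add t1 t2)
    nlinarith [mul_self_le_mul_self (norm_nonneg (gradient (fun y => fij i j (xr i) y) (yr i)
        - gradient (fun y => fij i j xs y) ys)) tri,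
      sq_nonneg (Lyy*‖yr i - ys‖ - Lyx*‖xr i - xs‖),
      norm_nonneg (gradient (fun y => fij i j (xr i) y) (yr i)
        - gradient (fun y => fij i j xs y) ys)]
  -- per-sample expectation bounds
  have hxbound : ∀ i : Fin m,
      ∑ j, p i j * ‖xt i - xs - s • ((1/((n:ℝ) * p i j)) •
          (gradient (fun x => fij i j x (yt i)) (xt i)
            - gradient (fun x => fij i j x (yr i)) (xr i))
        + gradient (fun x => fi i x (yr i)) (xr i))
        + s • gradient (fun x => fi i x ys) xs‖ ^ 2
      ≤ ‖xt i - xs‖^2 - 2*s*⟪xt i - xs, gradient (fun x => fi i x (yt i)) (xt i)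
            - gradient (fun x => fi i x ys) xs⟫
        + s^2 * (2/((n:ℝ)*pmin)) *
          ((2*Lxx^2*‖xt i - xs‖^2 + 2*Lxy^2*‖yt i - ys‖^2)
            + (2*Lxx^2*‖xr i - xs‖^2 + 2*Lxy^2*‖yr i - ys‖^2)) := by
    intro i
    exact step_exp_bound hn (p i) (hp i) (hp1 i) pmin hpmin0 (hpminle i) (xt i - xs)
      (gradient (fun x => fi i x (yr i)) (xr i)) (gradient (fun x => fi i x ys) xs)
      (gradient (fun x => fi i x (yt i)) (xt i)) s
      (fun j => gradient (fun x => fij i j x (yt i)) (xt i))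
      (fun j => gradient (fun x => fij i j x (yr i)) (xr i))
      (fun j => gradient (fun x => fij i j x ys) xs)
      (hgradx i (xt i) (yt i)) (hgradx i (xr i) (yr i)) (hgradx i xs ys)
      _ _ (hUtx i) (hUrx i)
  have hybound : ∀ i : Fin m,
      ∑ j, p i j * ‖yt i - ys + s • ((1/((n:ℝ) * p i j)) •
          (gradient (fun y => fij i j (xt i) y) (yt i)
            - gradient (fun y => fij i j (xr i) y) (yr i))
        + gradient (fun y => fi i (xr i) y) (yr i))
        - s • gradient (fun y => fi i xs y) ys‖ ^ 2
      ≤ ‖yt i - ys‖^2 + 2*s*⟪yt i - ys, gradient (fun y => fi i (xt i) y) (yt i)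
            - gradient (fun y => fi i xs y) ys⟫
        + s^2 * (2/((n:ℝ)*pmin)) *
          ((2*Lyx^2*‖xt i - xs‖^2 + 2*Lyy^2*‖yt i - ys‖^2)
            + (2*Lyx^2*‖xr i - xs‖^2 + 2*Lyy^2*‖yr i - ys‖^2)) := by
    intro i
    exact step_exp_bound' hn (p i) (hp i) (hp1 i) pmin hpmin0 (hpminle i) (yt i - ys)
      (gradient (fun y => fi i (xr i) y) (yr i)) (gradient (fun y => fi i xs y) ys)
      (gradient (fun y => fi i (xt i) y) (yt i)) s
      (fun j => gradient (fun y => fij i j (xt i) y) (yt i))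
      (fun j => gradient (fun y => fij i j (xr i) y) (yr i))
      (fun j => gradient (fun y => fij i j xs y) ys)
      (hgrady i (xt i) (yt i)) (hgrady i (xr i) (yr i)) (hgrady i xs ys)
      _ _ (hUty i) (hUry i)
  -- compute the two integrals
  have hIx : (∫ ω, ∑ i, ‖xt i - xs
          - s • ((1 / ((n : ℝ) * p i (l i ω))) •
                (gradient (fun x => fij i (l i ω) x (yt i)) (xt i)
                  - gradient (fun x => fij i (l i ω) x (yr i)) (xr i))
              + gradient (fun x => fi i x (yr i)) (xr i))
          + s • gradient (fun x => fi i x ys) xs‖ ^ 2 ∂μP)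
      = ∑ i, ∑ j, p i j * ‖xt i - xs - s • ((1/((n:ℝ) * p i j)) •
          (gradient (fun x => fij i j x (yt i)) (xt i)
            - gradient (fun x => fij i j x (yr i)) (xr i))
        + gradient (fun x => fi i x (yr i)) (xr i))
        + s • gradient (fun x => fi i x ys) xs‖ ^ 2 := by
    rw [integral_finset_sum _ (fun i _ => integrable_comp_fin μP (l i) (hlmeas i)
      (fun j => ‖xt i - xs - s • ((1/((n:ℝ) * p i j)) •
          (gradient (fun x => fij i j x (yt i)) (xt i)
            - gradient (fun x => fij i j x (yr i)) (xr i))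
        + gradient (fun x => fi i x (yr i)) (xr i))
        + s • gradient (fun x => fi i x ys) xs‖ ^ 2))]
    exact Finset.sum_congr rfl fun i _ => integral_comp_fin μP (l i) (hlmeas i) (p i)
      (fun j => (hp i j).le) (hllaw i) (fun j => ‖xt i - xs - s • ((1/((n:ℝ) * p i j)) •
          (gradient (fun x => fij i j x (yt i)) (xt i)
            - gradient (fun x => fij i j x (yr i)) (xr i))
        + gradient (fun x => fi i x (yr i)) (xr i))
        + s • gradient (fun x => fi i x ys) xs‖ ^ 2)
  have hIy : (∫ ω, ∑ i, ‖yt i - ys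
          + s • ((1 / ((n : ℝ) * p i (l i ω))) •
                (gradient (fun y => fij i (l i ω) (xt i) y) (yt i)
                  - gradient (fun y => fij i (l i ω) (xr i) y) (yr i))
              + gradient (fun y => fi i (xr i) y) (yr i))
          - s • gradient (fun y => fi i xs y) ys‖ ^ 2 ∂μP)
      = ∑ i, ∑ j, p i j * ‖yt i - ys + s • ((1/((n:ℝ) * p i j)) •
          (gradient (fun y => fij i j (xt i) y) (yt i)
            - gradient (fun y => fij i j (xr i) y) (yr i))
        + gradient (fun y => fi i (xr i) y) (yr i))
        - s • gradient (fun y => fi i xs y) ys‖ ^ 2 := by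
    rw [integral_finset_sum _ (fun i _ => integrable_comp_fin μP (l i) (hlmeas i)
      (fun j => ‖yt i - ys + s • ((1/((n:ℝ) * p i j)) •
          (gradient (fun y => fij i j (xt i) y) (yt i)
            - gradient (fun y => fij i j (xr i) y) (yr i))
        + gradient (fun y => fi i (xr i) y) (yr i))
        - s • gradient (fun y => fi i xs y) ys‖ ^ 2))]
    exact Finset.sum_congr rfl fun i _ => integral_comp_fin μP (l i) (hlmeas i) (p i)
      (fun j => (hp i j).le) (hllaw i) (fun j => ‖yt i - ys + s • ((1/((n:ℝ) * p i j)) •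
          (gradient (fun y => fij i j (xt i) y) (yt i)
            - gradient (fun y => fij i j (xr i) y) (yr i))
        + gradient (fun y => fi i (xr i) y) (yr i))
        - s • gradient (fun y => fi i xs y) ys‖ ^ 2)
  rw [hIx, hIy]
  -- per-i combined bound
  have keyi : ∀ i : Fin m,
      (∑ j, p i j * ‖xt i - xs - s • ((1/((n:ℝ) * p i j)) •
          (gradient (fun x => fij i j x (yt i)) (xt i)
            - gradient (fun x => fij i j x (yr i)) (xr i))
        + gradient (fun x => fi i x (yr i)) (xr i))
        + s • gradient (fun x => fi i x ys) xs‖ ^ 2)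
      + (∑ j, p i j * ‖yt i - ys + s • ((1/((n:ℝ) * p i j)) •
          (gradient (fun y => fij i j (xt i) y) (yt i)
            - gradient (fun y => fij i j (xr i) y) (yr i))
        + gradient (fun y => fi i (xr i) y) (yr i))
        - s • gradient (fun y => fi i xs y) ys‖ ^ 2)
      ≤ (1 - 2*s*μx + 4*s^2/((n:ℝ)*pmin)*(Lxx^2 + Lyx^2)) * ‖xt i - xs‖^2
        + (1 - 2*s*μy + 4*s^2/((n:ℝ)*pmin)*(Lxy^2 + Lyy^2)) * ‖yt i - ys‖^2
        + (4*s^2/((n:ℝ)*pmin)*(Lxx^2 + Lyx^2)) * ‖xr i - xs‖^2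
        + (4*s^2/((n:ℝ)*pmin)*(Lxy^2 + Lyy^2)) * ‖yr i - ys‖^2 := by
    intro i
    exact svrg_keyi_arith ((n:ℝ)*pmin) s μx μy Lxx Lxy Lyx Lyy
      ‖xt i - xs‖ ‖yt i - ys‖ ‖xr i - xs‖ ‖yr i - ys‖ _ _ _ _ hs0.le
      (hxbound i) (hybound i) (hcrossineq i)
  calc (∑ i, ∑ j, p i j * ‖xt i - xs - s • ((1/((n:ℝ) * p i j)) •
          (gradient (fun x => fij i j x (yt i)) (xt i)
            - gradient (fun x => fij i j x (yr i)) (xr i))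
        + gradient (fun x => fi i x (yr i)) (xr i))
        + s • gradient (fun x => fi i x ys) xs‖ ^ 2)
      + (∑ i, ∑ j, p i j * ‖yt i - ys + s • ((1/((n:ℝ) * p i j)) •
          (gradient (fun y => fij i j (xt i) y) (yt i)
            - gradient (fun y => fij i j (xr i) y) (yr i))
        + gradient (fun y => fi i (xr i) y) (yr i))
        - s • gradient (fun y => fi i xs y) ys‖ ^ 2)
      = ∑ i, ((∑ j, p i j * ‖xt i - xs - s • ((1/((n:ℝ) * p i j)) •
          (gradient (fun x => fij i j x (yt i)) (xt i)
            - gradient (fun x => fij i j x (yr i)) (xr i))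
        + gradient (fun x => fi i x (yr i)) (xr i))
        + s • gradient (fun x => fi i x ys) xs‖ ^ 2)
        + (∑ j, p i j * ‖yt i - ys + s • ((1/((n:ℝ) * p i j)) •
          (gradient (fun y => fij i j (xt i) y) (yt i)
            - gradient (fun y => fij i j (xr i) y) (yr i))
        + gradient (fun y => fi i (xr i) y) (yr i))
        - s • gradient (fun y => fi i xs y) ys‖ ^ 2)) := by
        rw [← Finset.sum_add_distrib]
    _ ≤ ∑ i, ((1 - 2*s*μx + 4*s^2/((n:ℝ)*pmin)*(Lxx^2 + Lyx^2)) * ‖xt i - xs‖^2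
        + (1 - 2*s*μy + 4*s^2/((n:ℝ)*pmin)*(Lxy^2 + Lyy^2)) * ‖yt i - ys‖^2
        + (4*s^2/((n:ℝ)*pmin)*(Lxx^2 + Lyx^2)) * ‖xr i - xs‖^2
        + (4*s^2/((n:ℝ)*pmin)*(Lxy^2 + Lyy^2)) * ‖yr i - ys‖^2) :=
      Finset.sum_le_sum fun i _ => keyi i
    _ = (1 - 2*s*μx + 4*s^2/((n:ℝ)*pmin)*(Lxx^2 + Lyx^2)) * ∑ i, ‖xt i - xs‖^2
        + (1 - 2*s*μy + 4*s^2/((n:ℝ)*pmin)*(Lxy^2 + Lyy^2)) * ∑ i, ‖yt i - ys‖^2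
        + (4*s^2/((n:ℝ)*pmin)*(Lxx^2 + Lyx^2)) * ∑ i, ‖xr i - xs‖^2
        + (4*s^2/((n:ℝ)*pmin)*(Lxy^2 + Lyy^2)) * ∑ i, ‖yr i - ys‖^2 := by
        simp only [Finset.sum_add_distrib, Finset.mul_sum]
    _ ≤ _ := by
        have hcoeff : ∀ C μc : ℝ, 0 ≤ C → C ≤ L → μ' ≤ μc →
            4*s^2/((n:ℝ)*pmin)*C^2 ≤ s*μc := by
          intro C μc hC0 hCL hμc
          have hC2 : C^2 ≤ L^2 := by nlinarith
          rw [div_mul_eq_mul_div, div_le_iff₀ hq]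
          have h1 : 4*s*C^2 ≤ μc*((n:ℝ)*pmin) := by
            have heq : 4*s*C^2 = μ'*((n:ℝ)*pmin)*C^2/(6*L^2) := by
              rw [hs]; field_simp; ring
            rw [heq, div_le_iff₀ (mul_pos (by norm_num : (0:ℝ) < 6) (pow_pos hL0 2))]
            nlinarith [mul_le_mul_of_nonneg_left hC2 (mul_pos hμ0 hq).le,
              mul_le_mul_of_nonneg_right hμc (mul_pos hq (pow_pos hL0 2)).le,
              mul_pos (lt_of_lt_of_le hμ0 hμc) (mul_pos hq (pow_pos hL0 2))]
          nlinarith [mul_le_mul_of_nonneg_left h1 hs0.le]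
        have hA0 : (0:ℝ) ≤ ∑ i, ‖xt i - xs‖^2 := Finset.sum_nonneg fun i _ => sq_nonneg _
        have hB0 : (0:ℝ) ≤ ∑ i, ‖yt i - ys‖^2 := Finset.sum_nonneg fun i _ => sq_nonneg _
        have hxA : 4*s^2/((n:ℝ)*pmin)*Lxx^2 * (∑ i, ‖xt i - xs‖^2)
            ≤ s*μx * (∑ i, ‖xt i - xs‖^2) := by
          rcases eq_or_lt_of_le hA0 with hA | hA
          · rw [← hA]; simp
          · have hex : ∃ i, xt i ≠ xs := by
              by_contra hcon
              push_neg at hcon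
              have hz : ∑ i, ‖xt i - xs‖^2 = (0:ℝ) :=
                Finset.sum_eq_zero fun i _ => by rw [hcon i, sub_self]; simp
              linarith
            obtain ⟨i, hi⟩ := hex
            have hnorm : 0 < ‖xt i - xs‖ := norm_pos_iff.2 (sub_ne_zero.2 hi)
            have hLxx0 : 0 ≤ Lxx := by
              have h := hLxx i ⟨0, hn⟩ (yt i) (xt i) xs
              have h0 : 0 * ‖xt i - xs‖ ≤ Lxx * ‖xt i - xs‖ := by
                rw [zero_mul]; exact le_trans (norm_nonneg _) h
              exact le_of_mul_le_mul_right h0 hnorm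
            have hLxxL : Lxx ≤ L := by
              rw [hL]; exact le_trans (le_max_left _ _) (le_max_left _ _)
            exact mul_le_mul_of_nonneg_right (hcoeff Lxx μx hLxx0 hLxxL hμx') hA0
        have hyB : 4*s^2/((n:ℝ)*pmin)*Lyy^2 * (∑ i, ‖yt i - ys‖^2)
            ≤ s*μy * (∑ i, ‖yt i - ys‖^2) := by
          rcases eq_or_lt_of_le hB0 with hB | hB
          · rw [← hB]; simp
          · have hex : ∃ i, yt i ≠ ys := by
              by_contra hcon
              push_neg at hcon
              have hz : ∑ i, ‖yt i - ys‖^2 = (0:ℝ) :=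
                Finset.sum_eq_zero fun i _ => by rw [hcon i, sub_self]; simp
              linarith
            obtain ⟨i, hi⟩ := hex
            have hnorm : 0 < ‖yt i - ys‖ := norm_pos_iff.2 (sub_ne_zero.2 hi)
            have hLyy0 : 0 ≤ Lyy := by
              have h := hLyy i ⟨0, hn⟩ (xt i) (yt i) ys
              have h0 : 0 * ‖yt i - ys‖ ≤ Lyy * ‖yt i - ys‖ := by
                rw [zero_mul]; exact le_trans (norm_nonneg _) h
              exact le_of_mul_le_mul_right h0 hnorm
            have hLyyL : Lyy ≤ L := by
              rw [hL]; exact le_trans (le_max_right _ _) (le_max_left _ _)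
            exact mul_le_mul_of_nonneg_right (hcoeff Lyy μy hLyy0 hLyyL hμy') hB0
        exact svrg_final_arith ((n:ℝ)*pmin) s μx μy Lxx Lxy Lyx Lyy _ _ _ _ hxA hyB
end

section
/- Feasibility bounds for the C-DPSVRG parameter b_x. Let n ≥ 1 be an integer and p_min ∈ (0, 1/n]; let μ, μ_x, L_xx, L_yx, L be positive reals with μ ≤ μ_x ≤ L_xx ≤ L and L_yx ≤ L; set κ_f := L/μ, κ_x := L_xx/μ_x, s := μ·n·p_min/(24L²), and b_x := s·μ_x − 4s²L_yx²/(np_min) − 8s²(L_xx² + L_yx²)/(np_min). Then n·p_min/(144κ_f²) ≤ b_x < s·μ_x ≤ n·p_min/(24κ_x²) ≤ 1/24; in particular b_x ∈ (0,1). -/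
set_option maxHeartbeats 1000000


/-- Feasibility bounds for the C-DPSVRG parameter `b_x`: with `s = μ n p_min/(24 L²)` and
`b_x = s μ_x - 4 s² L_yx²/(n p_min) - 8 s² (L_xx² + L_yx²)/(n p_min)`, one has
`n p_min/(144 κ_f²) ≤ b_x < s μ_x ≤ n p_min/(24 κ_x²) ≤ 1/24`; in particular `b_x ∈ (0,1)`. -/
theorem cdpsvrg_bx_feasibility
    (n : ℕ) (hn : 1 ≤ n) (pmin : ℝ) (hp : pmin ∈ Set.Ioc (0 : ℝ) (1 / (n : ℝ)))
    (μ μx Lxx Lyx L : ℝ)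
    (hμ : 0 < μ) (hμx : 0 < μx) (hLxx : 0 < Lxx) (hLyx : 0 < Lyx) (hL : 0 < L)
    (h1 : μ ≤ μx) (h2 : μx ≤ Lxx) (h3 : Lxx ≤ L) (h4 : Lyx ≤ L)
    (κf κx : ℝ) (hκf : κf = L / μ) (hκx : κx = Lxx / μx)
    (s bx : ℝ) (hs : s = μ * n * pmin / (24 * L ^ 2))
    (hbx : bx = s * μx - 4 * s ^ 2 * Lyx ^ 2 / (n * pmin)
        - 8 * s ^ 2 * (Lxx ^ 2 + Lyx ^ 2) / (n * pmin)) :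
    n * pmin / (144 * κf ^ 2) ≤ bx ∧
      bx < s * μx ∧
      s * μx ≤ n * pmin / (24 * κx ^ 2) ∧
      n * pmin / (24 * κx ^ 2) ≤ 1 / 24 ∧
      0 < bx ∧ bx < 1 := by
  obtain ⟨hp0, hp1⟩ := hp
  have hn' : (1:ℝ) ≤ (n:ℝ) := by exact_mod_cast hn
  have hn0 : (0:ℝ) < (n:ℝ) := by linarith
  have hP : (0:ℝ) < (n:ℝ) * pmin := by positivity
  have hP1 : (n:ℝ) * pmin ≤ 1 := by
    rw [le_div_iff₀ hn0] at hp1; nlinarith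
  have hLne : L ≠ 0 := ne_of_gt hL
  have hμne : μ ≠ 0 := ne_of_gt hμ
  have hμxne : μx ≠ 0 := ne_of_gt hμx
  have hLxxne : Lxx ≠ 0 := ne_of_gt hLxx
  have hPne : (n:ℝ) * pmin ≠ 0 := ne_of_gt hP
  have e0 : s * μx = μ * μx * ((n:ℝ) * pmin) / (24 * L ^ 2) := by
    rw [hs]; ring
  have e1 : 4 * s ^ 2 * Lyx ^ 2 / ((n:ℝ) * pmin)
      = 4 * Lyx ^ 2 * μ ^ 2 * ((n:ℝ) * pmin) / (576 * L ^ 4) := by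
    rw [hs]; field_simp; ring
  have e2 : 8 * s ^ 2 * (Lxx ^ 2 + Lyx ^ 2) / ((n:ℝ) * pmin)
      = 8 * (Lxx ^ 2 + Lyx ^ 2) * μ ^ 2 * ((n:ℝ) * pmin) / (576 * L ^ 4) := by
    rw [hs]; field_simp; ring
  have e3 : (n:ℝ) * pmin / (144 * (L / μ) ^ 2) = μ ^ 2 * ((n:ℝ) * pmin) / (144 * L ^ 2) := by
    field_simp
  have e4 : (n:ℝ) * pmin / (24 * (Lxx / μx) ^ 2) = μx ^ 2 * ((n:ℝ) * pmin) / (24 * Lxx ^ 2) := by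
    field_simp
  have key : bx - (n:ℝ) * pmin / (144 * (L / μ) ^ 2)
      = (n:ℝ) * pmin / (576 * L ^ 4)
        * (24 * μ * μx * L ^ 2 - 4 * Lyx ^ 2 * μ ^ 2
            - 8 * (Lxx ^ 2 + Lyx ^ 2) * μ ^ 2 - 4 * μ ^ 2 * L ^ 2) := by
    rw [hbx, e0, e1, e2, e3]; field_simp; ring
  have hbracket : 0 ≤ 24 * μ * μx * L ^ 2 - 4 * Lyx ^ 2 * μ ^ 2
      - 8 * (Lxx ^ 2 + Lyx ^ 2) * μ ^ 2 - 4 * μ ^ 2 * L ^ 2 := by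
    have hy : Lyx ^ 2 ≤ L ^ 2 := pow_le_pow_left₀ hLyx.le h4 2
    have hx : Lxx ^ 2 ≤ L ^ 2 := pow_le_pow_left₀ hLxx.le h3 2
    have hm : μ ^ 2 ≤ μ * μx := by nlinarith [mul_le_mul_of_nonneg_left h1 hμ.le]
    have t1 := mul_le_mul_of_nonneg_right hm (sq_nonneg L)
    have t2 := mul_le_mul_of_nonneg_left hy (sq_nonneg μ)
    have t3 := mul_le_mul_of_nonneg_left hx (sq_nonneg μ)
    nlinarith [t1, t2, t3]
  have g1 : (n:ℝ) * pmin / (144 * κf ^ 2) ≤ bx := by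
    rw [hκf]
    nlinarith [key, mul_nonneg (le_of_lt (by positivity : (0:ℝ) < (n:ℝ) * pmin / (576 * L ^ 4))) hbracket]
  have g2 : bx < s * μx := by
    rw [hbx, e1, e2]
    have t1 : 0 < 4 * Lyx ^ 2 * μ ^ 2 * ((n:ℝ) * pmin) / (576 * L ^ 4) := by positivity
    have t2 : 0 < 8 * (Lxx ^ 2 + Lyx ^ 2) * μ ^ 2 * ((n:ℝ) * pmin) / (576 * L ^ 4) := by positivity
    linarith
  have g3 : s * μx ≤ (n:ℝ) * pmin / (24 * κx ^ 2) := by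
    rw [hκx, e0, e4, div_le_div_iff₀ (by positivity) (by positivity)]
    have hx : Lxx ^ 2 ≤ L ^ 2 := pow_le_pow_left₀ hLxx.le h3 2
    have hml : μ * Lxx ^ 2 ≤ μx * L ^ 2 := mul_le_mul h1 hx (by positivity) hμx.le
    nlinarith [mul_le_mul_of_nonneg_left hml
      (by positivity : (0:ℝ) ≤ 24 * μx * ((n:ℝ) * pmin))]
  have g4 : (n:ℝ) * pmin / (24 * κx ^ 2) ≤ 1 / 24 := by
    rw [hκx, e4, div_le_div_iff₀ (by positivity) (by norm_num)]
    have hx2 : μx ^ 2 ≤ Lxx ^ 2 := pow_le_pow_left₀ hμx.le h2 2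
    nlinarith [mul_le_mul hx2 hP1 hP.le (by positivity : (0:ℝ) ≤ Lxx ^ 2)]
  have g5 : 0 < bx := lt_of_lt_of_le (by rw [hκf]; positivity) g1
  have g6 : bx < 1 := by linarith
  exact ⟨g1, g2, g3, g4, g5, g6⟩
end
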